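/- arXiv:2108.03951 — 6 statements merged into one kernel-verified Lean document; each statement's English description precedes it below -/
import Mathlib

section
/- Let n ≥ 1, G = Δ × 𝔹ⁿ, and let α : G → G be a holomorphic retraction with α(0) = 0 whose image Z = α(G) satisfies Z ≠ {0}. Let L be the range of the derivative Dα(0) : ℂ^{1+n} → ℂ^{1+n}. If L ∩ ∂G ⊆ ∂Δ × ∂𝔹ⁿ, then dim_ℂ L = 1 and there exists (c₁, …, cₙ) ∈ ∂𝔹ⁿ such that Z = L ∩ G = {(w, c₁w, …, cₙw) : w ∈ Δ}; moreover α is the identity on Z. -/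
open Metric Set

noncomputable section

/-- `G = Δ × 𝔹ⁿ ⊆ ℂ × ℂⁿ`, the product of the unit disc and the unit ball. -/
def diskBall (n : ℕ) : Set (ℂ × EuclideanSpace ℂ (Fin n)) :=
  (ball (0 : ℂ) 1) ×ˢ (ball (0 : EuclideanSpace ℂ (Fin n)) 1)

lemma schwarz_rigid {f : ℂ → ℂ} (hd : DifferentiableOn ℂ f (ball 0 1))
    (hm : MapsTo f (ball 0 1) (ball 0 1)) (h0 : f 0 = 0)
    {z₀ : ℂ} (hz₀ : z₀ ∈ ball (0 : ℂ) 1) (heq : ‖dslope f 0 z₀‖ = 1) :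
    EqOn f (fun z => z * dslope f 0 z₀) (ball 0 1) := by
  have hm' : MapsTo f (ball 0 1) (ball (f 0) 1) := by rwa [h0]
  have := Complex.affine_of_mapsTo_ball_of_exists_norm_dslope_eq_div hd (hm'.mono_right ball_subset_closedBall) hz₀
    (by rw [heq]; norm_num)
  intro z hz
  have h := this hz
  simpa [h0, smul_eq_mul] using h

lemma schwarz_deriv_rigid {f : ℂ → ℂ} (hd : DifferentiableOn ℂ f (ball 0 1))
    (hm : MapsTo f (ball 0 1) (ball 0 1)) (h0 : f 0 = 0)
    (heq : ‖deriv f 0‖ = 1) :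
    EqOn f (fun z => z * deriv f 0) (ball 0 1) := by
  have h : ‖dslope f 0 0‖ = 1 := by rwa [dslope_same]
  have := schwarz_rigid hd hm h0 (mem_ball_self one_pos) h
  simpa [dslope_same] using this

lemma schwarz_deriv_le {f : ℂ → ℂ} (hd : DifferentiableOn ℂ f (ball 0 1))
    (hm : MapsTo f (ball 0 1) (ball 0 1)) (h0 : f 0 = 0) :
    ‖deriv f 0‖ ≤ 1 := by
  have hm' : MapsTo f (ball 0 1) (ball (f 0) 1) := by rwa [h0]
  have := Complex.norm_deriv_le_div_of_mapsTo_ball hd (hm'.mono_right ball_subset_closedBall) one_pos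
  simpa using this

lemma schwarz_fix_deriv {f : ℂ → ℂ} (hd : DifferentiableOn ℂ f (ball 0 1))
    (hm : MapsTo f (ball 0 1) (ball 0 1)) (h0 : f 0 = 0)
    {m : ℝ} (hm0 : 0 < m) (hm1 : m < 1) (hfix : f (m : ℂ) = (m : ℂ)) :
    deriv f 0 = 1 := by
  have hmb : (m : ℂ) ∈ ball (0 : ℂ) 1 := by
    simp [Complex.norm_real, abs_of_pos hm0, hm1]
  have hmne : (m : ℂ) ≠ 0 := by
    exact_mod_cast Complex.ofReal_ne_zero.2 hm0.ne'
  have hds : dslope f 0 (m : ℂ) = 1 := by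
    rw [dslope_of_ne _ (by simpa using hmne), slope_def_field]
    rw [hfix, h0]
    field_simp
  have heq : ‖dslope f 0 (m : ℂ)‖ = 1 := by rw [hds]; simp
  have hEq := schwarz_rigid hd hm h0 hmb heq
  have : f =ᶠ[nhds (0 : ℂ)] fun z => z * dslope f 0 (m : ℂ) :=
    hEq.eventuallyEq_of_mem (isOpen_ball.mem_nhds (mem_ball_self one_pos))
  rw [this.deriv_eq, hds]
  simp



set_option maxHeartbeats 1000000 in
theorem stmt_1 (n : ℕ) (hn : 1 ≤ n)
    (α : ℂ × EuclideanSpace ℂ (Fin n) → ℂ × EuclideanSpace ℂ (Fin n))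
    (hα : DifferentiableOn ℂ α (diskBall n))
    (hmaps : MapsTo α (diskBall n) (diskBall n))
    (hretr : ∀ x ∈ diskBall n, α (α x) = α x)
    (h0 : α 0 = 0)
    (hZne0 : α '' diskBall n ≠ {0})
    (L : Submodule ℂ (ℂ × EuclideanSpace ℂ (Fin n)))
    (hL : L = LinearMap.range
      ((fderiv ℂ α 0 : (ℂ × EuclideanSpace ℂ (Fin n)) →L[ℂ]
        (ℂ × EuclideanSpace ℂ (Fin n))) :
        (ℂ × EuclideanSpace ℂ (Fin n)) →ₗ[ℂ] (ℂ × EuclideanSpace ℂ (Fin n))))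
    (hbd : (L : Set (ℂ × EuclideanSpace ℂ (Fin n))) ∩ frontier (diskBall n) ⊆
      (sphere (0 : ℂ) 1) ×ˢ (sphere (0 : EuclideanSpace ℂ (Fin n)) 1)) :
    Module.finrank ℂ L = 1 ∧
    α '' diskBall n = (L : Set (ℂ × EuclideanSpace ℂ (Fin n))) ∩ diskBall n ∧
    (∃ c : EuclideanSpace ℂ (Fin n), ‖c‖ = 1 ∧
        α '' diskBall n = (fun w : ℂ => (w, w • c)) '' ball (0 : ℂ) 1) ∧
    ∀ x ∈ α '' diskBall n, α x = x := by
  classical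
  have hball : diskBall n = ball (0 : ℂ × EuclideanSpace ℂ (Fin n)) 1 := by
    rw [diskBall, ball_prod_same]; rfl
  have hopen : IsOpen (diskBall n) := by rw [hball]; exact isOpen_ball
  have h0mem : (0 : ℂ × EuclideanSpace ℂ (Fin n)) ∈ diskBall n := by
    rw [hball]; exact mem_ball_self one_pos
  have hfr : frontier (diskBall n) = sphere (0 : ℂ × EuclideanSpace ℂ (Fin n)) 1 := by
    rw [hball]; exact frontier_ball _ one_ne_zero
  have hmemball : ∀ x : ℂ × EuclideanSpace ℂ (Fin n), x ∈ diskBall n ↔ ‖x‖ < 1 := by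
    intro x; rw [hball, mem_ball, dist_zero_right]
  set P := fderiv ℂ α 0 with hPdef
  have hP : HasFDerivAt α P 0 :=
    ((hα 0 h0mem).differentiableAt (hopen.mem_nhds h0mem)).hasFDerivAt
  -- P is idempotent
  have hPP : ∀ x, P (P x) = P x := by
    have h1 : HasFDerivAt (α ∘ α) (P.comp P) 0 := by
      have hP' : HasFDerivAt α P (α 0) := by rwa [h0]
      exact hP'.comp 0 hP
    have h2 : α ∘ α =ᶠ[nhds (0 : ℂ × EuclideanSpace ℂ (Fin n))] α := by
      filter_upwards [hopen.mem_nhds h0mem] with x hx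
      exact hretr x hx
    have h3 : HasFDerivAt α (P.comp P) 0 := h1.congr_of_eventuallyEq h2.symm
    have h4 : P.comp P = P := h3.unique hP
    intro x
    calc P (P x) = (P.comp P) x := rfl
    _ = P x := by rw [h4]
  have hLP : ∀ x, (x ∈ L ↔ ∃ y, P y = x) := by
    intro x; rw [hL]; exact Iff.rfl
  have hPidem : ∀ x ∈ L, P x = x := by
    intro x hx
    obtain ⟨y, rfl⟩ := (hLP x).1 hx
    exact hPP y
  have hPmemL : ∀ x, P x ∈ L := fun x => (hLP (P x)).2 ⟨x, rfl⟩
  have hZsub : α '' diskBall n ⊆ diskBall n := by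
    rintro z ⟨x, hx, rfl⟩; exact hmaps hx
  have hfix : ∀ z ∈ α '' diskBall n, α z = z := by
    rintro z ⟨x, hx, rfl⟩; exact hretr x hx
  have h0Z : (0 : ℂ × EuclideanSpace ℂ (Fin n)) ∈ α '' diskBall n := ⟨0, h0mem, h0⟩
  have hZmemb : ∀ z ∈ α '' diskBall n, ‖z‖ < 1 := by
    intro z hz; exact (hmemball z).1 (hZsub hz)
  obtain ⟨z₀, hz₀Z, hz₀ne⟩ : ∃ z₀ ∈ α '' diskBall n, z₀ ≠ 0 := by
    by_contra h
    push_neg at h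
    exact hZne0 (Subset.antisymm (fun z hz => h z hz) (by rintro z rfl; exact h0Z))
  -- L is nontrivial
  obtain ⟨v₀, hv₀L, hv₀ne⟩ : ∃ v ∈ L, v ≠ 0 := by
    by_contra h
    push_neg at h
    have hPz : P = 0 := ContinuousLinearMap.ext fun x => by
      simpa using h _ (hPmemL x)
    have hP0 : HasFDerivAt α (0 : (ℂ × EuclideanSpace ℂ (Fin n)) →L[ℂ]
        (ℂ × EuclideanSpace ℂ (Fin n))) 0 := by rwa [hPz] at hP
    have hlo : (fun x => α x) =o[nhds (0 : ℂ × EuclideanSpace ℂ (Fin n))] (fun x => x) := by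
      simpa [h0] using hP0.isLittleO
    have hev : ∀ᶠ x in nhds (0 : ℂ × EuclideanSpace ℂ (Fin n)), ‖α x‖ ≤ (1/2) * ‖x‖ :=
      hlo.def (by norm_num)
    obtain ⟨ε, hε, hb⟩ := Metric.eventually_nhds_iff_ball.mp hev
    have hiso : ∀ z ∈ α '' diskBall n, ‖z‖ < ε → z = 0 := by
      intro z hz hlt
      have h1 := hb z (by rwa [mem_ball, dist_zero_right])
      rw [hfix z hz] at h1
      have : ‖z‖ = 0 := by linarith [norm_nonneg z]
      exact norm_eq_zero.mp this
    have hpc : IsPreconnected (α '' diskBall n) := by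
      have hconv : Convex ℝ (diskBall n) := by rw [hball]; exact convex_ball 0 1
      exact hconv.isPreconnected.image α hα.continuousOn
    set δ : ℝ := min ε ‖z₀‖ / 2 with hδdef
    have hz₀pos : 0 < ‖z₀‖ := norm_pos_iff.2 hz₀ne
    have hδ0 : 0 < δ := by positivity
    have hδε : δ < ε := by
      have : min ε ‖z₀‖ ≤ ε := min_le_left _ _
      linarith
    have hδz : δ / 2 < ‖z₀‖ := by
      have : min ε ‖z₀‖ ≤ ‖z₀‖ := min_le_right _ _
      linarith
    obtain ⟨x, hxZ, hxU, hxV⟩ := hpc (ball 0 δ) ((closedBall 0 (δ/2))ᶜ) isOpen_ball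
      isClosed_closedBall.isOpen_compl
      (by
        intro z hz
        by_cases hle : ‖z‖ ≤ δ/2
        · exact Or.inl (by rw [mem_ball, dist_zero_right]; linarith)
        · exact Or.inr (by rw [mem_compl_iff, mem_closedBall, dist_zero_right]; push_neg; linarith))
      ⟨0, h0Z, by rw [mem_ball, dist_zero_right]; simpa using hδ0⟩
      ⟨z₀, hz₀Z, by rw [mem_compl_iff, mem_closedBall, dist_zero_right]; push_neg; exact hδz⟩
    rw [mem_ball, dist_zero_right] at hxU
    have hx0 : x = 0 := hiso x hxZ (lt_trans hxU hδε)
    rw [hx0, mem_compl_iff, mem_closedBall, dist_zero_right] at hxV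
    apply hxV
    simp
    positivity
  -- nonzero elements of L have nonzero first coordinate
  have hfst : ∀ x ∈ L, x.1 = 0 → x = 0 := by
    intro x hxL hx1
    by_contra hxne
    have hx2 : x.2 ≠ 0 := fun h2 => hxne (Prod.ext hx1 h2)
    have hx2n : (0:ℝ) < ‖x.2‖ := norm_pos_iff.2 hx2
    have hpL : ((‖x.2‖ : ℂ))⁻¹ • x ∈ L := L.smul_mem _ hxL
    have hp1 : (((‖x.2‖ : ℂ))⁻¹ • x).1 = 0 := by simp [hx1]
    have hp2 : ‖(((‖x.2‖ : ℂ))⁻¹ • x).2‖ = 1 := by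
      have : (((‖x.2‖ : ℂ))⁻¹ • x).2 = ((‖x.2‖ : ℂ))⁻¹ • x.2 := rfl
      rw [this, norm_smul]
      simp [abs_of_pos hx2n]
      field_simp
    have hpfr : ((‖x.2‖ : ℂ))⁻¹ • x ∈ frontier (diskBall n) := by
      rw [hfr, mem_sphere_iff_norm, sub_zero, Prod.norm_def, hp1, hp2]
      simp
    have hmem := hbd ⟨hpL, hpfr⟩
    have h1 : (((‖x.2‖ : ℂ))⁻¹ • x).1 ∈ sphere (0:ℂ) 1 := hmem.1
    rw [mem_sphere_iff_norm, sub_zero, hp1] at h1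
    simp at h1
  have hv₀1 : v₀.1 ≠ 0 := fun h => hv₀ne (hfst v₀ hv₀L h)
  set c : EuclideanSpace ℂ (Fin n) := (v₀.1)⁻¹ • v₀.2 with hcdef
  have hveq : (v₀.1)⁻¹ • v₀ = ((1:ℂ), c) := by
    apply Prod.ext
    · show (v₀.1)⁻¹ * v₀.1 = 1
      exact inv_mul_cancel₀ hv₀1
    · rfl
  have hvL : ((1:ℂ), c) ∈ L := hveq ▸ L.smul_mem _ hv₀L
  have hLmem : ∀ x ∈ L, x.2 = x.1 • c := by
    intro x hx
    have hsub : x - x.1 • ((1:ℂ), c) ∈ L := L.sub_mem hx (L.smul_mem _ hvL)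
    have h1 : (x - x.1 • ((1:ℂ), c)).1 = 0 := by
      show x.1 - x.1 * 1 = 0; ring
    have h2 := congrArg Prod.snd (hfst _ hsub h1)
    have h3 : x.2 - x.1 • c = 0 := h2
    rwa [sub_eq_zero] at h3
  have hc1 : ‖c‖ = 1 := by
    have hmaxpos : (0:ℝ) < max 1 ‖c‖ := lt_of_lt_of_le one_pos (le_max_left _ _)
    set t : ℝ := (max 1 ‖c‖)⁻¹ with htdef
    have ht0 : 0 < t := inv_pos.2 hmaxpos
    have hpL : ((t:ℂ)) • ((1:ℂ), c) ∈ L := L.smul_mem _ hvL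
    have hvn : ‖((1:ℂ), c)‖ = max 1 ‖c‖ := by
      rw [Prod.norm_def]; simp
    have hnorm : ‖((t:ℂ)) • ((1:ℂ), c)‖ = 1 := by
      rw [norm_smul, hvn, Complex.norm_real, Real.norm_eq_abs, abs_of_pos ht0]
      exact inv_mul_cancel₀ hmaxpos.ne'
    have hpfr : ((t:ℂ)) • ((1:ℂ), c) ∈ frontier (diskBall n) := by
      rw [hfr, mem_sphere_iff_norm, sub_zero]; exact hnorm
    have hmem := hbd ⟨hpL, hpfr⟩
    have h1 : ‖(((t:ℂ)) • ((1:ℂ), c)).1‖ = 1 := by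
      have := hmem.1
      rwa [mem_sphere_iff_norm, sub_zero] at this
    have h1' : t = 1 := by
      have : ‖(t:ℂ) * 1‖ = 1 := h1
      rw [mul_one, Complex.norm_real, Real.norm_eq_abs, abs_of_pos ht0] at this
      exact this
    have h2 : ‖(((t:ℂ)) • ((1:ℂ), c)).2‖ = 1 := by
      have := hmem.2
      rwa [mem_sphere_iff_norm, sub_zero] at this
    have h2' : ‖((t:ℂ)) • c‖ = 1 := h2
    rw [norm_smul, Complex.norm_real, Real.norm_eq_abs, abs_of_pos ht0, h1', one_mul] at h2'
    exact h2'
  have hvnorm : ‖((1:ℂ), c)‖ = 1 := by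
    rw [Prod.norm_def]; simp [hc1]
  have hvne : ((1:ℂ), c) ≠ 0 := by
    intro h
    have := congrArg Prod.fst h
    simp at this
  have hPv : P ((1:ℂ), c) = ((1:ℂ), c) := hPidem _ hvL
  -- rank
  have hLspan : L = Submodule.span ℂ {((1:ℂ), c)} := by
    apply le_antisymm
    · intro x hx
      rw [Submodule.mem_span_singleton]
      exact ⟨x.1, (Prod.ext (by simp) (hLmem x hx).symm)⟩
    · rw [Submodule.span_singleton_le_iff_mem]; exact hvL
  have hrank : Module.finrank ℂ L = 1 := by
    rw [hLspan]; exact finrank_span_singleton hvne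
  -- CORE: every point of the image lies on the line
  have hcore : ∀ z ∈ α '' diskBall n, z.2 = z.1 • c := by
    intro z hz
    by_cases hz0 : z = 0
    · rw [hz0]; simp
    have hzfix : α z = z := hfix z hz
    set m : ℝ := ‖z‖ with hmdef
    have hm0 : 0 < m := norm_pos_iff.2 hz0
    have hm1 : m < 1 := hZmemb z hz
    have hmC : (m:ℂ) ≠ 0 := by exact_mod_cast hm0.ne'
    have hmb : (m : ℂ) ∈ ball (0:ℂ) 1 := by
      rw [mem_ball, dist_zero_right, Complex.norm_real, Real.norm_eq_abs, abs_of_pos hm0]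
      exact hm1
    set ζ : ℂ × EuclideanSpace ℂ (Fin n) := ((m:ℂ))⁻¹ • z with hζdef
    have hζn : ‖ζ‖ = 1 := by
      rw [hζdef, norm_smul, norm_inv, Complex.norm_real, Real.norm_eq_abs, abs_of_pos hm0]
      exact inv_mul_cancel₀ hm0.ne'
    set e : ℂ → ℂ × EuclideanSpace ℂ (Fin n) := fun w => α (w • ζ) with hedef
    have hdm : ∀ w ∈ ball (0:ℂ) 1, w • ζ ∈ diskBall n := by
      intro w hw
      rw [hmemball, norm_smul, hζn, mul_one]
      simpa [mem_ball, dist_zero_right] using hw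
    have hemem : ∀ w ∈ ball (0:ℂ) 1, ‖e w‖ < 1 := fun w hw => (hmemball _).1 (hmaps (hdm w hw))
    have he0 : e 0 = 0 := by rw [hedef]; simp [h0]
    have hζm : (m:ℂ) • ζ = z := by
      rw [hζdef, smul_smul, mul_inv_cancel₀ hmC, one_smul]
    have hem : e (m:ℂ) = z := by
      rw [hedef]; simp only []
      rw [hζm, hzfix]
    have hediff : DifferentiableOn ℂ e (ball 0 1) := by
      apply hα.comp
      · exact (differentiable_id.smul_const ζ).differentiableOn
      · intro w hw; exact hdm w hw
    have hde : HasDerivAt e (P ζ) 0 := by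
      have hd0 : HasDerivAt (fun w : ℂ => w • ζ) ζ 0 := by
        simpa using (hasDerivAt_id (0:ℂ)).smul_const ζ
      have hP0 : HasFDerivAt α P ((0:ℂ) • ζ) := by rw [zero_smul]; exact hP
      exact hP0.comp_hasDerivAt 0 hd0
    set lam : ℂ := (P ζ).1 with hlamdef
    have hPζ : P ζ = lam • ((1:ℂ), c) := by
      apply Prod.ext
      · show (P ζ).1 = lam * 1; rw [mul_one]
      · show (P ζ).2 = lam • c
        rw [hLmem _ (hPmemL ζ)]
    set q₁ : ℂ → ℂ := fun w => (e w).1 with hq₁def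
    have hq₁diff : DifferentiableOn ℂ q₁ (ball 0 1) := hediff.fst
    have hq₁maps : MapsTo q₁ (ball 0 1) (ball (0:ℂ) 1) := by
      intro w hw
      rw [mem_ball, dist_zero_right]
      exact lt_of_le_of_lt (norm_fst_le _) (hemem w hw)
    have hq₁0 : q₁ 0 = 0 := by rw [hq₁def]; simp [he0]
    have hq₁d : HasDerivAt q₁ lam 0 :=
      (ContinuousLinearMap.fst ℂ ℂ (EuclideanSpace ℂ (Fin n))).hasFDerivAt.comp_hasDerivAt 0 hde
    have hq₁m : q₁ (m:ℂ) = z.1 := by rw [hq₁def]; simp only []; rw [hem]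
    have hlam_le : ‖lam‖ ≤ 1 := by
      rw [← hq₁d.deriv]
      exact schwarz_deriv_le hq₁diff hq₁maps hq₁0
    have hsnd : HasDerivAt (fun w => (e w).2) ((P ζ).2) 0 :=
      (ContinuousLinearMap.snd ℂ ℂ (EuclideanSpace ℂ (Fin n))).hasFDerivAt.comp_hasDerivAt 0 hde
    have hsnddiff : DifferentiableOn ℂ (fun w => (e w).2) (ball 0 1) := hediff.snd
    -- |lam| = 1, by extremality in one of the two coordinates
    have hlam1 : ‖lam‖ = 1 := by
      rcases le_or_gt ‖z.2‖ ‖z.1‖ with hcase | hcase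
      · -- the first coordinate is extremal
        have hz1 : ‖z.1‖ = m := by
          rw [hmdef, Prod.norm_def, max_eq_left hcase]
        set u : ℂ := (starRingEnd ℂ) z.1 / (m:ℂ) with hudef
        have hu1 : ‖u‖ = 1 := by
          rw [hudef, norm_div, RCLike.norm_conj, hz1, Complex.norm_real, Real.norm_eq_abs,
            abs_of_pos hm0]
          exact div_self hm0.ne'
        set f : ℂ → ℂ := fun w => u * q₁ w with hfdef
        have hfdiff : DifferentiableOn ℂ f (ball 0 1) := hq₁diff.const_mul u
        have hfmaps : MapsTo f (ball 0 1) (ball (0:ℂ) 1) := by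
          intro w hw
          have := hq₁maps hw
          rw [mem_ball, dist_zero_right] at this ⊢
          rw [hfdef]
          simp only [norm_mul, hu1, one_mul]
          exact this
        have hf0 : f 0 = 0 := by rw [hfdef]; simp [hq₁0]
        have hfm : f (m:ℂ) = (m:ℂ) := by
          rw [hfdef]; simp only []
          rw [hq₁m, hudef]
          rw [div_mul_eq_mul_div, mul_comm, Complex.mul_conj]
          rw [Complex.normSq_eq_norm_sq, hz1]
          push_cast
          field_simp
        have hfd : deriv f 0 = 1 := schwarz_fix_deriv hfdiff hfmaps hf0 hm0 hm1 hfm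
        have : deriv f 0 = u * lam := by
          have : HasDerivAt f (u * lam) 0 := hq₁d.const_mul u
          exact this.deriv
        rw [this] at hfd
        have : ‖u * lam‖ = 1 := by rw [hfd]; simp
        rwa [norm_mul, hu1, one_mul] at this
      · -- the second coordinate is extremal
        have hz2 : ‖z.2‖ = m := by
          rw [hmdef, Prod.norm_def, max_eq_right hcase.le]
        set f : ℂ → ℂ := fun w => ((m:ℂ))⁻¹ * (inner ℂ z.2 ((e w).2) : ℂ) with hfdef
        have hinnerd : HasDerivAt (fun w => (inner ℂ z.2 ((e w).2) : ℂ))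
            ((inner ℂ z.2 ((P ζ).2) : ℂ)) 0 :=
          (innerSL ℂ z.2).hasFDerivAt.comp_hasDerivAt 0 hsnd
        have hfd : HasDerivAt f (((m:ℂ))⁻¹ * (inner ℂ z.2 ((P ζ).2) : ℂ)) 0 :=
          hinnerd.const_mul _
        have hfdiff : DifferentiableOn ℂ f (ball 0 1) :=
          (((innerSL ℂ z.2).differentiable.comp_differentiableOn hsnddiff)).const_mul _
        have hfmaps : MapsTo f (ball 0 1) (ball (0:ℂ) 1) := by
          intro w hw
          rw [mem_ball, dist_zero_right, hfdef]
          simp only [norm_mul, norm_inv, Complex.norm_real, Real.norm_eq_abs, abs_of_pos hm0]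
          calc m⁻¹ * ‖(inner ℂ z.2 ((e w).2) : ℂ)‖ ≤ m⁻¹ * (‖z.2‖ * ‖(e w).2‖) := by
                apply mul_le_mul_of_nonneg_left (norm_inner_le_norm _ _) (by positivity)
          _ = ‖(e w).2‖ := by rw [hz2]; field_simp
          _ ≤ ‖e w‖ := norm_snd_le _
          _ < 1 := hemem w hw
        have hf0 : f 0 = 0 := by
          rw [hfdef]; simp only []
          rw [he0]
          simp
        have hfm : f (m:ℂ) = (m:ℂ) := by
          rw [hfdef]; simp only []
          rw [hem, inner_self_eq_norm_sq_to_K, hz2]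
          push_cast
          field_simp
          ring
          rfl
        have hder1 : deriv f 0 = 1 := schwarz_fix_deriv hfdiff hfmaps hf0 hm0 hm1 hfm
        rw [hfd.deriv] at hder1
        have hPζ2 : (P ζ).2 = lam • c := by rw [hPζ]; rfl
        rw [hPζ2, inner_smul_right] at hder1
        have habs := congrArg norm hder1
        rw [norm_mul, norm_mul, norm_inv, Complex.norm_real, Real.norm_eq_abs,
          abs_of_pos hm0, norm_one] at habs
        have hile : ‖(inner ℂ z.2 c : ℂ)‖ ≤ m := by
          calc ‖(inner ℂ z.2 c : ℂ)‖ ≤ ‖z.2‖ * ‖c‖ := norm_inner_le_norm _ _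
          _ = m := by rw [hz2, hc1, mul_one]
        by_contra hne
        have hlt : ‖lam‖ < 1 := lt_of_le_of_ne hlam_le hne
        have : m⁻¹ * (‖lam‖ * ‖(inner ℂ z.2 c : ℂ)‖) < 1 := by
          calc m⁻¹ * (‖lam‖ * ‖(inner ℂ z.2 c : ℂ)‖) ≤ m⁻¹ * (‖lam‖ * m) := by
                apply mul_le_mul_of_nonneg_left _ (by positivity)
                exact mul_le_mul_of_nonneg_left hile (norm_nonneg _)
          _ = ‖lam‖ := by field_simp
          _ < 1 := hlt
        rw [habs] at this
        exact lt_irrefl _ this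
    -- rigidity for both coordinates
    have hq₁eq := schwarz_deriv_rigid hq₁diff hq₁maps hq₁0 (by rw [hq₁d.deriv]; exact hlam1)
    have hz1lam : z.1 = (m:ℂ) * lam := by
      have := hq₁eq hmb
      rw [hq₁d.deriv] at this
      rw [← hq₁m]
      exact this
    set q₂ : ℂ → ℂ := fun w => (inner ℂ c ((e w).2) : ℂ) with hq₂def
    have hq₂diff : DifferentiableOn ℂ q₂ (ball 0 1) :=
      (innerSL ℂ c).differentiable.comp_differentiableOn hsnddiff
    have hq₂maps : MapsTo q₂ (ball 0 1) (ball (0:ℂ) 1) := by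
      intro w hw
      rw [mem_ball, dist_zero_right, hq₂def]
      calc ‖(inner ℂ c ((e w).2) : ℂ)‖ ≤ ‖c‖ * ‖(e w).2‖ := norm_inner_le_norm _ _
      _ = ‖(e w).2‖ := by rw [hc1, one_mul]
      _ ≤ ‖e w‖ := norm_snd_le _
      _ < 1 := hemem w hw
    have hq₂0 : q₂ 0 = 0 := by
      rw [hq₂def]; simp only []
      rw [he0]; simp
    have hq₂d : HasDerivAt q₂ lam 0 := by
      have h := (innerSL ℂ c).hasFDerivAt.comp_hasDerivAt 0 hsnd
      have hPζ2 : (P ζ).2 = lam • c := by rw [hPζ]; rfl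
      have : (inner ℂ c ((P ζ).2) : ℂ) = lam := by
        rw [hPζ2, inner_smul_right, inner_self_eq_norm_sq_to_K, hc1]
        simp
      have h2 : HasDerivAt q₂ (((innerSL ℂ) c) ((P ζ).2)) 0 := h
      have h3 : ((innerSL ℂ) c) ((P ζ).2) = lam := this
      rwa [h3] at h2
    have hq₂eq := schwarz_deriv_rigid hq₂diff hq₂maps hq₂0 (by rw [hq₂d.deriv]; exact hlam1)
    have hz2lam : (inner ℂ c z.2 : ℂ) = (m:ℂ) * lam := by
      have := hq₂eq hmb
      rw [hq₂d.deriv] at this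
      have h2 : q₂ (m:ℂ) = (inner ℂ c z.2 : ℂ) := by
        rw [hq₂def]; simp only []; rw [hem]
      rw [← h2]
      exact this
    -- conclude z.2 = z.1 • c
    have hinner : (inner ℂ z.2 (z.1 • c) : ℂ) = ((m^2 : ℝ) : ℂ) := by
      rw [inner_smul_right, hz1lam]
      have : (inner ℂ z.2 c : ℂ) = (starRingEnd ℂ) ((inner ℂ c z.2 : ℂ)) := by
        rw [← inner_conj_symm]
      rw [this, hz2lam]
      rw [map_mul]
      have hmr : (starRingEnd ℂ) ((m:ℂ)) = (m:ℂ) := Complex.conj_ofReal m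
      rw [hmr]
      have : (m:ℂ) * lam * ((m:ℂ) * (starRingEnd ℂ) lam) =
          (m:ℂ)^2 * (lam * (starRingEnd ℂ) lam) := by ring
      rw [this, Complex.mul_conj, Complex.normSq_eq_norm_sq, hlam1]
      push_cast
      ring
    have hz1n : ‖z.1‖ = m := by
      rw [hz1lam, norm_mul, hlam1, mul_one, Complex.norm_real, Real.norm_eq_abs, abs_of_pos hm0]
    have hz2n : ‖z.2‖ ≤ m := by rw [hmdef]; exact norm_snd_le z
    have hsq : ‖z.2 - z.1 • c‖^2 ≤ 0 := by
      rw [norm_sub_sq (𝕜 := ℂ)]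
      have hre : RCLike.re (inner ℂ z.2 (z.1 • c) : ℂ) = m^2 := by
        rw [hinner]
        simp [← Complex.ofReal_pow]
      rw [hre]
      have hnc : ‖z.1 • c‖ = m := by rw [norm_smul, hc1, mul_one, hz1n]
      rw [hnc]
      nlinarith [norm_nonneg (z.2 : EuclideanSpace ℂ (Fin n))]
    have : ‖z.2 - z.1 • c‖ = 0 := by
      nlinarith [norm_nonneg (z.2 - z.1 • c), sq_nonneg ‖z.2 - z.1 • c‖]
    rw [norm_eq_zero, sub_eq_zero] at this
    exact this
  -- the line is fixed pointwise
  have hvmem : ∀ w ∈ ball (0:ℂ) 1, w • ((1:ℂ), c) ∈ diskBall n := by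
    intro w hw
    rw [hmemball, norm_smul, hvnorm, mul_one]
    simpa [mem_ball, dist_zero_right] using hw
  have hA : ∀ w ∈ ball (0:ℂ) 1, α (w • ((1:ℂ), c)) = w • ((1:ℂ), c) := by
    set g : ℂ → ℂ × EuclideanSpace ℂ (Fin n) := fun w => α (w • ((1:ℂ), c)) with hgdef
    have hgdiff : DifferentiableOn ℂ g (ball 0 1) := by
      apply hα.comp
      · exact (differentiable_id.smul_const ((1:ℂ), c)).differentiableOn
      · intro w hw; exact hvmem w hw
    have hg0 : g 0 = 0 := by rw [hgdef]; simp [h0]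
    have hgZ : ∀ w ∈ ball (0:ℂ) 1, g w ∈ α '' diskBall n := fun w hw =>
      ⟨w • ((1:ℂ), c), hvmem w hw, rfl⟩
    have hgd : HasDerivAt g (P ((1:ℂ), c)) 0 := by
      have hd0 : HasDerivAt (fun w : ℂ => w • ((1:ℂ), c)) ((1:ℂ), c) 0 := by
        simpa using (hasDerivAt_id (0:ℂ)).smul_const ((1:ℂ), c)
      have hP0 : HasFDerivAt α P ((0:ℂ) • ((1:ℂ), c)) := by rw [zero_smul]; exact hP
      exact hP0.comp_hasDerivAt 0 hd0
    set q : ℂ → ℂ := fun w => (g w).1 with hqdef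
    have hqdiff : DifferentiableOn ℂ q (ball 0 1) := hgdiff.fst
    have hqmaps : MapsTo q (ball 0 1) (ball (0:ℂ) 1) := by
      intro w hw
      rw [mem_ball, dist_zero_right]
      refine lt_of_le_of_lt (norm_fst_le _) ?_
      exact (hmemball _).1 (hZsub (hgZ w hw))
    have hq0 : q 0 = 0 := by rw [hqdef]; simp [hg0]
    have hqd : HasDerivAt q (1:ℂ) 0 := by
      have := (ContinuousLinearMap.fst ℂ ℂ (EuclideanSpace ℂ (Fin n))).hasFDerivAt.comp_hasDerivAt
        0 hgd
      rw [hPv] at this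
      exact this
    have hqeq := schwarz_deriv_rigid hqdiff hqmaps hq0 (by rw [hqd.deriv]; simp)
    intro w hw
    have h1 : (g w).1 = w := by
      have := hqeq hw
      rw [hqd.deriv] at this
      simpa using this
    have h2 : (g w).2 = (g w).1 • c := hcore _ (hgZ w hw)
    show g w = w • ((1:ℂ), c)
    apply Prod.ext
    · show (g w).1 = w * 1; rw [mul_one]; exact h1
    · show (g w).2 = w • c; rw [h2, h1]
  refine ⟨hrank, ?_, ⟨c, hc1, ?_⟩, hfix⟩
  · -- Z = L ∩ G
    apply Subset.antisymm
    · intro z hz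
      refine ⟨?_, hZsub hz⟩
      have h2 := hcore z hz
      have hzeq : z = z.1 • ((1:ℂ), c) := by
        apply Prod.ext
        · show z.1 = z.1 * 1; rw [mul_one]
        · exact h2
      rw [hzeq]
      exact L.smul_mem _ hvL
    · rintro z ⟨hzL, hzG⟩
      have h2 := hLmem z hzL
      have hz1 : z.1 ∈ ball (0:ℂ) 1 := by
        rw [diskBall, mem_prod] at hzG
        exact hzG.1
      have hzeq : z = z.1 • ((1:ℂ), c) := by
        apply Prod.ext
        · show z.1 = z.1 * 1; rw [mul_one]
        · exact h2
      refine ⟨z, hzG, ?_⟩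
      calc α z = α (z.1 • ((1:ℂ), c)) := by rw [← hzeq]
      _ = z.1 • ((1:ℂ), c) := hA z.1 hz1
      _ = z := hzeq.symm
  · -- Z = image of the disc
    apply Subset.antisymm
    · intro z hz
      refine ⟨z.1, ?_, ?_⟩
      · have := hZsub hz
        rw [diskBall, mem_prod] at this
        exact this.1
      · show (z.1, z.1 • c) = z
        exact Prod.ext rfl (hcore z hz).symm
    · rintro _ ⟨w, hw, rfl⟩
      have hweq : ((w : ℂ), w • c) = w • ((1:ℂ), c) := by
        apply Prod.ext
        · show w = w * 1; rw [mul_one]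
        · rfl
      show ((w, w • c) : ℂ × EuclideanSpace ℂ (Fin n)) ∈ α '' diskBall n
      rw [hweq]
      exact ⟨w • ((1:ℂ), c), hvmem w hw, hA w hw⟩
end
end

section
/- Let n ≥ 1, G = Δ × 𝔹ⁿ, and let α : G → G be a holomorphic retraction with α(0) = 0 whose image Z = α(G) satisfies Z ≠ {0}. Let L be the range of the derivative Dα(0) : ℂ^{1+n} → ℂ^{1+n}. If L ∩ ∂G ⊆ ∂Δ × closure(𝔹ⁿ), then there exists a holomorphic map h : Δ → 𝔹ⁿ with h(0) = 0 such that Z = {(w, h(w)) : w ∈ Δ}, i.e. Z is the graph of a 𝔹ⁿ-valued holomorphic mapping of Δ. -/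
open Metric Set Complex

noncomputable section

private lemma schwarz_norm_le {F : Type*} [NormedAddCommGroup F] [NormedSpace ℂ F]
    {f : ℂ → F} {R M : ℝ} (hf : DifferentiableOn ℂ f (ball 0 R))
    (hmap : MapsTo f (ball 0 R) (ball 0 M)) (h0 : f 0 = 0)
    {z : ℂ} (hz : z ∈ ball (0:ℂ) R) : ‖f z‖ ≤ M / R * ‖z‖ := by
  rcases eq_or_ne z 0 with rfl | hz0
  · simp [h0]
  · have hd := Complex.norm_dslope_le_div_of_mapsTo_ball hf (by rw [h0]; exact hmap.mono_right ball_subset_closedBall) hz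
    rw [dslope_of_ne _ hz0, slope_def_module, h0, sub_zero, sub_zero, norm_smul,
      norm_inv] at hd
    have hzpos : 0 < ‖z‖ := norm_pos_iff.2 hz0
    calc ‖f z‖ = (‖z‖⁻¹ * ‖f z‖) * ‖z‖ := by
          rw [mul_comm, ← mul_assoc, mul_inv_cancel₀ hzpos.ne', one_mul]
    _ ≤ M / R * ‖z‖ := mul_le_mul_of_nonneg_right hd (norm_nonneg _)

private lemma schwarz_deriv_le_s2 {F : Type*} [NormedAddCommGroup F] [NormedSpace ℂ F]
    {f : ℂ → F} {R M : ℝ} (hR : 0 < R) (hf : DifferentiableOn ℂ f (ball 0 R))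
    (hmap : MapsTo f (ball 0 R) (ball 0 M)) (h0 : f 0 = 0) :
    ‖deriv f 0‖ ≤ M / R := by
  have hd := Complex.norm_dslope_le_div_of_mapsTo_ball hf (by rw [h0]; exact hmap.mono_right ball_subset_closedBall)
    (mem_ball_self hR)
  rwa [dslope_same] at hd

private lemma schwarz_sq {F : Type*} [NormedAddCommGroup F] [NormedSpace ℂ F] [CompleteSpace F]
    {f : ℂ → F} {R M : ℝ} (hR : 0 < R) (hM : 0 < M)
    (hf : DifferentiableOn ℂ f (ball 0 R))
    (hmap : MapsTo f (ball 0 R) (ball 0 M)) (h0 : f 0 = 0) (h0' : deriv f 0 = 0)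
    {z : ℂ} (hz : z ∈ ball (0:ℂ) R) : ‖f z‖ ≤ (M / R + 1) / R * ‖z‖ ^ 2 := by
  set g := dslope f 0 with hg
  have hgd : DifferentiableOn ℂ g (ball 0 R) :=
    (differentiableOn_dslope (isOpen_ball.mem_nhds (mem_ball_self hR))).mpr hf
  have hg0 : g 0 = 0 := by rw [hg, dslope_same, h0']
  have hgb : ∀ w ∈ ball (0:ℂ) R, ‖g w‖ ≤ M / R := fun w hw =>
    Complex.norm_dslope_le_div_of_mapsTo_ball hf (by rw [h0]; exact hmap.mono_right ball_subset_closedBall) hw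
  have hgmap : MapsTo g (ball 0 R) (ball 0 (M / R + 1)) := fun w hw => by
    rw [mem_ball_zero_iff]
    exact lt_of_le_of_lt (hgb w hw) (lt_add_one _)
  have hgle := schwarz_norm_le hgd hgmap hg0 hz
  rcases eq_or_ne z 0 with rfl | hz0
  · simp [h0]
  · have hfz : f z = z • g z := by
      rw [hg, dslope_of_ne _ hz0, slope_def_module, h0, sub_zero, sub_zero, smul_smul,
        mul_inv_cancel₀ hz0, one_smul]
    calc ‖f z‖ = ‖z‖ * ‖g z‖ := by rw [hfz, norm_smul]
    _ ≤ ‖z‖ * ((M / R + 1) / R * ‖z‖) := mul_le_mul_of_nonneg_left hgle (norm_nonneg _)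
    _ = (M / R + 1) / R * ‖z‖ ^ 2 := by ring

private lemma schwarz_eq_of_eq {f : ℂ → ℂ} (hf : DifferentiableOn ℂ f (ball 0 1))
    (hmap : MapsTo f (ball 0 1) (ball 0 1)) (h0 : f 0 = 0)
    {z₀ : ℂ} (hz₀ : z₀ ∈ ball (0:ℂ) 1) (hz₀0 : z₀ ≠ 0) (heq : ‖f z₀‖ = ‖z₀‖) :
    ∀ z ∈ ball (0:ℂ) 1, f z = (f z₀ / z₀) * z := by
  have hmap' : MapsTo f (ball 0 1) (closedBall (f 0) 1) := by rw [h0]; exact hmap.mono_right ball_subset_closedBall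
  have hds : ‖dslope f 0 z₀‖ = 1 / 1 := by
    rw [dslope_of_ne _ hz₀0, slope_def_module, h0, sub_zero, sub_zero, norm_smul, norm_inv,
      heq, inv_mul_cancel₀ (norm_pos_iff.2 hz₀0).ne']
    norm_num
  have := Complex.affine_of_mapsTo_ball_of_exists_norm_dslope_eq_div hf hmap' hz₀ hds
  intro z hz
  have hz' := this hz
  rw [h0, dslope_of_ne _ hz₀0, slope_def_module, h0, sub_zero, sub_zero] at hz'
  rw [hz']
  simp only [sub_zero, zero_add, smul_eq_mul]
  field_simp

private lemma schwarz_eq_of_deriv {f : ℂ → ℂ} (hf : DifferentiableOn ℂ f (ball 0 1))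
    (hmap : MapsTo f (ball 0 1) (ball 0 1)) (h0 : f 0 = 0)
    (hd : ‖deriv f 0‖ = 1) : ∀ z ∈ ball (0:ℂ) 1, f z = deriv f 0 * z := by
  have hmap' : MapsTo f (ball 0 1) (closedBall (f 0) 1) := by rw [h0]; exact hmap.mono_right ball_subset_closedBall
  have hds : ‖dslope f 0 0‖ = 1 / 1 := by rw [dslope_same]; simpa using hd
  have := Complex.affine_of_mapsTo_ball_of_exists_norm_dslope_eq_div hf hmap'
    (mem_ball_self one_pos) hds
  intro z hz
  have hz' := this hz
  rw [dslope_same] at hz'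
  rw [hz', h0]
  simp only [sub_zero, zero_add, smul_eq_mul]
  ring

set_option maxHeartbeats 1600000 in
theorem stmt_2 (n : ℕ) (hn : 1 ≤ n)
    (α : ℂ × EuclideanSpace ℂ (Fin n) → ℂ × EuclideanSpace ℂ (Fin n))
    (hα : DifferentiableOn ℂ α (diskBall n))
    (hmaps : MapsTo α (diskBall n) (diskBall n))
    (hretr : ∀ x ∈ diskBall n, α (α x) = α x)
    (h0 : α 0 = 0)
    (hZne0 : α '' diskBall n ≠ {0})
    (L : Submodule ℂ (ℂ × EuclideanSpace ℂ (Fin n)))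
    (hL : L = LinearMap.range
      ((fderiv ℂ α 0 : (ℂ × EuclideanSpace ℂ (Fin n)) →L[ℂ]
        (ℂ × EuclideanSpace ℂ (Fin n))) :
        (ℂ × EuclideanSpace ℂ (Fin n)) →ₗ[ℂ] (ℂ × EuclideanSpace ℂ (Fin n))))
    (hbd : (L : Set (ℂ × EuclideanSpace ℂ (Fin n))) ∩ frontier (diskBall n) ⊆
      (sphere (0 : ℂ) 1) ×ˢ closure (ball (0 : EuclideanSpace ℂ (Fin n)) 1)) :
    ∃ h : ℂ → EuclideanSpace ℂ (Fin n),
      DifferentiableOn ℂ h (ball (0 : ℂ) 1) ∧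
      MapsTo h (ball (0 : ℂ) 1) (ball (0 : EuclideanSpace ℂ (Fin n)) 1) ∧
      h 0 = 0 ∧
      α '' diskBall n = (fun w : ℂ => (w, h w)) '' ball (0 : ℂ) 1 := by
  have hGeq : diskBall n = ball (0 : ℂ × EuclideanSpace ℂ (Fin n)) 1 := by
    rw [diskBall, ball_prod_same]
    rfl
  rw [hGeq] at hα hmaps hretr hZne0 hbd ⊢
  have h0mem : (0 : ℂ × EuclideanSpace ℂ (Fin n)) ∈ ball (0 : ℂ × EuclideanSpace ℂ (Fin n)) 1 := mem_ball_self one_pos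
  have hdiffAt : ∀ x ∈ ball (0 : ℂ × EuclideanSpace ℂ (Fin n)) 1, DifferentiableAt ℂ α x :=
    fun x hx => hα.differentiableAt (isOpen_ball.mem_nhds hx)
  set β := fderiv ℂ α 0 with hβdef
  have hαlt : ∀ x ∈ ball (0 : ℂ × EuclideanSpace ℂ (Fin n)) 1, ‖α x‖ < 1 := fun x hx => by
    simpa [mem_ball_zero_iff] using hmaps hx
  -- β is an idempotent
  have hββ : ∀ v, β (β v) = β v := by
    have hd0 : DifferentiableAt ℂ α 0 := hdiffAt 0 h0mem
    have hd0' : DifferentiableAt ℂ α (α 0) := by rwa [h0]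
    have h1 : fderiv ℂ (α ∘ α) 0 = (fderiv ℂ α (α 0)).comp (fderiv ℂ α 0) :=
      fderiv_comp 0 hd0' hd0
    rw [h0] at h1
    have h2 : fderiv ℂ (α ∘ α) 0 = fderiv ℂ α 0 := by
      apply Filter.EventuallyEq.fderiv_eq
      filter_upwards [isOpen_ball.mem_nhds h0mem] with x hx
      exact hretr x hx
    have h3 : β.comp β = β := by rw [hβdef, ← h1, h2]
    intro v
    have h4 := DFunLike.congr_fun h3 v
    simpa using h4
  -- basic facts about discs λ ↦ α (λ • u)
  have hcurve : ∀ u : ℂ × EuclideanSpace ℂ (Fin n), ‖u‖ ≤ 1 →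
      DifferentiableOn ℂ (fun lam : ℂ => α (lam • u)) (ball 0 1) ∧
      MapsTo (fun lam : ℂ => α (lam • u)) (ball 0 1) (ball (0 : ℂ × EuclideanSpace ℂ (Fin n)) 1) ∧
      HasDerivAt (fun lam : ℂ => α (lam • u)) (β u) 0 := by
    intro u hu
    have hmapsto : MapsTo (fun lam : ℂ => lam • u) (ball 0 1)
        (ball (0 : ℂ × EuclideanSpace ℂ (Fin n)) 1) := by
      intro lam hl
      rw [mem_ball_zero_iff, norm_smul]
      calc ‖lam‖ * ‖u‖ ≤ ‖lam‖ * 1 := mul_le_mul_of_nonneg_left hu (norm_nonneg _)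
      _ < 1 := by rw [mul_one]; exact mem_ball_zero_iff.1 hl
    have hsm : Differentiable ℂ (fun lam : ℂ => lam • u) :=
      fun lam => ((hasDerivAt_id lam).smul_const u).differentiableAt
    refine ⟨hα.comp hsm.differentiableOn hmapsto, fun lam hl => hmaps (hmapsto hl), ?_⟩
    have hder : HasDerivAt (fun lam : ℂ => lam • u) u 0 := by
      simpa using (hasDerivAt_id (0:ℂ)).smul_const u
    have hα0 : HasFDerivAt α β ((fun lam : ℂ => lam • u) 0) := by
      simp only [zero_smul]
      exact (hdiffAt 0 h0mem).hasFDerivAt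
    have := HasFDerivAt.comp_hasDerivAt (x := (0:ℂ)) hα0 hder
    simpa [Function.comp_def] using this
  -- Schwarz: α decreases the norm
  have hαle : ∀ x ∈ ball (0 : ℂ × EuclideanSpace ℂ (Fin n)) 1, ‖α x‖ ≤ ‖x‖ := by
    intro x hx
    rcases eq_or_ne x 0 with rfl | hx0
    · simp [h0]
    · have hxn : 0 < ‖x‖ := norm_pos_iff.2 hx0
      have hxc : ((‖x‖ : ℂ)) ≠ 0 := by
        simpa using hxn.ne'
      set u1 := ((‖x‖ : ℂ))⁻¹ • x with hu1def
      have hu1n : ‖u1‖ = 1 := by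
        rw [hu1def, norm_smul, norm_inv, Complex.norm_real, Real.norm_eq_abs,
          abs_of_pos hxn, inv_mul_cancel₀ hxn.ne']
      obtain ⟨hd, hm, _⟩ := hcurve u1 hu1n.le
      have hsx : ((‖x‖ : ℂ)) • u1 = x := by
        rw [hu1def, smul_smul, mul_inv_cancel₀ hxc, one_smul]
      have hmem : ((‖x‖ : ℂ)) ∈ ball (0:ℂ) 1 := by
        rw [mem_ball_zero_iff, Complex.norm_real, Real.norm_eq_abs, abs_of_pos hxn]
        exact mem_ball_zero_iff.1 hx
      have := schwarz_norm_le hd hm (by simp [h0]) hmem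
      rw [hsx] at this
      simpa [Complex.norm_real, abs_of_pos hxn] using this
  -- the image is the fixed point set
  have hZfix : ∀ x ∈ α '' ball (0 : ℂ × EuclideanSpace ℂ (Fin n)) 1, x ∈ ball (0 : ℂ × EuclideanSpace ℂ (Fin n)) 1 ∧ α x = x := by
    rintro x ⟨y, hy, rfl⟩
    exact ⟨hmaps hy, hretr y hy⟩
  -- cone property of L
  have hLcone : ∀ p : ℂ × EuclideanSpace ℂ (Fin n), p ∈ L → ‖p.2‖ ≤ ‖p.1‖ := by
    intro p hp
    by_contra hlt
    push_neg at hlt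
    have hp2 : 0 < ‖p.2‖ := lt_of_le_of_lt (norm_nonneg _) hlt
    set c : ℂ := ((‖p.2‖⁻¹ : ℝ) : ℂ) with hc
    have hcnorm : ‖c‖ = ‖p.2‖⁻¹ := by
      rw [hc, Complex.norm_real, Real.norm_eq_abs, abs_of_pos (inv_pos.2 hp2)]
    have hq2 : ‖(c • p).2‖ = 1 := by
      rw [Prod.smul_snd, norm_smul, hcnorm, inv_mul_cancel₀ hp2.ne']
    have hq1 : ‖(c • p).1‖ < 1 := by
      rw [Prod.smul_fst, norm_smul, hcnorm]
      calc ‖p.2‖⁻¹ * ‖p.1‖ < ‖p.2‖⁻¹ * ‖p.2‖ :=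
        mul_lt_mul_of_pos_left hlt (inv_pos.2 hp2)
      _ = 1 := inv_mul_cancel₀ hp2.ne'
    have hqfront : c • p ∈ frontier (ball (0 : ℂ × EuclideanSpace ℂ (Fin n)) 1) := by
      rw [frontier_ball _ one_ne_zero, mem_sphere_zero_iff_norm, Prod.norm_def, hq2]
      exact max_eq_right hq1.le
    have hmem := hbd ⟨L.smul_mem c hp, hqfront⟩
    have h1 : (c • p).1 ∈ sphere (0:ℂ) 1 := hmem.1
    rw [mem_sphere_zero_iff_norm] at h1
    rw [h1] at hq1
    exact lt_irrefl _ hq1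
  -- cone property of the fixed point set
  have hcone : ∀ x ∈ ball (0 : ℂ × EuclideanSpace ℂ (Fin n)) 1, α x = x → ‖x.2‖ ≤ ‖x.1‖ := by
    intro x hx hfx
    by_contra hlt
    push_neg at hlt
    have hv0 : 0 < ‖x.2‖ := lt_of_le_of_lt (norm_nonneg _) hlt
    have hx0 : x ≠ 0 := by
      intro hx0
      rw [hx0] at hv0
      simp at hv0
    have hxn : 0 < ‖x‖ := norm_pos_iff.2 hx0
    have hxm : ‖x‖ = ‖x.2‖ := by rw [Prod.norm_def]; exact max_eq_right hlt.le
    set m : ℝ := ‖x‖ with hm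
    have hmlt : m < 1 := mem_ball_zero_iff.1 hx
    have hmc : ((m : ℂ)) ≠ 0 := by simpa using hxn.ne'
    set u1 := ((m : ℂ))⁻¹ • x with hu1def
    have hu1n : ‖u1‖ = 1 := by
      rw [hu1def, norm_smul, norm_inv, Complex.norm_real, Real.norm_eq_abs,
        abs_of_pos hxn, inv_mul_cancel₀ hxn.ne']
    have hsx : ((m : ℂ)) • u1 = x := by
      rw [hu1def, smul_smul, mul_inv_cancel₀ hmc, one_smul]
    have hmmem : ((m : ℂ)) ∈ ball (0:ℂ) 1 := by
      rw [mem_ball_zero_iff, Complex.norm_real, Real.norm_eq_abs, abs_of_pos hxn]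
      exact hmlt
    obtain ⟨hd, hmm, hder⟩ := hcurve u1 hu1n.le
    obtain ⟨g, hg1, hgv⟩ := exists_dual_vector ℂ x.2 hv0.ne'
    set ξ : (ℂ × EuclideanSpace ℂ (Fin n)) →L[ℂ] ℂ :=
      g.comp (ContinuousLinearMap.snd ℂ ℂ (EuclideanSpace ℂ (Fin n))) with hξ
    have hξle : ∀ y : ℂ × EuclideanSpace ℂ (Fin n), ‖ξ y‖ ≤ ‖y‖ := by
      intro y
      calc ‖ξ y‖ = ‖g y.2‖ := rfl
      _ ≤ ‖g‖ * ‖y.2‖ := g.le_opNorm _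
      _ = ‖y.2‖ := by rw [hg1, one_mul]
      _ ≤ ‖y‖ := norm_snd_le _
    set q : ℂ → ℂ := fun lam => ξ (α (lam • u1)) with hq
    have hqd : DifferentiableOn ℂ q (ball 0 1) := ξ.differentiable.comp_differentiableOn hd
    have hqmap : MapsTo q (ball 0 1) (ball (0:ℂ) 1) := by
      intro lam hl
      rw [mem_ball_zero_iff]
      exact lt_of_le_of_lt (hξle _) (mem_ball_zero_iff.1 (hmm hl))
    have hq0 : q 0 = 0 := by
      rw [hq]
      simp only [zero_smul, h0]
      simp
    have hqm : q ((m : ℂ)) = ((m : ℂ)) := by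
      rw [hq]
      simp only [hsx, hfx]
      rw [hξ]
      simp only [ContinuousLinearMap.comp_apply, ContinuousLinearMap.coe_snd']
      rw [hgv, ← hxm]
      rfl
    have hqeq := schwarz_eq_of_eq hqd hqmap hq0 hmmem hmc (by
      rw [hqm])
    have hqid : ∀ z ∈ ball (0:ℂ) 1, q z = z := by
      intro z hz
      rw [hqeq z hz, hqm, div_self hmc, one_mul]
    have hqder : HasDerivAt q (ξ (β u1)) 0 := by
      have := HasFDerivAt.comp_hasDerivAt (x := (0:ℂ)) ξ.hasFDerivAt hder
      simpa [Function.comp_def] using this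
    have hqev : q =ᶠ[nhds (0:ℂ)] id := by
      filter_upwards [isOpen_ball.mem_nhds (mem_ball_self one_pos)] with z hz
      exact hqid z hz
    have hd1 : ξ (β u1) = 1 := by
      rw [← hqder.deriv, hqev.deriv_eq]
      simp
    set p := β u1 with hp
    have hpL : p ∈ L := by
      rw [hL]
      exact ⟨u1, rfl⟩
    have h2ge : (1:ℝ) ≤ ‖p.2‖ := by
      have : ‖ξ p‖ = 1 := by rw [hd1]; simp
      calc (1:ℝ) = ‖ξ p‖ := this.symm
      _ ≤ ‖g‖ * ‖p.2‖ := g.le_opNorm _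
      _ = ‖p.2‖ := by rw [hg1, one_mul]
    have h1ge : (1:ℝ) ≤ ‖p.1‖ := le_trans h2ge (hLcone p hpL)
    set c1 : ℂ → ℂ := fun lam => (α (lam • u1)).1 with hc1
    have hc1d : DifferentiableOn ℂ c1 (ball 0 1) :=
      (ContinuousLinearMap.fst ℂ ℂ (EuclideanSpace ℂ (Fin n))).differentiable.comp_differentiableOn hd
    have hc1map : MapsTo c1 (ball 0 1) (ball (0:ℂ) 1) := by
      intro lam hl
      rw [mem_ball_zero_iff]
      exact lt_of_le_of_lt (norm_fst_le _) (mem_ball_zero_iff.1 (hmm hl))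
    have hc10 : c1 0 = 0 := by
      rw [hc1]
      simp only [zero_smul, h0]
      rfl
    have hc1der : HasDerivAt c1 p.1 0 := by
      have := HasFDerivAt.comp_hasDerivAt (x := (0:ℂ))
        (ContinuousLinearMap.fst ℂ ℂ (EuclideanSpace ℂ (Fin n))).hasFDerivAt hder
      simpa [Function.comp_def] using this
    have hle1 : ‖p.1‖ ≤ 1 := by
      have := schwarz_deriv_le_s2 one_pos hc1d hc1map hc10
      rwa [hc1der.deriv, div_one] at this
    have heq1 : ‖deriv c1 0‖ = 1 := by
      rw [hc1der.deriv]
      exact le_antisymm hle1 h1ge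
    have hc1eq := schwarz_eq_of_deriv hc1d hc1map hc10 heq1
    have : c1 ((m:ℂ)) = deriv c1 0 * (m:ℂ) := hc1eq _ hmmem
    have hx1 : x.1 = deriv c1 0 * (m:ℂ) := by
      rw [← this, hc1]
      simp only [hsx, hfx]
    have : ‖x.1‖ = m := by
      rw [hx1, norm_mul, heq1, one_mul, Complex.norm_real, Real.norm_eq_abs, abs_of_pos hxn]
    have hmm2 : ‖x.2‖ = m := hxm.symm
    rw [this, hmm2] at hlt
    exact lt_irrefl _ hlt
  -- a fixed vector of β with first coordinate 1
  obtain ⟨u, hu1, huL, huβ, hun⟩ :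
      ∃ u : ℂ × EuclideanSpace ℂ (Fin n), u.1 = 1 ∧ u ∈ L ∧ β u = u ∧ ‖u‖ = 1 := by
    have h0Z : (0 : ℂ × EuclideanSpace ℂ (Fin n)) ∈ α '' ball 0 1 := ⟨0, h0mem, h0⟩
    obtain ⟨x, hxZ, hxne⟩ : ∃ x ∈ α '' ball (0 : ℂ × EuclideanSpace ℂ (Fin n)) 1, x ≠ 0 := by
      by_contra hno
      push_neg at hno
      refine hZne0 (Subset.antisymm (fun x hx => hno x hx) ?_)
      intro x hx
      rw [mem_singleton_iff] at hx
      rw [hx]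
      exact h0Z
    obtain ⟨hxb, hfx⟩ := hZfix x hxZ
    have hconex : ‖x.2‖ ≤ ‖x.1‖ := hcone x hxb hfx
    have hxn : 0 < ‖x‖ := norm_pos_iff.2 hxne
    have hxm : ‖x‖ = ‖x.1‖ := by rw [Prod.norm_def]; exact max_eq_left hconex
    set m : ℝ := ‖x‖ with hm
    have hmlt : m < 1 := mem_ball_zero_iff.1 hxb
    have hmc : ((m : ℂ)) ≠ 0 := by simpa using hxn.ne'
    set u1 := ((m : ℂ))⁻¹ • x with hu1def
    have hu1n : ‖u1‖ = 1 := by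
      rw [hu1def, norm_smul, norm_inv, Complex.norm_real, Real.norm_eq_abs,
        abs_of_pos hxn, inv_mul_cancel₀ hxn.ne']
    have hsx : ((m : ℂ)) • u1 = x := by
      rw [hu1def, smul_smul, mul_inv_cancel₀ hmc, one_smul]
    have hmmem : ((m : ℂ)) ∈ ball (0:ℂ) 1 := by
      rw [mem_ball_zero_iff, Complex.norm_real, Real.norm_eq_abs, abs_of_pos hxn]
      exact hmlt
    obtain ⟨hd, hmm, hder⟩ := hcurve u1 hu1n.le
    set c1 : ℂ → ℂ := fun lam => (α (lam • u1)).1 with hc1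
    have hc1d : DifferentiableOn ℂ c1 (ball 0 1) :=
      (ContinuousLinearMap.fst ℂ ℂ (EuclideanSpace ℂ (Fin n))).differentiable.comp_differentiableOn hd
    have hc1map : MapsTo c1 (ball 0 1) (ball (0:ℂ) 1) := by
      intro lam hl
      rw [mem_ball_zero_iff]
      exact lt_of_le_of_lt (norm_fst_le _) (mem_ball_zero_iff.1 (hmm hl))
    have hc10 : c1 0 = 0 := by
      rw [hc1]
      simp only [zero_smul, h0]
      rfl
    have hc1der : HasDerivAt c1 (β u1).1 0 := by
      have := HasFDerivAt.comp_hasDerivAt (x := (0:ℂ))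
        (ContinuousLinearMap.fst ℂ ℂ (EuclideanSpace ℂ (Fin n))).hasFDerivAt hder
      simpa [Function.comp_def] using this
    have hc1m : c1 ((m:ℂ)) = x.1 := by
      rw [hc1]
      simp only [hsx, hfx]
    have heqnorm : ‖c1 ((m:ℂ))‖ = ‖((m:ℂ))‖ := by
      rw [hc1m, Complex.norm_real, Real.norm_eq_abs, abs_of_pos hxn, ← hxm]
    have hc1eq := schwarz_eq_of_eq hc1d hc1map hc10 hmmem hmc heqnorm
    set c : ℂ := c1 ((m:ℂ)) / ((m:ℂ)) with hcdef
    have hcnorm : ‖c‖ = 1 := by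
      rw [hcdef, norm_div, heqnorm, div_self]
      rw [Complex.norm_real, Real.norm_eq_abs, abs_of_pos hxn]
      exact hxn.ne'
    have hc0 : c ≠ 0 := by
      intro hcc
      rw [hcc] at hcnorm
      simp at hcnorm
    have hderc : (β u1).1 = c := by
      have hev : c1 =ᶠ[nhds (0:ℂ)] fun z => c * z := by
        filter_upwards [isOpen_ball.mem_nhds (mem_ball_self one_pos)] with z hz
        exact hc1eq z hz
      have h1 : deriv c1 0 = c := by
        rw [hev.deriv_eq]
        have : HasDerivAt (fun z : ℂ => c * z) c 0 := by
          simpa using (hasDerivAt_id (0:ℂ)).const_mul c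
        exact this.deriv
      rw [← hc1der.deriv, h1]
    refine ⟨c⁻¹ • (β u1), ?_, ?_, ?_, ?_⟩
    · rw [Prod.smul_fst, hderc, smul_eq_mul, inv_mul_cancel₀ hc0]
    · rw [hL]
      exact ⟨c⁻¹ • u1, by rw [map_smul]; rfl⟩
    · rw [map_smul, hββ]
    · have hu2le : ‖(c⁻¹ • (β u1)).2‖ ≤ 1 := by
        have hmem : c⁻¹ • (β u1) ∈ L := by
          rw [hL]
          exact ⟨c⁻¹ • u1, by rw [map_smul]; rfl⟩
        have := hLcone _ hmem
        rwa [Prod.smul_fst, hderc, smul_eq_mul, inv_mul_cancel₀ hc0, norm_one] at this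
      rw [Prod.norm_def, Prod.smul_fst, hderc, smul_eq_mul, inv_mul_cancel₀ hc0, norm_one]
      exact max_eq_left hu2le
  set h : ℂ → EuclideanSpace ℂ (Fin n) := fun w => (α (w • u)).2 with hh
  -- the disc λ ↦ α (λ • u) is a graph over the first coordinate
  have hgraph : ∀ w ∈ ball (0:ℂ) 1, α (w • u) = (w, h w) := by
    obtain ⟨hd, hmm, hder⟩ := hcurve u hun.le
    set s1 : ℂ → ℂ := fun lam => (α (lam • u)).1 with hs1
    have hs1d : DifferentiableOn ℂ s1 (ball 0 1) :=
      (ContinuousLinearMap.fst ℂ ℂ (EuclideanSpace ℂ (Fin n))).differentiable.comp_differentiableOn hd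
    have hs1map : MapsTo s1 (ball 0 1) (ball (0:ℂ) 1) := by
      intro lam hl
      rw [mem_ball_zero_iff]
      exact lt_of_le_of_lt (norm_fst_le _) (mem_ball_zero_iff.1 (hmm hl))
    have hs10 : s1 0 = 0 := by
      rw [hs1]
      simp only [zero_smul, h0]
      rfl
    have hs1der : HasDerivAt s1 (β u).1 0 := by
      have := HasFDerivAt.comp_hasDerivAt (x := (0:ℂ))
        (ContinuousLinearMap.fst ℂ ℂ (EuclideanSpace ℂ (Fin n))).hasFDerivAt hder
      simpa [Function.comp_def] using this
    have hder1 : deriv s1 0 = 1 := by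
      rw [hs1der.deriv, huβ, hu1]
    have hs1eq := schwarz_eq_of_deriv hs1d hs1map hs10 (by rw [hder1]; simp)
    intro w hw
    have h1 : (α (w • u)).1 = w := by
      have := hs1eq w hw
      rw [hder1, one_mul] at this
      exact this
    exact Prod.ext h1 rfl
  have hwu : ∀ w ∈ ball (0:ℂ) 1, w • u ∈ ball (0 : ℂ × EuclideanSpace ℂ (Fin n)) 1 := by
    intro w hw
    rw [mem_ball_zero_iff, norm_smul, hun, mul_one]
    exact mem_ball_zero_iff.1 hw
  have hgraphZ : ∀ w ∈ ball (0:ℂ) 1, ((w, h w) : ℂ × EuclideanSpace ℂ (Fin n)) ∈ ball (0 : ℂ × EuclideanSpace ℂ (Fin n)) 1 ∧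
      α (w, h w) = (w, h w) := by
    intro w hw
    constructor
    · rw [← hgraph w hw]; exact mem_ball_zero_iff.2 (hαlt _ (hwu w hw))
    · rw [← hgraph w hw]; exact hretr _ (hwu w hw)
  have hconeh : ∀ w ∈ ball (0:ℂ) 1, ‖h w‖ ≤ ‖w‖ := by
    intro w hw
    obtain ⟨hb, hf⟩ := hgraphZ w hw
    simpa using hcone _ hb hf
  have hh0 : h 0 = 0 := by
    have : (0:ℂ) • u = 0 := zero_smul _ _
    simp only [hh, this, h0]; rfl
  have hdiffh : DifferentiableOn ℂ h (ball (0:ℂ) 1) := by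
    obtain ⟨hd, _, _⟩ := hcurve u hun.le
    exact (ContinuousLinearMap.snd ℂ ℂ (EuclideanSpace ℂ (Fin n))).differentiable.comp_differentiableOn hd
  have hmapsh : MapsTo h (ball (0:ℂ) 1) (ball (0 : EuclideanSpace ℂ (Fin n)) 1) := by
    intro w hw
    rw [mem_ball_zero_iff]
    exact lt_of_le_of_lt (norm_snd_le _) (hαlt _ (hwu w hw))
  -- the complementary projection
  set P : (ℂ × EuclideanSpace ℂ (Fin n)) →L[ℂ] (ℂ × EuclideanSpace ℂ (Fin n)) :=
    ContinuousLinearMap.id ℂ _ - β with hPdef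
  have hPβ : ∀ v, P (β v) = 0 := by
    intro v
    rw [hPdef]
    simp only [ContinuousLinearMap.sub_apply, ContinuousLinearMap.id_apply]
    rw [hββ v, sub_self]
  set N : ℝ := ‖P‖ + 1 with hN
  have hNpos : 0 < N := by positivity
  have hPval : ∀ v : ℂ × EuclideanSpace ℂ (Fin n), ‖v‖ ≤ 1 → ‖P v‖ ≤ N := by
    intro v hv
    calc ‖P v‖ ≤ ‖P‖ * ‖v‖ := P.le_opNorm v
    _ ≤ ‖P‖ * 1 := mul_le_mul_of_nonneg_left hv (norm_nonneg _)
    _ ≤ N := by rw [hN, mul_one]; linarith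
  -- antilipschitz constant for P restricted to the vertical fibre
  obtain ⟨K', hK'pos, hK'⟩ : ∃ K' : NNReal, 0 < K' ∧ AntilipschitzWith K'
      fun d : EuclideanSpace ℂ (Fin n) => P (((0:ℂ), d)) := by
    set T : EuclideanSpace ℂ (Fin n) →ₗ[ℂ] (ℂ × EuclideanSpace ℂ (Fin n)) :=
      (P.comp (ContinuousLinearMap.inr ℂ ℂ (EuclideanSpace ℂ (Fin n)))).toLinearMap with hT
    have hTker : LinearMap.ker T = ⊥ := by
      rw [LinearMap.ker_eq_bot']
      intro d hd
      have hd' : P (((0:ℂ), d)) = 0 := hd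
      have h1 : β (((0:ℂ), d)) = (((0:ℂ), d)) := by
        rw [hPdef] at hd'
        simp only [ContinuousLinearMap.sub_apply, ContinuousLinearMap.id_apply] at hd'
        exact (sub_eq_zero.1 hd').symm
      have h2 : (((0:ℂ), d)) ∈ L := by
        rw [hL]
        exact ⟨(((0:ℂ), d)), h1⟩
      have h3 := hLcone _ h2
      simp only [norm_zero] at h3
      exact norm_le_zero_iff.1 h3
    obtain ⟨K', hK'pos, hK'⟩ := T.exists_antilipschitzWith hTker
    exact ⟨K', hK'pos, hK'⟩
  have hKlow : ∀ d : EuclideanSpace ℂ (Fin n), ‖d‖ ≤ (K' : ℝ) * ‖P (((0:ℂ), d))‖ := by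
    intro d
    have := hK'.le_mul_dist d 0
    have h00 : P ((0:ℂ), (0 : EuclideanSpace ℂ (Fin n))) = 0 := map_zero P
    simpa [dist_eq_norm, h00] using this
  -- uniform derivative estimate
  obtain ⟨K, hKnn, hKD⟩ : ∃ K : ℝ, 0 ≤ K ∧
      ∀ z ∈ ball (0 : ℂ × EuclideanSpace ℂ (Fin n)) (1/2),
      ∀ e : ℂ × EuclideanSpace ℂ (Fin n), ‖e‖ ≤ 1 →
      ‖P ((fderiv ℂ α z) e)‖ ≤ K * ‖z‖ := by
    set B : ℝ := (2*N+1) / (3/4) with hB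
    have hBpos : 0 < B := by rw [hB]; positivity
    clear_value B
    refine ⟨(2*B+1)/(1/4), by positivity, ?_⟩
    intro z hz e he
    rcases eq_or_ne z 0 with rfl | hz0
    · rw [← hβdef, hPβ e]
      simp
    · have hzn : 0 < ‖z‖ := norm_pos_iff.2 hz0
      have hzlt : ‖z‖ < 1/2 := mem_ball_zero_iff.1 hz
      have hzb : z ∈ ball (0 : ℂ × EuclideanSpace ℂ (Fin n)) 1 :=
        mem_ball_zero_iff.2 (by linarith)
      have hzc : ((‖z‖ : ℂ)) ≠ 0 := by simpa using hzn.ne'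
      set a := ((‖z‖ : ℂ))⁻¹ • z with ha
      have han : ‖a‖ = 1 := by
        rw [ha, norm_smul, norm_inv, Complex.norm_real, Real.norm_eq_abs,
          abs_of_pos hzn, inv_mul_cancel₀ hzn.ne']
      have hsa : ((‖z‖:ℂ)) • a = z := by
        rw [ha, smul_smul, mul_inv_cancel₀ hzc, one_smul]
      have hznc : ‖((‖z‖:ℂ))‖ = ‖z‖ := by
        rw [Complex.norm_real, Real.norm_eq_abs, abs_of_pos hzn]
      -- Schwarz estimate in the `s` variable, for fixed `τ`
      have hstep1 : ∀ τ : ℂ, ‖τ‖ < 1/4 → ∀ s : ℂ, ‖s‖ < 3/4 →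
          ‖P (α (s • a + τ • e)) - P (α (τ • e))‖ ≤ B * ‖s‖ := by
        intro τ hτ
        have hptmem : ∀ s : ℂ, ‖s‖ < 3/4 →
            s • a + τ • e ∈ ball (0 : ℂ × EuclideanSpace ℂ (Fin n)) 1 := by
          intro s hs
          rw [mem_ball_zero_iff]
          calc ‖s • a + τ • e‖ ≤ ‖s • a‖ + ‖τ • e‖ := norm_add_le _ _
          _ ≤ ‖s‖ + ‖τ‖ := by
              have e1 : ‖s • a‖ = ‖s‖ := by rw [norm_smul, han, mul_one]
              have e2 : ‖τ • e‖ ≤ ‖τ‖ := by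
                rw [norm_smul]
                exact mul_le_of_le_one_right (norm_nonneg _) he
              rw [e1]
              exact add_le_add le_rfl e2
          _ < 3/4 + 1/4 := add_lt_add hs hτ
          _ = 1 := by norm_num
        have hτmem : τ • e ∈ ball (0 : ℂ × EuclideanSpace ℂ (Fin n)) 1 := by
          have := hptmem 0 (by norm_num)
          simpa using this
        set f : ℂ → ℂ × EuclideanSpace ℂ (Fin n) :=
          fun s => P (α (s • a + τ • e)) - P (α (τ • e)) with hfdef
        have hfd : DifferentiableOn ℂ f (ball 0 (3/4)) := by
          apply DifferentiableOn.sub _ (differentiableOn_const _)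
          apply P.differentiable.comp_differentiableOn
          apply hα.comp _ (fun s hs => hptmem s (mem_ball_zero_iff.1 hs))
          exact ((differentiable_id.smul_const a).add_const (τ • e)).differentiableOn
        have hf0 : f 0 = 0 := by
          simp only [hfdef, zero_smul, zero_add]
          simp
        have hfmap : MapsTo f (ball 0 (3/4))
            (ball (0 : ℂ × EuclideanSpace ℂ (Fin n)) (2*N+1)) := by
          intro s hs
          rw [mem_ball_zero_iff]
          simp only [hfdef]
          have h1 : ‖P (α (s • a + τ • e))‖ ≤ N :=
            hPval _ (le_of_lt (hαlt _ (hptmem s (mem_ball_zero_iff.1 hs))))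
          have h2 : ‖P (α (τ • e))‖ ≤ N := hPval _ (le_of_lt (hαlt _ hτmem))
          calc ‖P (α (s • a + τ • e)) - P (α (τ • e))‖ ≤
              ‖P (α (s • a + τ • e))‖ + ‖P (α (τ • e))‖ := norm_sub_le _ _
          _ ≤ N + N := add_le_add h1 h2
          _ < 2*N+1 := by linarith
        intro s hs
        have h3 := schwarz_norm_le hfd hfmap hf0 (mem_ball_zero_iff.2 hs)
        simp only [hfdef] at h3
        rw [hB]
        exact h3
      -- now estimate the `τ`-derivative at `τ = 0`
      set W : ℂ → ℂ × EuclideanSpace ℂ (Fin n) := fun τ =>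
        (P (α (z + τ • e)) - P (α (τ • e))) - (P (α z) - P (α 0)) with hWdef
      have hWptm : ∀ τ : ℂ, ‖τ‖ < 1/4 →
          z + τ • e ∈ ball (0 : ℂ × EuclideanSpace ℂ (Fin n)) 1 := by
        intro τ hτ
        have := hstep1 τ hτ
        have h1 : ((‖z‖:ℂ)) • a + τ • e = z + τ • e := by rw [hsa]
        have h2 : ‖((‖z‖:ℂ))‖ < 3/4 := by rw [hznc]; linarith
        rw [mem_ball_zero_iff]
        calc ‖z + τ • e‖ ≤ ‖z‖ + ‖τ • e‖ := norm_add_le _ _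
        _ ≤ ‖z‖ + ‖τ‖ := by
            have e2 : ‖τ • e‖ ≤ ‖τ‖ := by
              rw [norm_smul]
              exact mul_le_of_le_one_right (norm_nonneg _) he
            exact add_le_add le_rfl e2
        _ < 1/2 + 1/4 := add_lt_add hzlt hτ
        _ ≤ 1 := by norm_num
      have hτem : ∀ τ : ℂ, ‖τ‖ < 1/4 →
          τ • e ∈ ball (0 : ℂ × EuclideanSpace ℂ (Fin n)) 1 := by
        intro τ hτ
        rw [mem_ball_zero_iff, norm_smul]
        calc ‖τ‖ * ‖e‖ ≤ ‖τ‖ * 1 := mul_le_mul_of_nonneg_left he (norm_nonneg _)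
        _ < 1 := by rw [mul_one]; linarith
      have hWd : DifferentiableOn ℂ W (ball 0 (1/4)) := by
        apply DifferentiableOn.sub _ (differentiableOn_const _)
        apply DifferentiableOn.sub
        · apply P.differentiable.comp_differentiableOn
          apply hα.comp _ (fun τ hτ => hWptm τ (mem_ball_zero_iff.1 hτ))
          exact ((differentiable_id.smul_const e).const_add z).differentiableOn
        · apply P.differentiable.comp_differentiableOn
          apply hα.comp _ (fun τ hτ => hτem τ (mem_ball_zero_iff.1 hτ))
          exact (differentiable_id.smul_const e).differentiableOn
      have hW0 : W 0 = 0 := by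
        simp only [hWdef, zero_smul, add_zero]
        simp
      have hWmap : MapsTo W (ball 0 (1/4))
          (ball (0 : ℂ × EuclideanSpace ℂ (Fin n)) ((2*B+1) * ‖z‖)) := by
        intro τ hτ
        rw [mem_ball_zero_iff]
        simp only [hWdef]
        have hτ' : ‖τ‖ < 1/4 := mem_ball_zero_iff.1 hτ
        have h1 : ‖P (α (z + τ • e)) - P (α (τ • e))‖ ≤ B * ‖z‖ := by
          have := hstep1 τ hτ' ((‖z‖:ℂ)) (by rw [hznc]; linarith)
          rwa [hsa, hznc] at this
        have h2 : ‖P (α z) - P (α 0)‖ ≤ B * ‖z‖ := by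
          have := hstep1 0 (by norm_num) ((‖z‖:ℂ)) (by rw [hznc]; linarith)
          simp only [zero_smul, add_zero, hsa, hznc] at this
          exact this
        calc ‖(P (α (z + τ • e)) - P (α (τ • e))) - (P (α z) - P (α 0))‖ ≤
            ‖P (α (z + τ • e)) - P (α (τ • e))‖ + ‖P (α z) - P (α 0)‖ := norm_sub_le _ _
        _ ≤ B * ‖z‖ + B * ‖z‖ := add_le_add h1 h2
        _ < (2*B+1) * ‖z‖ := by nlinarith
      have hWder : HasDerivAt W
          (P ((fderiv ℂ α z) e) - P ((fderiv ℂ α 0) e)) 0 := by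
        apply HasDerivAt.sub_const
        apply HasDerivAt.sub
        · have hline : HasDerivAt (fun τ : ℂ => z + τ • e) e 0 := by
            simpa using ((hasDerivAt_id (0:ℂ)).smul_const e).const_add z
          have hαz : HasFDerivAt α (fderiv ℂ α z) ((fun τ : ℂ => z + τ • e) 0) := by
            simp only [zero_smul, add_zero]
            exact (hdiffAt z hzb).hasFDerivAt
          have h1 := HasFDerivAt.comp_hasDerivAt (x := (0:ℂ)) hαz hline
          have h2 := HasFDerivAt.comp_hasDerivAt (x := (0:ℂ)) P.hasFDerivAt h1
          simpa [Function.comp_def] using h2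
        · have hline : HasDerivAt (fun τ : ℂ => τ • e) e 0 := by
            simpa using (hasDerivAt_id (0:ℂ)).smul_const e
          have hα0' : HasFDerivAt α (fderiv ℂ α 0) ((fun τ : ℂ => τ • e) 0) := by
            simp only [zero_smul]
            exact (hdiffAt 0 h0mem).hasFDerivAt
          have h1 := HasFDerivAt.comp_hasDerivAt (x := (0:ℂ)) hα0' hline
          have h2 := HasFDerivAt.comp_hasDerivAt (x := (0:ℂ)) P.hasFDerivAt h1
          simpa [Function.comp_def] using h2
      have hderbd := schwarz_deriv_le_s2 (by norm_num : (0:ℝ) < 1/4) hWd hWmap hW0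
      rw [hWder.deriv] at hderbd
      have hz0P : P ((fderiv ℂ α 0) e) = 0 := by rw [← hβdef]; exact hPβ e
      rw [hz0P, sub_zero] at hderbd
      calc ‖P ((fderiv ℂ α z) e)‖ ≤ (2*B+1) * ‖z‖ / (1/4) := hderbd
      _ = (2*B+1)/(1/4) * ‖z‖ := by ring
  -- local uniqueness
  have hloc : ∃ ε : ℝ, 0 < ε ∧ ε ≤ 1/8 ∧
      ∀ y : ℂ × EuclideanSpace ℂ (Fin n), ‖y‖ < ε → α y = y → y.2 = h y.1 := by
    set M2 : ℝ := 2*N + 1 + K with hM2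
    have hM2pos : 0 < M2 := by rw [hM2]; positivity
    clear_value M2
    set M3 : ℝ := (M2/(1/4) + 1)/(1/4) with hM3
    have hM3pos : 0 < M3 := by rw [hM3]; positivity
    clear_value M3
    refine ⟨min (1/8) (1/(2*((K':ℝ)+1)*(K + 2*M3 + 1))), ?_, min_le_left _ _, ?_⟩
    · apply lt_min (by norm_num)
      positivity
    · set ε := min (1/8) (1/(2*((K':ℝ)+1)*(K + 2*M3 + 1))) with hε
      have hεpos : 0 < ε := by
        apply lt_min (by norm_num)
        positivity
      have hε8 : ε ≤ 1/8 := min_le_left _ _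
      have hεK : ε ≤ 1/(2*((K':ℝ)+1)*(K + 2*M3 + 1)) := min_le_right _ _
      clear_value ε
      intro y hy hfy
      by_contra hne
      set d : EuclideanSpace ℂ (Fin n) := y.2 - h y.1 with hd
      have hdne : d ≠ 0 := sub_ne_zero.2 hne
      have hdn : 0 < ‖d‖ := norm_pos_iff.2 hdne
      have hw1 : y.1 ∈ ball (0:ℂ) 1 := by
        rw [mem_ball_zero_iff]
        calc ‖y.1‖ ≤ ‖y‖ := norm_fst_le y
        _ < ε := hy
        _ ≤ 1/8 := hε8
        _ < 1 := by norm_num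
      set zs : ℂ × EuclideanSpace ℂ (Fin n) := (y.1, h y.1) with hzs
      obtain ⟨hzsb, hzsf⟩ := hgraphZ y.1 hw1
      have hzsn : ‖zs‖ = ‖y.1‖ := by
        rw [hzs, Prod.norm_def]
        exact max_eq_left (hconeh y.1 hw1)
      have hzslt : ‖zs‖ < ε := by
        rw [hzsn]
        exact lt_of_le_of_lt (norm_fst_le y) hy
      have hdlt : ‖d‖ < 2*ε := by
        rw [hd]
        calc ‖y.2 - h y.1‖ ≤ ‖y.2‖ + ‖h y.1‖ := norm_sub_le _ _
        _ ≤ ‖y‖ + ‖y.1‖ := add_le_add (norm_snd_le y) (hconeh y.1 hw1)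
        _ < ε + ε := add_lt_add hy (lt_of_le_of_lt (norm_fst_le y) hy)
        _ = 2*ε := by ring
      have hdc : ((‖d‖:ℂ)) ≠ 0 := by simpa using hdn.ne'
      set e' : ℂ × EuclideanSpace ℂ (Fin n) := ((0:ℂ), ((‖d‖:ℂ))⁻¹ • d) with he'
      have he'n : ‖e'‖ = 1 := by
        rw [he', Prod.norm_def]
        have : ‖((‖d‖:ℂ))⁻¹ • d‖ = 1 := by
          rw [norm_smul, norm_inv, Complex.norm_real, Real.norm_eq_abs,
            abs_of_pos hdn, inv_mul_cancel₀ hdn.ne']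
        rw [this]
        simp
      have hptm : ∀ τ : ℂ, ‖τ‖ < 1/4 →
          zs + τ • e' ∈ ball (0 : ℂ × EuclideanSpace ℂ (Fin n)) 1 := by
        intro τ hτ
        rw [mem_ball_zero_iff]
        calc ‖zs + τ • e'‖ ≤ ‖zs‖ + ‖τ • e'‖ := norm_add_le _ _
        _ < ε + 1/4 * 1 := by
            apply add_lt_add hzslt
            rw [norm_smul, he'n, mul_one]
            linarith [hτ]
        _ ≤ 1/8 + 1/4 := by rw [mul_one]; linarith
        _ < 1 := by norm_num
      set F : ℂ → ℂ × EuclideanSpace ℂ (Fin n) :=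
        fun τ => P (α (zs + τ • e')) - P zs with hF
      have hFd : DifferentiableOn ℂ F (ball 0 (1/4)) := by
        apply DifferentiableOn.sub _ (differentiableOn_const _)
        apply P.differentiable.comp_differentiableOn
        apply hα.comp _ (fun τ hτ => hptm τ (mem_ball_zero_iff.1 hτ))
        exact ((differentiable_id.smul_const e').const_add zs).differentiableOn
      have hF0 : F 0 = 0 := by
        simp only [hF, zero_smul, add_zero, hzs, hzsf, sub_self]
      set dF := P ((fderiv ℂ α zs) e') with hdF
      have hFder : HasDerivAt F dF 0 := by
        apply HasDerivAt.sub_const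
        have hline : HasDerivAt (fun τ : ℂ => zs + τ • e') e' 0 := by
          simpa using ((hasDerivAt_id (0:ℂ)).smul_const e').const_add zs
        have hαz : HasFDerivAt α (fderiv ℂ α zs) ((fun τ : ℂ => zs + τ • e') 0) := by
          simp only [zero_smul, add_zero]
          exact (hdiffAt zs hzsb).hasFDerivAt
        have h1 := HasFDerivAt.comp_hasDerivAt (x := (0:ℂ)) hαz hline
        have h2 := HasFDerivAt.comp_hasDerivAt (x := (0:ℂ)) P.hasFDerivAt h1
        simpa [Function.comp_def] using h2
      have hdFle : ‖dF‖ ≤ K * ‖zs‖ := by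
        rw [hdF]
        apply hKD zs _ e' he'n.le
        rw [mem_ball_zero_iff]
        calc ‖zs‖ < ε := hzslt
        _ ≤ 1/8 := hε8
        _ < 1/2 := by norm_num
      have hzs1 : ‖zs‖ ≤ 1 := by
        have := lt_of_lt_of_le hzslt hε8
        linarith
      have hdFle1 : ‖dF‖ ≤ K := by
        calc ‖dF‖ ≤ K * ‖zs‖ := hdFle
        _ ≤ K * 1 := mul_le_mul_of_nonneg_left hzs1 hKnn
        _ = K := mul_one K
      have hFval : ∀ τ : ℂ, ‖τ‖ < 1/4 → ‖F τ‖ ≤ 2*N := by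
        intro τ hτ
        simp only [hF]
        have h1 : ‖P (α (zs + τ • e'))‖ ≤ N := hPval _ (le_of_lt (hαlt _ (hptm τ hτ)))
        have h2 : ‖P zs‖ ≤ N := hPval _ hzs1
        calc ‖P (α (zs + τ • e')) - P zs‖ ≤ ‖P (α (zs + τ • e'))‖ + ‖P zs‖ :=
          norm_sub_le _ _
        _ ≤ N + N := add_le_add h1 h2
        _ = 2*N := by ring
      set F2 : ℂ → ℂ × EuclideanSpace ℂ (Fin n) := fun τ => F τ - τ • dF with hF2
      have hF2d : DifferentiableOn ℂ F2 (ball 0 (1/4)) :=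
        hFd.sub (differentiable_id.smul_const dF).differentiableOn
      have hF20 : F2 0 = 0 := by
        simp only [hF2, hF0, zero_smul, sub_zero]
      have hF2der : HasDerivAt F2 0 0 := by
        have h1 : HasDerivAt (fun τ : ℂ => τ • dF) dF 0 := by
          simpa using (hasDerivAt_id (0:ℂ)).smul_const dF
        have := hFder.sub h1
        rw [sub_self] at this
        exact this
      have hF2map : MapsTo F2 (ball 0 (1/4))
          (ball (0 : ℂ × EuclideanSpace ℂ (Fin n)) M2) := by
        intro τ hτ
        have hτ' : ‖τ‖ < 1/4 := mem_ball_zero_iff.1 hτ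
        rw [mem_ball_zero_iff]
        simp only [hF2]
        calc ‖F τ - τ • dF‖ ≤ ‖F τ‖ + ‖τ • dF‖ := norm_sub_le _ _
        _ ≤ 2*N + 1/4 * K := by
            apply add_le_add (hFval τ hτ')
            rw [norm_smul]
            apply mul_le_mul (le_of_lt hτ') hdFle1 (norm_nonneg _) (by norm_num)
        _ < M2 := by rw [hM2]; nlinarith
      have hF2sq : ∀ τ : ℂ, ‖τ‖ < 1/4 → ‖F2 τ‖ ≤ M3 * ‖τ‖^2 := by
        intro τ hτ
        have := schwarz_sq (by norm_num : (0:ℝ) < 1/4) hM2pos hF2d hF2map hF20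
          hF2der.deriv (mem_ball_zero_iff.2 hτ)
        rw [hM3]
        exact this
      set τ0 : ℂ := ((‖d‖ : ℝ) : ℂ) with hτ0
      have hτ0n : ‖τ0‖ = ‖d‖ := by
        rw [hτ0, Complex.norm_real, Real.norm_eq_abs, abs_of_pos hdn]
      have hτ0lt : ‖τ0‖ < 1/4 := by
        rw [hτ0n]
        calc ‖d‖ < 2*ε := hdlt
        _ ≤ 2*(1/8) := by linarith
        _ = 1/4 := by norm_num
      have hyzs : zs + τ0 • e' = y := by
        rw [hzs, he']
        apply Prod.ext
        · simp
        · show h y.1 + (τ0 • (((‖d‖:ℂ))⁻¹ • d)) = y.2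
          rw [smul_smul, hτ0, mul_inv_cancel₀ hdc, one_smul, hd]
          abel
      have hFτ0 : F τ0 = P (((0:ℂ), d)) := by
        simp only [hF]
        rw [hyzs, hfy, ← map_sub]
        congr 1
        rw [hzs, hd]
        apply Prod.ext
        · simp
        · simp
      have hlow : ‖d‖ ≤ (K':ℝ) * ‖F τ0‖ := by
        rw [hFτ0]
        exact hKlow d
      clear_value d zs e' τ0 F F2 dF
      have hup : ‖F τ0‖ ≤ ‖d‖ * (2*M3*ε + K*ε) := by
        have h1 : ‖F τ0‖ ≤ ‖F2 τ0‖ + ‖τ0 • dF‖ := by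
          have : F τ0 = F2 τ0 + τ0 • dF := by simp only [hF2]; abel
          rw [this]
          exact norm_add_le _ _
        have h2 : ‖F2 τ0‖ ≤ M3 * ‖d‖^2 := by
          have := hF2sq τ0 hτ0lt
          rwa [hτ0n] at this
        have h3 : ‖τ0 • dF‖ ≤ ‖d‖ * (K * ε) := by
          rw [norm_smul, hτ0n]
          apply mul_le_mul_of_nonneg_left _ (norm_nonneg d)
          calc ‖dF‖ ≤ K * ‖zs‖ := hdFle
          _ ≤ K * ε := mul_le_mul_of_nonneg_left hzslt.le hKnn
        have hsq : ‖d‖^2 ≤ ‖d‖ * (2*ε) := by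
          have h5 := mul_le_mul_of_nonneg_left hdlt.le (norm_nonneg d)
          calc ‖d‖^2 = ‖d‖ * ‖d‖ := sq ‖d‖
          _ ≤ ‖d‖ * (2*ε) := h5
        have h6 := mul_le_mul_of_nonneg_left hsq hM3pos.le
        calc ‖F τ0‖ ≤ M3 * ‖d‖^2 + ‖d‖ * (K * ε) := by linarith
        _ ≤ M3 * (‖d‖ * (2*ε)) + ‖d‖ * (K * ε) := by linarith
        _ = ‖d‖ * (2*M3*ε + K*ε) := by ring
      have hfinal : ‖d‖ ≤ (K':ℝ) * (‖d‖ * (2*M3*ε + K*ε)) := by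
        calc ‖d‖ ≤ (K':ℝ) * ‖F τ0‖ := hlow
        _ ≤ (K':ℝ) * (‖d‖ * (2*M3*ε + K*ε)) :=
          mul_le_mul_of_nonneg_left hup (NNReal.coe_nonneg K')
      have hone : (1:ℝ) ≤ (K':ℝ) * (2*M3*ε + K*ε) := by
        have h9 : ‖d‖ * 1 ≤ ‖d‖ * ((K':ℝ) * (2*M3*ε + K*ε)) := by
          calc ‖d‖ * 1 = ‖d‖ := mul_one _
          _ ≤ (K':ℝ) * (‖d‖ * (2*M3*ε + K*ε)) := hfinal
          _ = ‖d‖ * ((K':ℝ) * (2*M3*ε + K*ε)) := by ring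
        exact le_of_mul_le_mul_left h9 hdn
      have hcontra : (K':ℝ) * (2*M3*ε + K*ε) < 1 := by
        have hK1 : (0:ℝ) < (K':ℝ)+1 := by positivity
        have h5 : 2*M3*ε + K*ε = ε * (K + 2*M3) := by ring
        have h6 : ε * (K + 2*M3) ≤ (K + 2*M3) / (2*((K':ℝ)+1)*(K + 2*M3 + 1)) := by
          rw [div_eq_mul_inv]
          have h7 : (0:ℝ) ≤ K + 2*M3 := by positivity
          calc ε * (K + 2*M3) ≤ (1/(2*((K':ℝ)+1)*(K + 2*M3 + 1))) * (K + 2*M3) := by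
                apply mul_le_mul_of_nonneg_right hεK h7
          _ = (K + 2*M3) * (2*((K':ℝ)+1)*(K + 2*M3 + 1))⁻¹ := by ring
        have h8 : (K':ℝ) * ((K + 2*M3) / (2*((K':ℝ)+1)*(K + 2*M3 + 1))) < 1 := by
          rw [mul_div_assoc']
          rw [div_lt_one (by positivity)]
          nlinarith [NNReal.coe_nonneg K', hKnn, hM3pos]
        calc (K':ℝ) * (2*M3*ε + K*ε) = (K':ℝ) * (ε * (K + 2*M3)) := by ring
        _ ≤ (K':ℝ) * ((K + 2*M3) / (2*((K':ℝ)+1)*(K + 2*M3 + 1))) :=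
          mul_le_mul_of_nonneg_left h6 (NNReal.coe_nonneg K')
        _ < 1 := h8
      linarith
  -- global uniqueness
  have hZsub : ∀ x ∈ α '' ball (0 : ℂ × EuclideanSpace ℂ (Fin n)) 1, x.2 = h x.1 := by
    obtain ⟨ε, hεpos, hεle, hloc⟩ := hloc
    intro x hxZ
    obtain ⟨hxb, hfx⟩ := hZfix x hxZ
    rcases eq_or_ne x 0 with rfl | hx0
    · rw [Prod.snd_zero, Prod.fst_zero, hh0]
    · have hxn : 0 < ‖x‖ := norm_pos_iff.2 hx0
      have hmlt : ‖x‖ < 1 := mem_ball_zero_iff.1 hxb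
      have hminv : 1 < ‖x‖⁻¹ := (one_lt_inv₀ hxn).2 hmlt
      have hmapst : MapsTo (fun t : ℂ => t • x) (ball 0 ‖x‖⁻¹)
          (ball (0 : ℂ × EuclideanSpace ℂ (Fin n)) 1) := by
        intro t ht
        rw [mem_ball_zero_iff, norm_smul]
        have h1 : ‖t‖ < ‖x‖⁻¹ := mem_ball_zero_iff.1 ht
        calc ‖t‖ * ‖x‖ < ‖x‖⁻¹ * ‖x‖ := mul_lt_mul_of_pos_right h1 hxn
        _ = 1 := inv_mul_cancel₀ hxn.ne'
      have hcurved : DifferentiableOn ℂ (fun t : ℂ => α (t • x)) (ball 0 ‖x‖⁻¹) :=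
        hα.comp (differentiable_id.smul_const x).differentiableOn hmapst
      set φ : ℂ → EuclideanSpace ℂ (Fin n) :=
        fun t => (α (t • x)).2 - h ((α (t • x)).1) with hφ
      have hφd : DifferentiableOn ℂ φ (ball 0 ‖x‖⁻¹) := by
        apply DifferentiableOn.sub
        · exact (ContinuousLinearMap.snd ℂ ℂ
            (EuclideanSpace ℂ (Fin n))).differentiable.comp_differentiableOn hcurved
        · apply hdiffh.comp ((ContinuousLinearMap.fst ℂ ℂ
            (EuclideanSpace ℂ (Fin n))).differentiable.comp_differentiableOn hcurved)
          intro t ht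
          rw [mem_ball_zero_iff]
          exact lt_of_le_of_lt (norm_fst_le _) (hαlt _ (hmapst ht))
      have hev : φ =ᶠ[nhds (0:ℂ)] 0 := by
        have hrpos : 0 < ε * ‖x‖⁻¹ := by positivity
        filter_upwards [isOpen_ball.mem_nhds (mem_ball_self hrpos)] with t ht
        have htn : ‖t‖ < ε * ‖x‖⁻¹ := mem_ball_zero_iff.1 ht
        have htb : t ∈ ball (0:ℂ) ‖x‖⁻¹ := by
          rw [mem_ball_zero_iff]
          calc ‖t‖ < ε * ‖x‖⁻¹ := htn
          _ ≤ 1 * ‖x‖⁻¹ := by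
              apply mul_le_mul_of_nonneg_right _ (by positivity)
              linarith
          _ = ‖x‖⁻¹ := one_mul _
        have hyb : t • x ∈ ball (0 : ℂ × EuclideanSpace ℂ (Fin n)) 1 := hmapst htb
        have hsmall : ‖α (t • x)‖ < ε := by
          calc ‖α (t • x)‖ ≤ ‖t • x‖ := hαle _ hyb
          _ = ‖t‖ * ‖x‖ := norm_smul t x
          _ < (ε * ‖x‖⁻¹) * ‖x‖ := mul_lt_mul_of_pos_right htn hxn
          _ = ε := by field_simp
        have hfix2 : α (α (t • x)) = α (t • x) := hretr _ hyb
        have h5 := hloc (α (t • x)) hsmall hfix2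
        simp only [hφ, Pi.zero_apply]
        rw [sub_eq_zero]
        exact h5
      have han : AnalyticOnNhd ℂ φ (ball 0 ‖x‖⁻¹) := hφd.analyticOnNhd isOpen_ball
      have h0b : (0:ℂ) ∈ ball (0:ℂ) ‖x‖⁻¹ := mem_ball_self (by positivity)
      have hEq := han.eqOn_zero_of_preconnected_of_eventuallyEq_zero
        (convex_ball (0:ℂ) _).isPreconnected h0b hev
      have h1b : (1:ℂ) ∈ ball (0:ℂ) ‖x‖⁻¹ := by
        rw [mem_ball_zero_iff]
        simpa using hminv
      have h6 := hEq h1b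
      simp only [hφ, one_smul, hfx, Pi.zero_apply] at h6
      exact sub_eq_zero.1 h6
  refine ⟨h, hdiffh, hmapsh, hh0, ?_⟩
  apply Subset.antisymm
  · intro x hx
    obtain ⟨hb, _⟩ := hZfix x hx
    refine ⟨x.1, ?_, ?_⟩
    · rw [mem_ball_zero_iff]
      exact lt_of_le_of_lt (norm_fst_le x) (mem_ball_zero_iff.1 hb)
    · exact Prod.ext rfl (hZsub x hx).symm
  · rintro _ ⟨w, hw, rfl⟩
    exact ⟨w • u, hwu w hw, hgraph w hw⟩
end
end

section
/- Let n ≥ 1, G = Δ × 𝔹ⁿ, and let α : G → G be a holomorphic retraction with α(0) = 0 whose image Z = α(G) satisfies Z ≠ {0}. Let L be the range of the derivative Dα(0) : ℂ^{1+n} → ℂ^{1+n}. If L ∩ ∂G ⊆ closure(Δ) × ∂𝔹ⁿ, then there exist a complex linear subspace V ⊆ ℂⁿ with dim_ℂ V = dim_ℂ L and a holomorphic function g : V ∩ 𝔹ⁿ → Δ with g(0) = 0 such that Z = {(g(z), z) : z ∈ V ∩ 𝔹ⁿ}, i.e. Z is the graph of a Δ-valued holomorphic function over a complex linear subspace of 𝔹ⁿ.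 -/
open Metric Set

noncomputable section

section Aux

variable {X : Type*} [NormedAddCommGroup X] [NormedSpace ℂ X]
variable {Y : Type*} [NormedAddCommGroup Y] [NormedSpace ℂ Y]

/-- slice derivative -/
lemma slice_hasDerivAt {f : X → Y} {w v : X} (hf : DifferentiableAt ℂ f w) :
    HasDerivAt (fun t : ℂ => f (w + t • v)) (fderiv ℂ f w v) 0 := by
  have h1 : HasDerivAt (fun t : ℂ => w + t • v) v 0 := by
    simpa using ((hasDerivAt_id (0:ℂ)).smul_const v).const_add w
  have hf' : HasFDerivAt f (fderiv ℂ f w) (w + (0:ℂ) • v) := by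
    simpa using hf.hasFDerivAt
  have := hf'.comp_hasDerivAt (x := (0:ℂ)) h1
  exact this

/-- Cauchy-type estimate via Schwarz lemma -/
lemma deriv_bound_of_bound {f : ℂ → Y} {R B : ℝ} (hR : 0 < R)
    (hf : DifferentiableOn ℂ f (ball 0 R))
    (hB : ∀ t ∈ ball (0:ℂ) R, ‖f t - f 0‖ ≤ B) :
    ‖deriv f 0‖ ≤ B / R := by
  have hB0 : 0 ≤ B := le_trans (norm_nonneg (f 0 - f 0)) (hB 0 (mem_ball_self hR))
  have key : ∀ ε > 0, ‖deriv f 0‖ ≤ (B + ε) / R := by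
    intro ε hε
    have hmaps : MapsTo f (ball 0 R) (ball (f 0) (B + ε)) := by
      intro t ht
      rw [mem_ball, dist_eq_norm]
      exact lt_of_le_of_lt (hB t ht) (by linarith)
    exact Complex.norm_deriv_le_div_of_mapsTo_ball hf (hmaps.mono_right ball_subset_closedBall) hR
  by_contra h
  push_neg at h
  rw [div_lt_iff₀ hR] at h
  have h2 : 0 < (‖deriv f 0‖ * R - B) / 2 := by linarith
  have := key _ h2
  rw [le_div_iff₀ hR] at this
  linarith

/-- bound on fderiv from bound on function -/
lemma fderiv_bound {f : X → Y} {s M : ℝ} (hs : 0 < s)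
    (hf : DifferentiableOn ℂ f (ball 0 s)) (hM : ∀ x ∈ ball (0:X) s, ‖f x‖ ≤ M)
    {w : X} (hw : w ∈ ball (0:X) (s/2)) : ‖fderiv ℂ f w‖ ≤ 4 * M / s := by
  have hM0 : 0 ≤ M := le_trans (norm_nonneg _) (hM 0 (mem_ball_self hs))
  have hw' : w ∈ ball (0:X) s := by
    rw [mem_ball_zero_iff] at hw ⊢; linarith [hw]
  refine ContinuousLinearMap.opNorm_le_bound _ (by positivity) fun v => ?_
  rcases eq_or_ne v 0 with rfl | hv
  · simp
  have hv0 : 0 < ‖v‖ := norm_pos_iff.2 hv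
  set R : ℝ := (s/2) / ‖v‖ with hR
  have hRpos : 0 < R := by positivity
  set u : ℂ → Y := fun t => f (w + t • v) with hu
  have hmem : ∀ t : ℂ, t ∈ ball (0:ℂ) R → w + t • v ∈ ball (0:X) s := by
    intro t ht
    rw [mem_ball_zero_iff] at hw ht ⊢
    calc ‖w + t • v‖ ≤ ‖w‖ + ‖t‖ * ‖v‖ := by
          simpa [norm_smul] using norm_add_le w (t • v)
      _ < s/2 + R * ‖v‖ := by
          have := mul_lt_mul_of_pos_right ht hv0
          linarith
      _ = s := by rw [hR, div_mul_cancel₀ _ hv0.ne']; ring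
  have hud : DifferentiableOn ℂ u (ball 0 R) := by
    intro t ht
    exact ((hf.differentiableAt (isOpen_ball.mem_nhds (hmem t ht))).comp t
      (differentiableAt_const _ |>.add ((differentiableAt_id).smul_const v))).differentiableWithinAt
  have hub : ∀ t ∈ ball (0:ℂ) R, ‖u t - u 0‖ ≤ 2 * M := by
    intro t ht
    have h1 := hM _ (hmem t ht)
    have h2 := hM _ (hmem 0 (mem_ball_self hRpos))
    calc ‖u t - u 0‖ ≤ ‖u t‖ + ‖u 0‖ := norm_sub_le _ _
      _ ≤ 2 * M := by linarith
  have hder : deriv u 0 = fderiv ℂ f w v := by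
    have := slice_hasDerivAt (f := f) (w := w) (v := v)
      (hf.differentiableAt (isOpen_ball.mem_nhds hw'))
    exact this.deriv
  have := deriv_bound_of_bound hRpos hud hub
  rw [hder] at this
  calc ‖fderiv ℂ f w v‖ ≤ 2 * M / R := this
    _ = 4 * M / s * ‖v‖ := by rw [hR, div_div_eq_mul_div, div_div_eq_mul_div]; ring

/-- Lipschitz bound -/
lemma lip_of_bound {f : X → Y} {s M : ℝ} (hs : 0 < s)
    (hf : DifferentiableOn ℂ f (ball 0 s)) (hM : ∀ x ∈ ball (0:X) s, ‖f x‖ ≤ M)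
    {y y' : X} (hy : y ∈ ball (0:X) (s/2)) (hy' : y' ∈ ball (0:X) (s/2)) :
    ‖f y - f y'‖ ≤ 4 * M / s * ‖y - y'‖ := by
  have hsub : ball (0:X) (s/2) ⊆ ball 0 s := ball_subset_ball (by linarith)
  refine Convex.norm_image_sub_le_of_norm_fderiv_le
    (fun x hx => hf.differentiableAt (isOpen_ball.mem_nhds (hsub hx)))
    (fun x hx => fderiv_bound hs hf hM hx) (convex_ball _ _) hy' hy

/-- Lipschitz bound on the derivative -/
lemma fderiv_lip {f : X → Y} {s M : ℝ} (hs : 0 < s)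
    (hf : DifferentiableOn ℂ f (ball 0 s)) (hM : ∀ x ∈ ball (0:X) s, ‖f x‖ ≤ M)
    {z : X} (hz : z ∈ ball (0:X) (s/8)) :
    ‖fderiv ℂ f z - fderiv ℂ f 0‖ ≤ 32 * M / s^2 * ‖z‖ := by
  have hM0 : 0 ≤ M := le_trans (norm_nonneg _) (hM 0 (mem_ball_self hs))
  have hz8 : ‖z‖ < s/8 := mem_ball_zero_iff.1 hz
  have hzs : z ∈ ball (0:X) s := mem_ball_zero_iff.2 (by linarith)
  have h0s : (0:X) ∈ ball (0:X) s := mem_ball_self hs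
  refine ContinuousLinearMap.opNorm_le_bound _ (by positivity) fun v => ?_
  rcases eq_or_ne v 0 with rfl | hv
  · simp
  have hv0 : 0 < ‖v‖ := norm_pos_iff.2 hv
  set R : ℝ := (s/4) / ‖v‖ with hR
  have hRpos : 0 < R := by positivity
  set u : ℂ → Y := fun t => f (z + t • v) - f (t • v) with hu
  have hmem : ∀ t : ℂ, t ∈ ball (0:ℂ) R → (z + t • v ∈ ball (0:X) (s/2) ∧ t • v ∈ ball (0:X) (s/2)) := by
    intro t ht
    rw [mem_ball_zero_iff] at ht
    have htv : ‖t • v‖ < s/4 := by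
      rw [norm_smul]
      calc ‖t‖ * ‖v‖ < R * ‖v‖ := mul_lt_mul_of_pos_right ht hv0
        _ = s/4 := by rw [hR, div_mul_cancel₀ _ hv0.ne']
    constructor
    · rw [mem_ball_zero_iff]
      calc ‖z + t • v‖ ≤ ‖z‖ + ‖t • v‖ := norm_add_le _ _
        _ < s/2 := by linarith
    · rw [mem_ball_zero_iff]; linarith
  have hsub2 : ball (0:X) (s/2) ⊆ ball 0 s := ball_subset_ball (by linarith)
  have hud : DifferentiableOn ℂ u (ball 0 R) := by
    intro t ht
    have d1 := (hf.differentiableAt (isOpen_ball.mem_nhds (hsub2 (hmem t ht).1))).comp t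
      ((differentiableAt_const z).add ((differentiableAt_id).smul_const v))
    have d2 := (hf.differentiableAt (isOpen_ball.mem_nhds (hsub2 (hmem t ht).2))).comp t
      ((differentiableAt_id).smul_const v)
    exact (d1.sub d2).differentiableWithinAt
  have hub : ∀ t ∈ ball (0:ℂ) R, ‖u t - u 0‖ ≤ 2 * (4 * M / s * ‖z‖) := by
    intro t ht
    have h1 : ‖f (z + t • v) - f (t • v)‖ ≤ 4 * M / s * ‖z‖ := by
      have := lip_of_bound hs hf hM (hmem t ht).1 (hmem t ht).2
      simpa using this
    have h2 : ‖f (z + (0:ℂ) • v) - f ((0:ℂ) • v)‖ ≤ 4 * M / s * ‖z‖ := by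
      have := lip_of_bound hs hf hM (hmem 0 (mem_ball_self hRpos)).1 (hmem 0 (mem_ball_self hRpos)).2
      simpa using this
    calc ‖u t - u 0‖ ≤ ‖u t‖ + ‖u 0‖ := norm_sub_le _ _
      _ ≤ 2 * (4 * M / s * ‖z‖) := by
        simp only [hu]
        have := h1; have := h2
        push_cast
        linarith [h1, h2]
  have hder : deriv u 0 = fderiv ℂ f z v - fderiv ℂ f 0 v := by
    have d1 : HasDerivAt (fun t : ℂ => f (z + t • v)) (fderiv ℂ f z v) 0 :=
      slice_hasDerivAt (hf.differentiableAt (isOpen_ball.mem_nhds hzs))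
    have d2 : HasDerivAt (fun t : ℂ => f ((0:X) + t • v)) (fderiv ℂ f 0 v) 0 :=
      slice_hasDerivAt (hf.differentiableAt (isOpen_ball.mem_nhds h0s))
    have d2' : HasDerivAt (fun t : ℂ => f (t • v)) (fderiv ℂ f 0 v) 0 := by
      simpa using d2
    exact (d1.sub d2').deriv
  have := deriv_bound_of_bound hRpos hud hub
  rw [hder] at this
  calc ‖(fderiv ℂ f z - fderiv ℂ f 0) v‖ = ‖fderiv ℂ f z v - fderiv ℂ f 0 v‖ := by simp
    _ ≤ 2 * (4 * M / s * ‖z‖) / R := this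
    _ = 32 * M / s^2 * ‖z‖ * ‖v‖ := by rw [hR]; field_simp; ring

/-- second-order Taylor-type estimate -/
lemma taylor_diff {f : X → Y} {s M : ℝ} (hs : 0 < s)
    (hf : DifferentiableOn ℂ f (ball 0 s)) (hM : ∀ x ∈ ball (0:X) s, ‖f x‖ ≤ M)
    {y y' : X} {m : ℝ} (hm : 0 ≤ m) (hms : m < s/8)
    (hy : ‖y‖ ≤ m) (hy' : ‖y'‖ ≤ m) :
    ‖f y - f y' - fderiv ℂ f 0 (y - y')‖ ≤ 32 * M / s^2 * m * ‖y - y'‖ := by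
  set h : X → Y := fun x => f x - fderiv ℂ f 0 x with hh
  have hsub : closedBall (0:X) m ⊆ ball 0 s := by
    intro x hx
    rw [mem_closedBall_zero_iff] at hx
    rw [mem_ball_zero_iff]
    linarith
  have hdiff : ∀ x ∈ closedBall (0:X) m, DifferentiableAt ℂ h x := by
    intro x hx
    exact (hf.differentiableAt (isOpen_ball.mem_nhds (hsub hx))).sub
      ((fderiv ℂ f 0).differentiableAt)
  have hbd : ∀ x ∈ closedBall (0:X) m, ‖fderiv ℂ h x‖ ≤ 32 * M / s^2 * m := by
    intro x hx
    rw [mem_closedBall_zero_iff] at hx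
    have hx8 : x ∈ ball (0:X) (s/8) := mem_ball_zero_iff.2 (by linarith)
    have : fderiv ℂ h x = fderiv ℂ f x - fderiv ℂ f 0 := by
      rw [hh]
      rw [fderiv_fun_sub (hf.differentiableAt (isOpen_ball.mem_nhds (hsub (by
        rw [mem_closedBall_zero_iff]; exact hx)))) ((fderiv ℂ f 0).differentiableAt)]
      simp [(fderiv ℂ f 0).fderiv]
    rw [this]
    calc ‖fderiv ℂ f x - fderiv ℂ f 0‖ ≤ 32 * M / s^2 * ‖x‖ := fderiv_lip hs hf hM hx8
      _ ≤ 32 * M / s^2 * m := by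
        have hM0 : 0 ≤ M := le_trans (norm_nonneg _) (hM 0 (mem_ball_self hs))
        have : (0:ℝ) ≤ 32 * M / s^2 := by positivity
        exact mul_le_mul_of_nonneg_left hx this
  have := Convex.norm_image_sub_le_of_norm_fderiv_le hdiff hbd (convex_closedBall _ _)
    (mem_closedBall_zero_iff.2 hy') (mem_closedBall_zero_iff.2 hy)
  have heq : f y - f y' - fderiv ℂ f 0 (y - y') = h y - h y' := by
    simp only [hh, map_sub]; abel
  rw [heq]; exact this

lemma loc_eq {α F : X → X} {P : X →L[ℂ] X}
    (hα : DifferentiableOn ℂ α (ball 0 1)) (hF : DifferentiableOn ℂ F (ball 0 1))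
    (hαM : ∀ x ∈ ball (0:X) 1, ‖α x‖ ≤ 1) (hFM : ∀ x ∈ ball (0:X) 1, ‖F x‖ ≤ 1)
    (h0 : α 0 = 0) (hF0 : F 0 = 0)
    (hPα : fderiv ℂ α 0 = P) (hPF : fderiv ℂ F 0 = P)
    (hαα : ∀ x ∈ ball (0:X) 1, α (α x) = α x)
    (hαF : ∀ x ∈ ball (0:X) 1, α (F x) = F x)
    (hFα : ∀ x ∈ ball (0:X) 1, F (α x) = F x)
    (hFF : ∀ x ∈ ball (0:X) 1, F (F x) = F x)
    {x : X} (hx : ‖x‖ < 1/256) : α x = F x := by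
  have hx1 : x ∈ ball (0:X) 1 := mem_ball_zero_iff.2 (by linarith)
  have hxh : x ∈ ball (0:X) (1/2) := mem_ball_zero_iff.2 (by linarith)
  have h0h : (0:X) ∈ ball (0:X) (1/2) := mem_ball_self (by norm_num)
  have hy4 : ‖α x‖ ≤ 4 * ‖x‖ := by
    have := lip_of_bound (s := 1) (M := 1) one_pos hα hαM
      hxh h0h
    rw [h0, sub_zero, sub_zero] at this
    calc ‖α x‖ ≤ 4 * 1 / 1 * ‖x‖ := this
      _ = 4 * ‖x‖ := by norm_num
  have hy'4 : ‖F x‖ ≤ 4 * ‖x‖ := by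
    have := lip_of_bound (s := 1) (M := 1) one_pos hF hFM
      hxh h0h
    rw [hF0, sub_zero, sub_zero] at this
    calc ‖F x‖ ≤ 4 * 1 / 1 * ‖x‖ := this
      _ = 4 * ‖x‖ := by norm_num
  have hm0 : (0:ℝ) ≤ 4 * ‖x‖ := by positivity
  have e1' := taylor_diff (s := 1) (M := 1) one_pos hα hαM hm0
    (by norm_num; linarith) hy4 hy'4
  have e2' := taylor_diff (s := 1) (M := 1) one_pos hF hFM hm0
    (by norm_num; linarith) hy4 hy'4
  rw [hαα x hx1, hαF x hx1, hPα] at e1'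
  rw [hFα x hx1, hFF x hx1, sub_self, zero_sub, norm_neg, hPF] at e2'
  set d := α x - F x with hd
  have hsplit : ‖d‖ ≤ ‖d - P d‖ + ‖P d‖ := by
    calc ‖d‖ = ‖(d - P d) + P d‖ := by rw [sub_add_cancel]
      _ ≤ ‖d - P d‖ + ‖P d‖ := norm_add_le _ _
  have hbound : ‖d‖ ≤ 256 * ‖x‖ * ‖d‖ := by
    have c1 : ‖d - P d‖ ≤ 32 * 1 / 1^2 * (4 * ‖x‖) * ‖d‖ := e1'
    have c2 : ‖P d‖ ≤ 32 * 1 / 1^2 * (4 * ‖x‖) * ‖d‖ := e2'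
    calc ‖d‖ ≤ ‖d - P d‖ + ‖P d‖ := hsplit
      _ ≤ 32 * 1 / 1^2 * (4 * ‖x‖) * ‖d‖ + 32 * 1 / 1^2 * (4 * ‖x‖) * ‖d‖ :=
        add_le_add c1 c2
      _ = 256 * ‖x‖ * ‖d‖ := by ring
  have hdz : d = 0 := by
    by_contra hne
    have hdn : 0 < ‖d‖ := norm_pos_iff.2 hne
    nlinarith
  exact sub_eq_zero.1 hdz


lemma glob_eq [CompleteSpace X] {α F : X → X}
    (hα : DifferentiableOn ℂ α (ball 0 1)) (hF : DifferentiableOn ℂ F (ball 0 1))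
    (hloc : ∀ x : X, ‖x‖ < 1/256 → α x = F x)
    {x : X} (hx : x ∈ ball (0:X) 1) : α x = F x := by
  rcases eq_or_ne x 0 with rfl | hx0
  · exact hloc 0 (by simp)
  have hxn : 0 < ‖x‖ := norm_pos_iff.2 hx0
  have hx1 : ‖x‖ < 1 := mem_ball_zero_iff.1 hx
  set R : ℝ := ‖x‖⁻¹ with hR
  have hR1 : 1 < R := by rw [hR]; exact (one_lt_inv₀ hxn).2 hx1
  have hR0 : 0 < R := lt_trans one_pos hR1
  have hmemt : ∀ t : ℂ, t ∈ ball (0:ℂ) R → t • x ∈ ball (0:X) 1 := by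
    intro t ht
    rw [mem_ball_zero_iff] at ht ⊢
    rw [norm_smul]
    calc ‖t‖ * ‖x‖ < R * ‖x‖ := mul_lt_mul_of_pos_right ht hxn
      _ = 1 := by rw [hR]; field_simp
  set k : ℂ → X := fun t => α (t • x) - F (t • x) with hk
  have hkdiff : DifferentiableOn ℂ k (ball (0:ℂ) R) := by
    intro t ht
    have hsm : DifferentiableAt ℂ (fun s : ℂ => s • x) t := (differentiableAt_id).smul_const x
    have d1 : DifferentiableAt ℂ (fun s : ℂ => α (s • x)) t :=
      (hα.differentiableAt (isOpen_ball.mem_nhds (hmemt t ht))).comp t hsm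
    have d2 : DifferentiableAt ℂ (fun s : ℂ => F (s • x)) t :=
      (hF.differentiableAt (isOpen_ball.mem_nhds (hmemt t ht))).comp t hsm
    exact (d1.sub d2).differentiableWithinAt
  have hkanal : AnalyticOnNhd ℂ k (ball (0:ℂ) R) := hkdiff.analyticOnNhd isOpen_ball
  have hk0 : k =ᶠ[nhds (0:ℂ)] 0 := by
    have hr0 : (0:ℝ) < (1/256) / ‖x‖ := by positivity
    filter_upwards [ball_mem_nhds (0:ℂ) hr0] with t ht
    rw [mem_ball_zero_iff] at ht
    have hlt : ‖t • x‖ < 1/256 := by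
      rw [norm_smul]
      calc ‖t‖ * ‖x‖ < ((1/256) / ‖x‖) * ‖x‖ := mul_lt_mul_of_pos_right ht hxn
        _ = 1/256 := by field_simp
    show α (t • x) - F (t • x) = 0
    rw [hloc _ hlt, sub_self]
  have hEq := hkanal.eqOn_zero_of_preconnected_of_eventuallyEq_zero
    (convex_ball (0:ℂ) R).isPreconnected (mem_ball_self hR0) hk0
  have h1R : (1:ℂ) ∈ ball (0:ℂ) R := by
    rw [mem_ball_zero_iff]; simpa using hR1
  have hk1 : α x - F x = 0 := by
    have h2 : k 1 = 0 := hEq h1R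
    rw [hk] at h2
    simpa using h2
  exact sub_eq_zero.1 hk1

end Aux

set_option maxHeartbeats 1000000 in
theorem stmt_3 (n : ℕ) (hn : 1 ≤ n)
    (α : ℂ × EuclideanSpace ℂ (Fin n) → ℂ × EuclideanSpace ℂ (Fin n))
    (hα : DifferentiableOn ℂ α (diskBall n))
    (hmaps : MapsTo α (diskBall n) (diskBall n))
    (hretr : ∀ x ∈ diskBall n, α (α x) = α x)
    (h0 : α 0 = 0)
    (hZne0 : α '' diskBall n ≠ {0})
    (L : Submodule ℂ (ℂ × EuclideanSpace ℂ (Fin n)))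
    (hL : L = LinearMap.range
      ((fderiv ℂ α 0 : (ℂ × EuclideanSpace ℂ (Fin n)) →L[ℂ]
        (ℂ × EuclideanSpace ℂ (Fin n))) :
        (ℂ × EuclideanSpace ℂ (Fin n)) →ₗ[ℂ] (ℂ × EuclideanSpace ℂ (Fin n))))
    (hbd : (L : Set (ℂ × EuclideanSpace ℂ (Fin n))) ∩ frontier (diskBall n) ⊆
      closure (ball (0 : ℂ) 1) ×ˢ (sphere (0 : EuclideanSpace ℂ (Fin n)) 1)) :
    ∃ (V : Submodule ℂ (EuclideanSpace ℂ (Fin n)))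
      (g : EuclideanSpace ℂ (Fin n) → ℂ),
      Module.finrank ℂ V = Module.finrank ℂ L ∧
      DifferentiableOn ℂ g ((V : Set (EuclideanSpace ℂ (Fin n))) ∩ ball 0 1) ∧
      MapsTo g ((V : Set (EuclideanSpace ℂ (Fin n))) ∩ ball 0 1) (ball (0 : ℂ) 1) ∧
      g 0 = 0 ∧
      α '' diskBall n =
        (fun z => (g z, z)) '' ((V : Set (EuclideanSpace ℂ (Fin n))) ∩ ball 0 1) := by
  -- setup
  have hG : diskBall n = ball (0 : ℂ × EuclideanSpace ℂ (Fin n)) 1 := ball_prod_same 0 0 1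
  rw [hG] at hα hmaps hretr
  have hG0 : (0 : ℂ × EuclideanSpace ℂ (Fin n)) ∈ ball (0 : ℂ × EuclideanSpace ℂ (Fin n)) 1 :=
    mem_ball_self one_pos
  set P : (ℂ × EuclideanSpace ℂ (Fin n)) →L[ℂ] (ℂ × EuclideanSpace ℂ (Fin n)) :=
    fderiv ℂ α 0 with hP
  have hαball : ∀ x ∈ ball (0 : ℂ × EuclideanSpace ℂ (Fin n)) 1,
      α x ∈ ball (0 : ℂ × EuclideanSpace ℂ (Fin n)) 1 := fun x hx => hmaps hx
  have hα0 : DifferentiableAt ℂ α 0 := hα.differentiableAt (isOpen_ball.mem_nhds hG0)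
  -- P is the identity on L
  have hPfix : ∀ y ∈ L, P y = y := by
    have hev : (fun x => α (α x)) =ᶠ[nhds (0 : ℂ × EuclideanSpace ℂ (Fin n))] α :=
      Filter.eventuallyEq_of_mem (isOpen_ball.mem_nhds hG0) hretr
    have hcomp : fderiv ℂ (fun x => α (α x)) 0 = P.comp P := by
      have hα0' : DifferentiableAt ℂ α (α 0) := by rw [h0]; exact hα0
      have := fderiv_comp (𝕜 := ℂ) 0 hα0' hα0
      rw [show (α ∘ α) = fun x => α (α x) from rfl] at this
      rw [this, h0]
    have hPP : P.comp P = P := by rw [← hcomp, hev.fderiv_eq]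
    intro y hy
    rw [hL] at hy
    obtain ⟨x, rfl⟩ := hy
    have := congrArg (fun T => T x) hPP
    exact this
  -- the geometric condition
  have hLle : ∀ y : ℂ × EuclideanSpace ℂ (Fin n), y ∈ L → ‖y.1‖ ≤ ‖y.2‖ := by
    intro y hy
    by_contra hlt
    push_neg at hlt
    have hy1 : 0 < ‖y.1‖ := lt_of_le_of_lt (norm_nonneg _) hlt
    set c : ℂ := ((‖y.1‖⁻¹ : ℝ) : ℂ) with hc
    have hcn : ‖c‖ = ‖y.1‖⁻¹ := by
      rw [hc, Complex.norm_real, Real.norm_eq_abs, abs_of_pos (by positivity)]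
    set w : ℂ × EuclideanSpace ℂ (Fin n) := c • y with hw
    have hwL : w ∈ L := L.smul_mem c hy
    have hw1 : ‖w.1‖ = 1 := by
      rw [hw]
      show ‖c • y.1‖ = 1
      rw [norm_smul, hcn, inv_mul_cancel₀ hy1.ne']
    have hw2 : ‖w.2‖ < 1 := by
      rw [hw]
      show ‖c • y.2‖ < 1
      rw [norm_smul, hcn]
      rw [inv_mul_lt_one₀ hy1] -- maybe wrong name
      exact hlt
    have hwfront : w ∈ frontier (diskBall n) := by
      rw [hG, frontier_ball _ one_ne_zero, mem_sphere_iff_norm, sub_zero, Prod.norm_def,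
        hw1, max_eq_left hw2.le]
    have := hbd ⟨hwL, hwfront⟩
    have h2 : w.2 ∈ sphere (0 : EuclideanSpace ℂ (Fin n)) 1 := this.2
    rw [mem_sphere_iff_norm, sub_zero] at h2
    exact absurd h2 (ne_of_lt hw2)
  -- the subspace V and the linear data
  set f : L →ₗ[ℂ] EuclideanSpace ℂ (Fin n) :=
    (LinearMap.snd ℂ ℂ (EuclideanSpace ℂ (Fin n))).comp L.subtype with hf
  have hinj : Function.Injective f := by
    rw [← LinearMap.ker_eq_bot]
    ext v
    simp only [LinearMap.mem_ker, Submodule.mem_bot]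
    constructor
    · intro hv
      have hv2 : (v : ℂ × EuclideanSpace ℂ (Fin n)).2 = 0 := hv
      have h1 := hLle _ v.2
      rw [hv2, norm_zero] at h1
      have hv1 : (v : ℂ × EuclideanSpace ℂ (Fin n)).1 = 0 :=
        norm_le_zero_iff.1 h1
      apply Subtype.ext
      exact Prod.ext hv1 hv2
    · rintro rfl; simp
  set V : Submodule ℂ (EuclideanSpace ℂ (Fin n)) := LinearMap.range f with hV
  have hfinrank : Module.finrank ℂ V = Module.finrank ℂ L :=
    LinearMap.finrank_range_of_inj hinj
  set e : L ≃ₗ[ℂ] V := LinearEquiv.ofInjective f hinj with he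
  set ℓ : V →ₗ[ℂ] ℂ × EuclideanSpace ℂ (Fin n) := L.subtype.comp e.symm.toLinearMap with hℓ
  have hℓL : ∀ w : V, ℓ w ∈ L := fun w => (e.symm w).2
  have hecoe : ∀ x : L, ((e x : V) : EuclideanSpace ℂ (Fin n)) = f x := by
    intro x
    rw [he]
    rfl
  have hℓ2 : ∀ w : V, (ℓ w).2 = (w : EuclideanSpace ℂ (Fin n)) := by
    intro w
    calc (ℓ w).2 = f (e.symm w) := rfl
      _ = ((e (e.symm w) : V) : EuclideanSpace ℂ (Fin n)) := (hecoe _).symm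
      _ = (w : EuclideanSpace ℂ (Fin n)) := by rw [e.apply_symm_apply]
  have hℓ1 : ∀ w : V, ‖(ℓ w).1‖ ≤ ‖(w : EuclideanSpace ℂ (Fin n))‖ := by
    intro w
    have := hLle _ (hℓL w)
    rwa [hℓ2 w] at this
  have hLmem2 : ∀ y : ℂ × EuclideanSpace ℂ (Fin n), y ∈ L →
      y.2 ∈ V := fun y hy => ⟨⟨y, hy⟩, rfl⟩
  have hℓe : ∀ x : L, ℓ (e x) = (x : ℂ × EuclideanSpace ℂ (Fin n)) := by
    intro x
    calc ℓ (e x) = (L.subtype (e.symm (e x)) : ℂ × EuclideanSpace ℂ (Fin n)) := rfl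
      _ = _ := by rw [e.symm_apply_apply]; rfl
  -- orthogonal projection onto V
  set q : EuclideanSpace ℂ (Fin n) →L[ℂ] V := V.orthogonalProjectionOnto with hq
  have hqle : ∀ u : EuclideanSpace ℂ (Fin n), ‖(q u : EuclideanSpace ℂ (Fin n))‖ ≤ ‖u‖ := by
    intro u
    calc ‖(q u : EuclideanSpace ℂ (Fin n))‖ = ‖q u‖ := rfl
      _ ≤ ‖q‖ * ‖u‖ := q.le_opNorm u
      _ ≤ 1 * ‖u‖ := by
        apply mul_le_mul_of_nonneg_right _ (norm_nonneg u)
        rw [hq]; exact Submodule.orthogonalProjectionOnto_norm_le V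
      _ = ‖u‖ := one_mul _
  have hqid : ∀ u : EuclideanSpace ℂ (Fin n), ∀ hu : u ∈ V, q u = ⟨u, hu⟩ := by
    intro u hu
    rw [hq]
    exact Submodule.orthogonalProjectionOnto_mem_subspace_eq_self ⟨u, hu⟩
  -- the linear section ψ of the projection to the second coordinate
  set ψₗ : EuclideanSpace ℂ (Fin n) →ₗ[ℂ] ℂ × EuclideanSpace ℂ (Fin n) :=
    ((LinearMap.fst ℂ ℂ (EuclideanSpace ℂ (Fin n))).comp
      (ℓ.comp ((q : EuclideanSpace ℂ (Fin n) →ₗ[ℂ] V)))).prod LinearMap.id with hψₗ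
  set ψ : EuclideanSpace ℂ (Fin n) →L[ℂ] ℂ × EuclideanSpace ℂ (Fin n) :=
    LinearMap.toContinuousLinearMap ψₗ with hψ
  have hψapp : ∀ u : EuclideanSpace ℂ (Fin n), ψ u = ((ℓ (q u)).1, u) := fun u => rfl
  have hψ1le : ∀ u : EuclideanSpace ℂ (Fin n), ‖(ψ u).1‖ ≤ ‖u‖ :=
    fun u => le_trans (hℓ1 (q u)) (hqle u)
  have hψnorm : ∀ u : EuclideanSpace ℂ (Fin n), ‖ψ u‖ = ‖u‖ := by
    intro u
    rw [Prod.norm_def]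
    exact max_eq_right (hψ1le u)
  have hψV : ∀ u : EuclideanSpace ℂ (Fin n), u ∈ V → ψ u ∈ L := by
    intro u hu
    have : ψ u = ℓ (q u) := by
      rw [hψapp]
      refine Prod.ext rfl ?_
      show u = (ℓ (q u)).2
      rw [hℓ2, hqid u hu]
    rw [this]
    exact hℓL _
  have hψL : ∀ y : ℂ × EuclideanSpace ℂ (Fin n), y ∈ L → ψ y.2 = y := by
    intro y hy
    have h2V : y.2 ∈ V := hLmem2 y hy
    have hqy : q y.2 = e ⟨y, hy⟩ := by
      rw [hqid y.2 h2V]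
      apply Subtype.ext
      rw [hecoe]
      rfl
    rw [hψapp, hqy, hℓe]
  have hψ0 : ψ 0 = 0 := map_zero ψ
  -- the function g
  set g : EuclideanSpace ℂ (Fin n) → ℂ := fun u => (α (ψ u)).1 with hg
  have hψball : ∀ u : EuclideanSpace ℂ (Fin n), u ∈ ball (0 : EuclideanSpace ℂ (Fin n)) 1 →
      ψ u ∈ ball (0 : ℂ × EuclideanSpace ℂ (Fin n)) 1 := by
    intro u hu
    rw [mem_ball_zero_iff] at hu ⊢
    rw [hψnorm]; exact hu
  have hgdiff : DifferentiableOn ℂ g (ball (0 : EuclideanSpace ℂ (Fin n)) 1) := by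
    intro u hu
    have hd : DifferentiableAt ℂ g u := by
      have h1 : DifferentiableAt ℂ (fun x : ℂ × EuclideanSpace ℂ (Fin n) => x.1)
          (α (ψ u)) := differentiableAt_fst
      exact h1.comp u
        ((hα.differentiableAt (isOpen_ball.mem_nhds (hψball u hu))).comp u ψ.differentiableAt)
    exact hd.differentiableWithinAt
  have hg0 : g 0 = 0 := by rw [hg]; simp only [hψ0, h0]; rfl
  have hgball : ∀ u ∈ ball (0 : EuclideanSpace ℂ (Fin n)) 1, g u ∈ ball (0 : ℂ) 1 := by
    intro u hu
    have := hαball _ (hψball u hu)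
    rw [mem_ball_zero_iff] at this ⊢
    exact lt_of_le_of_lt (norm_fst_le _) this
  -- KEY STEP: Schwarz rigidity
  have hfix2 : ∀ u : EuclideanSpace ℂ (Fin n), u ∈ V → ‖u‖ < 1 → (α (ψ u)).2 = u := by
    intro u huV hu1
    rcases eq_or_ne u 0 with rfl | hu0
    · rw [hψ0, h0]; rfl
    have hun : 0 < ‖u‖ := norm_pos_iff.2 hu0
    set w : EuclideanSpace ℂ (Fin n) := ((‖u‖⁻¹ : ℝ) : ℂ) • u with hwdef
    have hwV : w ∈ V := V.smul_mem _ huV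
    have hw1 : ‖w‖ = 1 := by
      rw [hwdef, norm_smul, Complex.norm_real, Real.norm_eq_abs,
        abs_of_pos (by positivity), inv_mul_cancel₀ hun.ne']
    have hsm : ∀ t : ℂ, ‖t‖ < 1 → t • w ∈ ball (0 : EuclideanSpace ℂ (Fin n)) 1 := by
      intro t ht
      rw [mem_ball_zero_iff, norm_smul, hw1, mul_one]; exact ht
    set Φ : ℂ → EuclideanSpace ℂ (Fin n) := fun t => (α (ψ (t • w))).2 with hΦdef
    have hΦdiffAt : ∀ t ∈ ball (0:ℂ) 1, DifferentiableAt ℂ Φ t := by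
      intro t ht
      rw [mem_ball_zero_iff] at ht
      have h2 : DifferentiableAt ℂ (fun s : ℂ => ψ (s • w)) t :=
        ψ.differentiableAt.comp t ((differentiableAt_id).smul_const w)
      have h3 : DifferentiableAt ℂ (fun s : ℂ => α (ψ (s • w))) t :=
        (hα.differentiableAt (isOpen_ball.mem_nhds (hψball _ (hsm t ht)))).comp t h2
      exact differentiableAt_snd.comp t h3
    have hΦdiff : DifferentiableOn ℂ Φ (ball (0:ℂ) 1) :=
      fun t ht => (hΦdiffAt t ht).differentiableWithinAt
    have hΦ0 : Φ 0 = 0 := by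
      show (α (ψ ((0:ℂ) • w))).2 = 0
      rw [zero_smul, hψ0, h0]; rfl
    have hΦlt : ∀ t ∈ ball (0:ℂ) 1, ‖Φ t‖ < 1 := by
      intro t ht
      rw [mem_ball_zero_iff] at ht
      have := hαball _ (hψball _ (hsm t ht))
      rw [mem_ball_zero_iff] at this
      exact lt_of_le_of_lt (norm_snd_le _) this
    have hΦder : HasDerivAt Φ w 0 := by
      have h1 : HasDerivAt (fun t : ℂ => α (0 + t • ψ w)) (P (ψ w)) 0 :=
        slice_hasDerivAt hα0
      have hAeq : (fun t : ℂ => α (ψ (t • w))) = fun t : ℂ => α (0 + t • ψ w) := by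
        funext t
        rw [zero_add, ← map_smul]
      have h2 : HasDerivAt (fun t : ℂ => α (ψ (t • w))) (P (ψ w)) 0 := by
        rw [hAeq]; exact h1
      have h3 := (ContinuousLinearMap.snd ℂ ℂ
        (EuclideanSpace ℂ (Fin n))).hasFDerivAt.comp_hasDerivAt 0 h2
      have h4 : (P (ψ w)).2 = w := by rw [hPfix _ (hψV w hwV), hψapp]
      rw [← h4]
      exact h3
    set h : ℂ → ℂ := fun t => (inner ℂ w (Φ t) : ℂ) with hhdef
    have hhdiff : DifferentiableOn ℂ h (ball (0:ℂ) 1) := by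
      intro t ht
      exact ((innerSL ℂ w).differentiableAt.comp t (hΦdiffAt t ht)).differentiableWithinAt
    have hh0 : h 0 = 0 := by
      show (inner ℂ w (Φ 0) : ℂ) = 0
      rw [hΦ0, inner_zero_right]
    have hhmaps : MapsTo h (ball (0:ℂ) 1) (ball (h 0) 1) := by
      intro t ht
      rw [hh0, mem_ball_zero_iff]
      calc ‖(inner ℂ w (Φ t) : ℂ)‖ ≤ ‖w‖ * ‖Φ t‖ := norm_inner_le_norm _ _
        _ = ‖Φ t‖ := by rw [hw1, one_mul]
        _ < 1 := hΦlt t ht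
    have hhder : HasDerivAt h 1 0 := by
      have h5 := (innerSL ℂ w).hasFDerivAt.comp_hasDerivAt 0 hΦder
      have h6 : (innerSL ℂ w) w = 1 := by
        simp [innerSL_apply_apply, inner_self_eq_norm_sq_to_K, hw1]
      rw [h6] at h5
      exact h5
    have heq : ∀ t ∈ ball (0:ℂ) 1, h t = t := by
      have hds : dslope h 0 0 = 1 := by rw [dslope_same]; exact hhder.deriv
      have hnorm : ‖dslope h 0 0‖ = 1/1 := by rw [hds]; norm_num
      have haff := Complex.affine_of_mapsTo_ball_of_exists_norm_dslope_eq_div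
        hhdiff (hhmaps.mono_right ball_subset_closedBall) (mem_ball_self one_pos) hnorm
      intro t ht
      have := haff ht
      simp only [hh0, hds, sub_zero, smul_eq_mul, mul_one, zero_add] at this
      exact this
    have hΦle : ∀ t ∈ ball (0:ℂ) 1, ‖Φ t‖ ≤ ‖t‖ := by
      have hmapsΦ : MapsTo Φ (ball (0:ℂ) 1) (ball (Φ 0) 1) := by
        intro a ha; rw [hΦ0, mem_ball_zero_iff]; exact hΦlt a ha
      intro t ht
      have := Complex.dist_le_div_mul_dist_of_mapsTo_ball hΦdiff (hmapsΦ.mono_right ball_subset_closedBall) ht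
      rw [hΦ0, dist_zero_right, dist_zero_right] at this
      simpa using this
    have hΦeq : ∀ t ∈ ball (0:ℂ) 1, Φ t = t • w := by
      intro t ht
      have h1 : (inner ℂ w (Φ t) : ℂ) = t := heq t ht
      have h2 : ‖Φ t‖ ≤ ‖t‖ := hΦle t ht
      have h3 : (inner ℂ (Φ t) (t • w) : ℂ) = t * (starRingEnd ℂ) t := by
        rw [inner_smul_right, ← inner_conj_symm, h1]
      have h4 : RCLike.re (inner ℂ (Φ t) (t • w) : ℂ) = ‖t‖^2 := by
        rw [h3, Complex.mul_conj, Complex.normSq_eq_norm_sq]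
        norm_cast
      have h5 : ‖t • w‖^2 = ‖t‖^2 := by rw [norm_smul, hw1, mul_one]
      have key : ‖Φ t - t • w‖^2 ≤ 0 := by
        rw [norm_sub_sq (𝕜 := ℂ), h4, h5]
        have h6 : ‖Φ t‖^2 ≤ ‖t‖^2 := by
          apply pow_le_pow_left₀ (norm_nonneg _) h2
        nlinarith
      have h7 : ‖Φ t - t • w‖ = 0 := by
        have h8 : ‖Φ t - t • w‖^2 = 0 := le_antisymm key (sq_nonneg _)
        exact sq_eq_zero_iff.1 h8
      rw [← sub_eq_zero]
      exact norm_eq_zero.1 h7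
    have hu' : ((‖u‖ : ℝ) : ℂ) ∈ ball (0:ℂ) 1 := by
      rw [mem_ball_zero_iff, Complex.norm_real, Real.norm_eq_abs, abs_of_pos hun]
      exact hu1
    have hsw : ((‖u‖ : ℝ) : ℂ) • w = u := by
      rw [hwdef, smul_smul, ← Complex.ofReal_mul, mul_inv_cancel₀ hun.ne',
        Complex.ofReal_one, one_smul]
    have hfin : (α (ψ (((‖u‖ : ℝ) : ℂ) • w))).2 = ((‖u‖ : ℝ) : ℂ) • w := hΦeq _ hu'
    rw [hsw] at hfin
    exact hfin
  -- the retraction onto the graph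
  set j : ℂ × EuclideanSpace ℂ (Fin n) →L[ℂ] EuclideanSpace ℂ (Fin n) :=
    (V.subtypeL.comp q).comp (ContinuousLinearMap.snd ℂ ℂ (EuclideanSpace ℂ (Fin n))) with hj
  have hjapp : ∀ x : ℂ × EuclideanSpace ℂ (Fin n),
      j x = (q x.2 : EuclideanSpace ℂ (Fin n)) := fun x => rfl
  have hjV : ∀ x : ℂ × EuclideanSpace ℂ (Fin n), j x ∈ V := fun x => (q x.2).2
  have hjle : ∀ x : ℂ × EuclideanSpace ℂ (Fin n), ‖j x‖ ≤ ‖x‖ :=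
    fun x => le_trans (hqle x.2) (norm_snd_le x)
  have hjVid : ∀ u ∈ V, ∀ p : ℂ × EuclideanSpace ℂ (Fin n), p.2 = u → j p = u := by
    intro u hu p hp
    rw [hjapp, hp, hqid u hu]
  set τ : ℂ × EuclideanSpace ℂ (Fin n) → ℂ × EuclideanSpace ℂ (Fin n) :=
    fun x => (g (j x), j x) with hτ
  set F : ℂ × EuclideanSpace ℂ (Fin n) → ℂ × EuclideanSpace ℂ (Fin n) :=
    fun x => τ (α x) with hF
  have hjball : ∀ x ∈ ball (0 : ℂ × EuclideanSpace ℂ (Fin n)) 1,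
      j x ∈ ball (0 : EuclideanSpace ℂ (Fin n)) 1 := by
    intro x hx
    rw [mem_ball_zero_iff] at hx ⊢
    exact lt_of_le_of_lt (hjle x) hx
  have hτball : ∀ x ∈ ball (0 : ℂ × EuclideanSpace ℂ (Fin n)) 1,
      τ x ∈ ball (0 : ℂ × EuclideanSpace ℂ (Fin n)) 1 := by
    intro x hx
    have h1 := hgball _ (hjball x hx)
    rw [mem_ball_zero_iff] at h1 ⊢
    rw [hτ]
    rw [Prod.norm_def]
    apply max_lt h1
    rw [← mem_ball_zero_iff]
    exact hjball x hx
  -- α fixes the graph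
  have hgraph : ∀ u ∈ V, ‖u‖ < 1 → α (ψ u) = (g u, u) := by
    intro u hu h1
    exact Prod.ext rfl (hfix2 u hu h1)
  have hMfix : ∀ u ∈ V, ‖u‖ < 1 → α (g u, u) = (g u, u) := by
    intro u hu h1
    rw [← hgraph u hu h1]
    exact hretr _ (hψball u (mem_ball_zero_iff.2 h1))
  have hτfixM : ∀ u ∈ V, ‖u‖ < 1 → τ (g u, u) = (g u, u) := by
    intro u hu h1
    have hju : j (g u, u) = u := hjVid u hu _ rfl
    rw [hτ]
    show (g (j (g u, u)), j (g u, u)) = (g u, u)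
    rw [hju]
  have hF0 : F 0 = 0 := by
    rw [hF]
    show τ (α 0) = 0
    rw [h0, hτ]
    show (g (j 0), j 0) = 0
    rw [map_zero j, hg0]
    rfl
  have hFform : ∀ x, F x = (g (j (α x)), j (α x)) := fun x => rfl
  have hFmem : ∀ x ∈ ball (0 : ℂ × EuclideanSpace ℂ (Fin n)) 1,
      j (α x) ∈ V ∧ ‖j (α x)‖ < 1 := by
    intro x hx
    exact ⟨hjV _, mem_ball_zero_iff.1 (hjball _ (hαball x hx))⟩
  have hαF : ∀ x ∈ ball (0 : ℂ × EuclideanSpace ℂ (Fin n)) 1, α (F x) = F x := by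
    intro x hx
    rw [hFform]
    exact hMfix _ (hFmem x hx).1 (hFmem x hx).2
  have hFα : ∀ x ∈ ball (0 : ℂ × EuclideanSpace ℂ (Fin n)) 1, F (α x) = F x := by
    intro x hx
    rw [hF]
    show τ (α (α x)) = τ (α x)
    rw [hretr x hx]
  have hFball : ∀ x ∈ ball (0 : ℂ × EuclideanSpace ℂ (Fin n)) 1,
      F x ∈ ball (0 : ℂ × EuclideanSpace ℂ (Fin n)) 1 := by
    intro x hx
    exact hτball _ (hαball x hx)
  have hFF : ∀ x ∈ ball (0 : ℂ × EuclideanSpace ℂ (Fin n)) 1, F (F x) = F x := by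
    intro x hx
    have h1 : F (F x) = τ (α (F x)) := rfl
    rw [h1, hαF x hx, hFform]
    exact hτfixM _ (hFmem x hx).1 (hFmem x hx).2
  -- differentiability of F
  have hFdiffAt : ∀ x ∈ ball (0 : ℂ × EuclideanSpace ℂ (Fin n)) 1,
      DifferentiableAt ℂ F x := by
    intro x hx
    have hαx : DifferentiableAt ℂ α x := hα.differentiableAt (isOpen_ball.mem_nhds hx)
    have hjα : DifferentiableAt ℂ (fun y => j (α y)) x := (j.differentiableAt).comp x hαx
    have hgjα : DifferentiableAt ℂ (fun y => g (j (α y))) x := by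
      have hgd : DifferentiableAt ℂ g (j (α x)) := by
        have := hgdiff.differentiableAt
          (isOpen_ball.mem_nhds (hjball _ (hαball x hx)))
        exact this
      exact DifferentiableAt.comp (g := g) (f := fun y => j (α y)) x hgd hjα
    exact hgjα.prodMk hjα
  have hFdiff : DifferentiableOn ℂ F (ball (0 : ℂ × EuclideanSpace ℂ (Fin n)) 1) :=
    fun x hx => (hFdiffAt x hx).differentiableWithinAt
  -- derivative of F at 0 equals P
  have hFder : fderiv ℂ F 0 = P := by
    have hαψ : HasFDerivAt (fun u => α (ψ u)) (P.comp ψ) 0 := by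
      have h1 : HasFDerivAt α P (ψ 0) := by rw [hψ0]; exact hα0.hasFDerivAt
      exact h1.comp 0 ψ.hasFDerivAt
    set G1 : EuclideanSpace ℂ (Fin n) →L[ℂ] ℂ :=
      (ContinuousLinearMap.fst ℂ ℂ (EuclideanSpace ℂ (Fin n))).comp (P.comp ψ) with hG1
    have hgder : HasFDerivAt g G1 0 :=
      (ContinuousLinearMap.fst ℂ ℂ (EuclideanSpace ℂ (Fin n))).hasFDerivAt.comp 0 hαψ
    set T : (ℂ × EuclideanSpace ℂ (Fin n)) →L[ℂ] (ℂ × EuclideanSpace ℂ (Fin n)) :=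
      (G1.comp j).prod j with hT
    have hτder : HasFDerivAt τ T 0 := by
      have hgj : HasFDerivAt (fun x => g (j x)) (G1.comp j) 0 := by
        have h2 : HasFDerivAt g G1 (j 0) := by rw [map_zero j]; exact hgder
        exact h2.comp 0 j.hasFDerivAt
      exact hgj.prodMk j.hasFDerivAt
    have hFder' : HasFDerivAt F (T.comp P) 0 := by
      have h3 : HasFDerivAt τ T (α 0) := by rw [h0]; exact hτder
      exact h3.comp 0 hα0.hasFDerivAt
    have hTP : T.comp P = P := by
      apply ContinuousLinearMap.ext
      intro x
      have hyL : P x ∈ L := by rw [hL]; exact ⟨x, rfl⟩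
      have hj2 : j (P x) = (P x).2 := hjVid _ (hLmem2 _ hyL) _ rfl
      show ((G1 (j (P x))), j (P x)) = P x
      rw [hj2]
      have hG1y : G1 ((P x).2) = (P x).1 := by
        show (P (ψ ((P x).2))).1 = (P x).1
        rw [hψL _ hyL, hPfix _ hyL]
      rw [hG1y]
    rw [← hTP]
    exact hFder'.fderiv
  -- quantitative local equality and globalization
  have hαM : ∀ x ∈ ball (0 : ℂ × EuclideanSpace ℂ (Fin n)) 1, ‖α x‖ ≤ 1 :=
    fun x hx => (mem_ball_zero_iff.1 (hαball x hx)).le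
  have hFM : ∀ x ∈ ball (0 : ℂ × EuclideanSpace ℂ (Fin n)) 1, ‖F x‖ ≤ 1 :=
    fun x hx => (mem_ball_zero_iff.1 (hFball x hx)).le
  have hloc : ∀ x : ℂ × EuclideanSpace ℂ (Fin n), ‖x‖ < 1/256 → α x = F x :=
    fun x hx => loc_eq hα hFdiff hαM hFM h0 hF0 hP.symm hFder hretr hαF hFα hFF hx
  have hglob : ∀ x ∈ ball (0 : ℂ × EuclideanSpace ℂ (Fin n)) 1, α x = F x :=
    fun x hx => glob_eq hα hFdiff hloc hx
  -- final assembly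
  refine ⟨V, g, hfinrank, hgdiff.mono inter_subset_right, ?_, hg0, ?_⟩
  · intro u hu
    exact hgball u hu.2
  · rw [hG]
    ext p
    constructor
    · rintro ⟨x, hx, rfl⟩
      refine ⟨j (α x), ⟨(hFmem x hx).1, mem_ball_zero_iff.2 (hFmem x hx).2⟩, ?_⟩
      show (g (j (α x)), j (α x)) = α x
      rw [← hFform, ← hglob x hx]
    · rintro ⟨u, ⟨huV, hub⟩, rfl⟩
      have hu1 : ‖u‖ < 1 := mem_ball_zero_iff.1 hub
      exact ⟨ψ u, hψball u hub, hgraph u huV hu1⟩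
end
end

section
/- Let n ≥ 1, G = Δ × 𝔹ⁿ, and let α : G → G be a holomorphic retraction with α(0) = 0 whose image is Z = α(G). Let L be the range of the derivative Dα(0) : ℂ^{1+n} → ℂ^{1+n}. If L ∩ ∂G intersects both ∂Δ × 𝔹ⁿ and Δ × ∂𝔹ⁿ, then dim_ℂ L ≥ 2, α is the identity mapping on L ∩ G, and Z = L ∩ G, i.e. Z is the intersection of a complex linear subspace of dimension at least two with G. -/
open Metric Set Complex

noncomputable section

set_option linter.unusedSectionVars false
set_option maxHeartbeats 1000000

namespace Stmt4Aux

variable {F : Type*} [NormedAddCommGroup F] [NormedSpace ℂ F] [CompleteSpace F]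

lemma dslope_bound {f : ℂ → F} {r M : ℝ} (hr : 0 < r)
    (hd : DifferentiableOn ℂ f (ball 0 r)) (hb : ∀ z ∈ ball (0:ℂ) r, ‖f z‖ ≤ M)
    (h0 : f 0 = 0) {z : ℂ} (hz : z ∈ ball (0:ℂ) r) : ‖dslope f 0 z‖ ≤ M / r := by
  have hM : 0 ≤ M := le_trans (norm_nonneg (f 0)) (hb 0 (mem_ball_self hr))
  have key : ∀ ε : ℝ, 0 < ε → ‖dslope f 0 z‖ ≤ (M + ε) / r := by
    intro ε hε
    refine norm_dslope_le_div_of_mapsTo_ball hd ?_ hz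
    intro w hw
    rw [mem_closedBall, dist_eq_norm, h0, sub_zero]
    exact le_trans (hb w hw) (by linarith)
  by_contra hcon
  push_neg at hcon
  have hε : 0 < (‖dslope f 0 z‖ * r - M) / 2 := by
    rw [div_lt_iff₀ hr] at hcon
    linarith
  have h2 := key _ hε
  rw [div_lt_iff₀ hr] at hcon
  rw [le_div_iff₀ hr] at h2
  linarith

lemma schwarz_norm_le {f : ℂ → F} {r M : ℝ} (hr : 0 < r)
    (hd : DifferentiableOn ℂ f (ball 0 r)) (hb : ∀ z ∈ ball (0:ℂ) r, ‖f z‖ ≤ M)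
    (h0 : f 0 = 0) {z : ℂ} (hz : z ∈ ball (0:ℂ) r) : ‖f z‖ ≤ M / r * ‖z‖ := by
  have h := dslope_bound hr hd hb h0 hz
  have h2 : (z - 0) • dslope f 0 z = f z - f 0 := sub_smul_dslope f 0 z
  rw [h0, sub_zero, sub_zero] at h2
  calc ‖f z‖ = ‖z • dslope f 0 z‖ := by rw [h2]
    _ = ‖z‖ * ‖dslope f 0 z‖ := by rw [norm_smul]
    _ ≤ ‖z‖ * (M / r) := mul_le_mul_of_nonneg_left h (norm_nonneg _)
    _ = M / r * ‖z‖ := mul_comm _ _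

lemma schwarz_quadratic {f : ℂ → F} {M : ℝ}
    (hd : DifferentiableOn ℂ f (ball 0 1)) (hb : ∀ z ∈ ball (0:ℂ) 1, ‖f z‖ ≤ M)
    (h0 : f 0 = 0) (h1 : deriv f 0 = 0) {z : ℂ} (hz : z ∈ ball (0:ℂ) 1) :
    ‖f z‖ ≤ M * (‖z‖ * ‖z‖) := by
  set g := dslope f 0 with hg
  have hgd : DifferentiableOn ℂ g (ball 0 1) :=
    (differentiableOn_dslope (isOpen_ball.mem_nhds (mem_ball_self one_pos))).mpr hd
  have hgb : ∀ w ∈ ball (0:ℂ) 1, ‖g w‖ ≤ M := by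
    intro w hw
    simpa using dslope_bound one_pos hd hb h0 hw
  have hg0 : g 0 = 0 := by rw [hg, dslope_same, h1]
  have h2 : ‖g z‖ ≤ M / 1 * ‖z‖ := schwarz_norm_le one_pos hgd hgb hg0 hz
  have h3 : (z - 0) • g z = f z - f 0 := sub_smul_dslope f 0 z
  rw [h0, sub_zero, sub_zero] at h3
  calc ‖f z‖ = ‖z • g z‖ := by rw [h3]
    _ = ‖z‖ * ‖g z‖ := norm_smul _ _
    _ ≤ ‖z‖ * (M / 1 * ‖z‖) := mul_le_mul_of_nonneg_left h2 (norm_nonneg _)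
    _ = M * (‖z‖ * ‖z‖) := by ring

lemma schwarz_eq {φ : ℂ → ℂ} (hd : DifferentiableOn ℂ φ (ball 0 1))
    (hb : ∀ z ∈ ball (0:ℂ) 1, ‖φ z‖ < 1) (h0 : φ 0 = 0) (h1 : deriv φ 0 = 1)
    {z : ℂ} (hz : z ∈ ball (0:ℂ) 1) : φ z = z := by
  have hmaps : MapsTo φ (ball 0 1) (ball (φ 0) 1) := by
    intro w hw
    rw [h0, mem_ball, dist_eq_norm, sub_zero]
    exact hb w hw
  have heq : ‖dslope φ 0 0‖ = 1 / 1 := by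
    rw [dslope_same, h1]; norm_num
  have := affine_of_mapsTo_ball_of_exists_norm_dslope_eq_div hd (hmaps.mono_right ball_subset_closedBall)
    (mem_ball_self one_pos) heq hz
  simpa [h0, dslope_same, h1] using this

/-- real scalar on a complex module agrees with the complex coercion -/
lemma real_smul_eq {X : Type*} [AddCommGroup X] [Module ℝ X] [Module ℂ X]
    [IsScalarTower ℝ ℂ X] (s : ℝ) (v : X) : (s : ℂ) • v = (s • v : X) := by
  rw [← smul_one_smul ℂ s v, Complex.real_smul, mul_one]


section helpers

variable {X : Type*} [NormedAddCommGroup X] [NormedSpace ℂ X]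
variable {F' : Type*} [NormedAddCommGroup F'] [NormedSpace ℂ F']

lemma smul_mem_unit_ball {v : X} (hv : ‖v‖ ≤ 1) {z : ℂ} (hz : z ∈ ball (0:ℂ) 1) :
    z • v ∈ ball (0:X) 1 := by
  rw [mem_ball_zero_iff] at *
  calc ‖z • v‖ = ‖z‖ * ‖v‖ := norm_smul _ _
    _ ≤ ‖z‖ * 1 := mul_le_mul_of_nonneg_left hv (norm_nonneg _)
    _ < 1 := by rwa [mul_one]

lemma slice_diff {α : X → F'} (hα : DifferentiableOn ℂ α (ball 0 1)) {v : X} (hv : ‖v‖ ≤ 1) :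
    DifferentiableOn ℂ (fun z : ℂ => α (z • v)) (ball 0 1) :=
  hα.comp ((differentiable_id.smul_const v).differentiableOn)
    (fun _ hz => smul_mem_unit_ball hv hz)

lemma slice_deriv {α : X → F'} {P : X →L[ℂ] F'} (hP : HasFDerivAt α P 0) (v : X) :
    HasDerivAt (fun z : ℂ => α (z • v)) (P v) 0 := by
  have h1 : HasDerivAt (fun z : ℂ => z • v) v 0 := by
    simpa using (hasDerivAt_id (0:ℂ)).smul_const v
  have h2 : HasFDerivAt α P ((0:ℂ) • v) := by rwa [zero_smul]
  exact h2.comp_hasDerivAt 0 h1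

lemma line_convex (a v : X) : Convex ℝ {z : ℂ | ‖a + z • v‖ < 1} := by
  have h : {z : ℂ | ‖a + z • v‖ < 1} =
      ((LinearMap.toSpanSingleton ℂ X v).restrictScalars ℝ) ⁻¹' (ball (-a) 1) := by
    ext z
    simp only [mem_setOf_eq, mem_preimage, mem_ball, dist_eq_norm, LinearMap.coe_restrictScalars,
      LinearMap.toSpanSingleton_apply, sub_neg_eq_add]
    rw [add_comm]
  rw [h]
  exact (convex_ball (-a) 1).linear_preimage _

end helpers

end Stmt4Aux

open Stmt4Aux

theorem stmt_4 (n : ℕ) (hn : 1 ≤ n)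
    (α : ℂ × EuclideanSpace ℂ (Fin n) → ℂ × EuclideanSpace ℂ (Fin n))
    (hα : DifferentiableOn ℂ α (diskBall n))
    (hmaps : MapsTo α (diskBall n) (diskBall n))
    (hretr : ∀ x ∈ diskBall n, α (α x) = α x)
    (h0 : α 0 = 0)
    (L : Submodule ℂ (ℂ × EuclideanSpace ℂ (Fin n)))
    (hL : L = LinearMap.range
      ((fderiv ℂ α 0 : (ℂ × EuclideanSpace ℂ (Fin n)) →L[ℂ]
        (ℂ × EuclideanSpace ℂ (Fin n))) :
        (ℂ × EuclideanSpace ℂ (Fin n)) →ₗ[ℂ] (ℂ × EuclideanSpace ℂ (Fin n))))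
    (hbd1 : ((L : Set (ℂ × EuclideanSpace ℂ (Fin n))) ∩ frontier (diskBall n) ∩
      ((sphere (0 : ℂ) 1) ×ˢ (ball (0 : EuclideanSpace ℂ (Fin n)) 1))).Nonempty)
    (hbd2 : ((L : Set (ℂ × EuclideanSpace ℂ (Fin n))) ∩ frontier (diskBall n) ∩
      ((ball (0 : ℂ) 1) ×ˢ (sphere (0 : EuclideanSpace ℂ (Fin n)) 1))).Nonempty) :
    2 ≤ Module.finrank ℂ L ∧
    (∀ x ∈ (L : Set (ℂ × EuclideanSpace ℂ (Fin n))) ∩ diskBall n, α x = x) ∧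
    α '' diskBall n = (L : Set (ℂ × EuclideanSpace ℂ (Fin n))) ∩ diskBall n := by
  let E := EuclideanSpace ℂ (Fin n)
  -- `G` is the unit ball of the product (sup-norm) space
  have hGball : diskBall n = ball (0 : ℂ × E) 1 := by
    rw [diskBall, ball_prod_same]; rfl
  have h0G : (0 : ℂ × E) ∈ diskBall n := by
    rw [hGball]; exact mem_ball_self one_pos
  have hGopen : IsOpen (diskBall n) := by rw [hGball]; exact isOpen_ball
  -- the derivative at the origin
  set P : (ℂ × E) →L[ℂ] (ℂ × E) := fderiv ℂ α 0 with hP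
  have hdiff0 : DifferentiableAt ℂ α 0 := hα.differentiableAt (hGopen.mem_nhds h0G)
  have hPα : HasFDerivAt α P 0 := hdiff0.hasFDerivAt
  -- P is a projection
  have hPP : ∀ v, P (P v) = P v := by
    have heq : (fun x => α (α x)) =ᶠ[nhds (0 : ℂ × E)] α :=
      Filter.eventuallyEq_of_mem (hGopen.mem_nhds h0G) hretr
    have hcomp : HasFDerivAt (fun x => α (α x)) (P.comp P) 0 := by
      have h1 : HasFDerivAt α P (α 0) := by rw [h0]; exact hPα
      exact h1.comp 0 hPα
    have : HasFDerivAt α (P.comp P) 0 := hcomp.congr_of_eventuallyEq heq.symm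
    intro v
    have h2 : P.comp P = P := this.unique hPα
    calc P (P v) = (P.comp P) v := rfl
      _ = P v := by rw [h2]
  have hPL : ∀ v ∈ (L : Set (ℂ × E)), P v = v := by
    intro v hv
    rw [hL] at hv
    obtain ⟨u, rfl⟩ := hv
    exact hPP u
  have hmemL : ∀ v, P v ∈ L := by
    intro v; rw [hL]; exact ⟨v, rfl⟩
  have hαball : DifferentiableOn ℂ α (ball (0:ℂ×E) 1) := by rwa [hGball] at hα
  have hmapsball : ∀ x ∈ ball (0:ℂ×E) 1, ‖α x‖ < 1 := by
    intro x hx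
    have := hmaps (show x ∈ diskBall n by rwa [hGball])
    rwa [hGball, mem_ball_zero_iff] at this
  -- Schwarz: α decreases the norm
  have hαnorm : ∀ x ∈ ball (0 : ℂ × E) 1, ‖α x‖ ≤ ‖x‖ := by
    intro x hx
    rcases eq_or_ne x 0 with rfl | hx0
    · simp [h0]
    have hu : 0 < ‖x‖ := norm_pos_iff.2 hx0
    set c : ℂ := ((‖x‖ : ℝ) : ℂ) with hc
    have hcnorm : ‖c‖ = ‖x‖ := by rw [hc, Complex.norm_real, Real.norm_eq_abs, abs_of_pos hu]
    have hc0 : c ≠ 0 := by simp [hc, hu.ne']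
    set v : ℂ × E := c⁻¹ • x with hv
    have hvnorm : ‖v‖ = 1 := by rw [hv, norm_smul, norm_inv, hcnorm, inv_mul_cancel₀ hu.ne']
    have hd := slice_diff hαball hvnorm.le
    have hb : ∀ z ∈ ball (0:ℂ) 1, ‖α (z • v)‖ ≤ 1 :=
      fun z hz => (hmapsball _ (smul_mem_unit_ball hvnorm.le hz)).le
    have hf0 : α ((0:ℂ) • v) = 0 := by rw [zero_smul, h0]
    have hcball : c ∈ ball (0:ℂ) 1 := by
      rw [mem_ball_zero_iff, hcnorm]; exact mem_ball_zero_iff.1 hx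
    have key := schwarz_norm_le one_pos hd hb hf0 hcball
    calc ‖α x‖ = ‖α (c • v)‖ := by rw [hv, smul_inv_smul₀ hc0]
      _ ≤ 1 / 1 * ‖c‖ := key
      _ = ‖x‖ := by rw [hcnorm]; ring
  -- pointwise fixing of the first coordinate in region 1
  have hR1 : ∀ x ∈ (L : Set (ℂ × E)), ‖x‖ < 1 → ‖x.2‖ < ‖x.1‖ → (α x).1 = x.1 := by
    intro x hxL hxlt hx21
    have hx10 : x.1 ≠ 0 := by
      intro h
      rw [h, norm_zero] at hx21
      exact absurd hx21 (not_lt.2 (norm_nonneg _))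
    have hnorm : ‖x‖ = ‖x.1‖ := by rw [Prod.norm_def]; exact max_eq_left hx21.le
    have hu : 0 < ‖x‖ := by rw [hnorm]; exact norm_pos_iff.2 hx10
    set c : ℂ := ((‖x‖ : ℝ) : ℂ) with hc
    have hcnorm : ‖c‖ = ‖x‖ := by rw [hc, Complex.norm_real, Real.norm_eq_abs, abs_of_pos hu]
    have hc0 : c ≠ 0 := by simp [hc, hu.ne']
    set v : ℂ × E := c⁻¹ • x with hv
    have hvL : v ∈ L := L.smul_mem _ hxL
    have hvnorm : ‖v‖ = 1 := by rw [hv, norm_smul, norm_inv, hcnorm, inv_mul_cancel₀ hu.ne']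
    set a : ℂ := (starRingEnd ℂ) x.1 / c with ha
    have hanorm : ‖a‖ = 1 := by
      rw [ha, norm_div, RCLike.norm_conj, hcnorm, hnorm, div_self (norm_pos_iff.2 hx10).ne']
    set φ : ℂ → ℂ := fun z => a * (α (z • v)).1 with hφ
    have hd : DifferentiableOn ℂ φ (ball 0 1) :=
      ((slice_diff hαball hvnorm.le).fst).const_mul a
    have hb : ∀ z ∈ ball (0:ℂ) 1, ‖φ z‖ < 1 := by
      intro z hz
      have h1 : ‖φ z‖ = ‖(α (z • v)).1‖ := by rw [hφ, norm_mul, hanorm, one_mul]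
      rw [h1]
      exact lt_of_le_of_lt (norm_fst_le _) (hmapsball _ (smul_mem_unit_ball hvnorm.le hz))
    have hφ0 : φ 0 = 0 := by simp [hφ, h0]
    have hsq : c * c = x.1 * (starRingEnd ℂ) x.1 := by
      rw [Complex.mul_conj, hc, hnorm, Complex.normSq_eq_norm_sq]
      push_cast
      ring
    have hder : deriv φ 0 = 1 := by
      have h1 := slice_deriv hPα v
      have h2 := (ContinuousLinearMap.fst ℂ ℂ E).hasFDerivAt.comp_hasDerivAt 0 h1
      have h3 : HasDerivAt φ (a * (P v).1) 0 := h2.const_mul a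
      rw [h3.deriv, hPL v hvL, hv]
      show a * (c⁻¹ • x).1 = 1
      rw [Prod.smul_fst, smul_eq_mul, ha]
      field_simp
      rw [mul_comm ((starRingEnd ℂ) x.1) x.1, ← hsq]
      ring
    have hcball : c ∈ ball (0:ℂ) 1 := by rwa [mem_ball_zero_iff, hcnorm]
    have key := schwarz_eq hd hb hφ0 hder hcball
    have hcv : c • v = x := by rw [hv, smul_inv_smul₀ hc0]
    have key2 : a * (α x).1 = c := by rw [← hcv]; exact key
    have hconj : (starRingEnd ℂ) x.1 ≠ 0 := by simpa using hx10
    rw [ha] at key2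
    field_simp at key2
    rw [pow_two, hsq] at key2
    exact mul_left_cancel₀ hconj (key2.trans (mul_comm _ _))
  have hR2 : ∀ x ∈ (L : Set (ℂ × E)), ‖x‖ < 1 → ‖x.1‖ < ‖x.2‖ → (α x).2 = x.2 := by
    intro x hxL hxlt hx12
    have hx20 : x.2 ≠ 0 := by
      intro h
      rw [h, norm_zero] at hx12
      exact absurd hx12 (not_lt.2 (norm_nonneg _))
    have hnorm : ‖x‖ = ‖x.2‖ := by rw [Prod.norm_def]; exact max_eq_right hx12.le
    have hu : 0 < ‖x‖ := by rw [hnorm]; exact norm_pos_iff.2 hx20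
    set c : ℂ := ((‖x‖ : ℝ) : ℂ) with hc
    have hcnorm : ‖c‖ = ‖x‖ := by rw [hc, Complex.norm_real, Real.norm_eq_abs, abs_of_pos hu]
    have hc0 : c ≠ 0 := by simp [hc, hu.ne']
    set v : ℂ × E := c⁻¹ • x with hv
    have hvL : v ∈ L := L.smul_mem _ hxL
    have hvnorm : ‖v‖ = 1 := by rw [hv, norm_smul, norm_inv, hcnorm, inv_mul_cancel₀ hu.ne']
    set T : (ℂ × E) →L[ℂ] ℂ := (innerSL ℂ x.2).comp (ContinuousLinearMap.snd ℂ ℂ E) with hT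
    set φ : ℂ → ℂ := fun z => c⁻¹ * T (α (z • v)) with hφ
    have hd : DifferentiableOn ℂ φ (ball 0 1) :=
      (T.differentiable.comp_differentiableOn (slice_diff hαball hvnorm.le)).const_mul c⁻¹
    have hb : ∀ z ∈ ball (0:ℂ) 1, ‖φ z‖ < 1 := by
      intro z hz
      have h2 : ‖T (α (z • v))‖ ≤ ‖x.2‖ * ‖(α (z • v)).2‖ := by
        have h2' : T (α (z • v)) = (inner ℂ x.2 ((α (z • v)).2) : ℂ) := rfl
        rw [h2']
        exact norm_inner_le_norm _ _
      have h3 : ‖(α (z • v)).2‖ ≤ ‖α (z • v)‖ := norm_snd_le _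
      have h4 : ‖α (z • v)‖ < 1 := hmapsball _ (smul_mem_unit_ball hvnorm.le hz)
      have h5 : ‖φ z‖ ≤ ‖x.2‖⁻¹ * (‖x.2‖ * ‖α (z • v)‖) := by
        rw [hφ, norm_mul, norm_inv, hcnorm, hnorm]
        have := le_trans h2 (mul_le_mul_of_nonneg_left h3 (norm_nonneg x.2))
        exact mul_le_mul_of_nonneg_left this (by positivity)
      rw [← mul_assoc, inv_mul_cancel₀ (norm_pos_iff.2 hx20).ne', one_mul] at h5
      exact lt_of_le_of_lt h5 h4
    have hφ0 : φ 0 = 0 := by simp [hφ, hT, h0]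
    have hb2 : ∀ z ∈ ball (0:ℂ) 1, ‖φ z‖ < 1 := hb
    have hxx : (inner ℂ x.2 x.2 : ℂ) = c * c := by
      rw [inner_self_eq_norm_sq_to_K]
      show ((‖x.2‖ : ℝ) : ℂ) ^ 2 = c * c
      rw [← hnorm, ← hc]
      ring
    have hder : deriv φ 0 = 1 := by
      have h1 := slice_deriv hPα v
      have h2 := T.hasFDerivAt.comp_hasDerivAt 0 h1
      have h3 : HasDerivAt φ (c⁻¹ * T (P v)) 0 := h2.const_mul c⁻¹
      rw [h3.deriv, hPL v hvL]
      have hTv : T v = (inner ℂ x.2 v.2 : ℂ) := rfl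
      have hv2 : v.2 = c⁻¹ • x.2 := rfl
      rw [hTv, hv2, inner_smul_right, hxx]
      field_simp
    have hcball : c ∈ ball (0:ℂ) 1 := by rwa [mem_ball_zero_iff, hcnorm]
    have key := schwarz_eq hd hb2 hφ0 hder hcball
    have hcv : c • v = x := by rw [hv, smul_inv_smul₀ hc0]
    have key2 : c⁻¹ * T (α x) = c := by rw [← hcv]; exact key
    have hin : (inner ℂ x.2 ((α x).2) : ℂ) = c * c := by
      have hT2 : T (α x) = (inner ℂ x.2 ((α x).2) : ℂ) := rfl
      rw [hT2] at key2
      field_simp at key2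
      linear_combination key2
    have hy2 : ‖(α x).2‖ ≤ ‖x‖ :=
      le_trans (norm_snd_le _) (hαnorm x (mem_ball_zero_iff.2 hxlt))
    have hre : Complex.re (inner ℂ x.2 ((α x).2) : ℂ) = ‖x‖ * ‖x‖ := by
      rw [hin, hc, ← Complex.ofReal_mul]
      simp
    have hfin : ‖(α x).2 - x.2‖ ^ 2 ≤ 0 := by
      have hexp := norm_sub_sq (𝕜 := ℂ) ((α x).2) x.2
      rw [inner_re_symm] at hexp
      have hre2 : RCLike.re (inner ℂ x.2 ((α x).2) : ℂ) = ‖x‖ * ‖x‖ := hre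
      rw [hre2, ← hnorm] at hexp
      rw [hexp]
      have h8 : (0:ℝ) ≤ ‖(α x).2‖ := norm_nonneg _
      have h9 : ‖(α x).2‖ ^ 2 ≤ ‖x‖ ^ 2 := by
        have := mul_self_le_mul_self h8 hy2
        simpa [pow_two] using this
      have hBB : ‖x‖ * ‖x‖ = ‖x‖ ^ 2 := (pow_two _).symm
      linarith
    have hzero : (α x).2 - x.2 = 0 := by
      have h7 : ‖(α x).2 - x.2‖ ^ 2 = 0 := le_antisymm hfin (sq_nonneg _)
      exact norm_eq_zero.1 (sq_eq_zero_iff.1 h7)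
    exact sub_eq_zero.1 hzero
  -- boundary points
  obtain ⟨p, ⟨hpL, -⟩, hps⟩ := hbd1
  obtain ⟨q, ⟨hqL, -⟩, hqs⟩ := hbd2
  have hp1 : ‖p.1‖ = 1 := by simpa using (mem_sphere_zero_iff_norm).1 hps.1
  have hp2 : ‖p.2‖ < 1 := by simpa using mem_ball_zero_iff.1 hps.2
  have hq1 : ‖q.1‖ < 1 := by simpa using mem_ball_zero_iff.1 hqs.1
  have hq2 : ‖q.2‖ = 1 := by simpa using (mem_sphere_zero_iff_norm).1 hqs.2
  -- Step A : α is the identity on L ∩ G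
  have hA : ∀ x ∈ (L : Set (ℂ × E)), ‖x‖ < 1 → α x = x := by
    -- base points
    have hp0 : p ≠ 0 := by intro h; rw [h] at hp1; simpa using hp1
    set a : ℂ × E := (2:ℂ)⁻¹ • p with hadef
    have haL : a ∈ L := L.smul_mem _ hpL
    have ha1 : ‖a.1‖ = 2⁻¹ := by
      have : a.1 = (2:ℂ)⁻¹ * p.1 := rfl
      rw [this, norm_mul, hp1, mul_one]
      norm_num
    have ha2 : ‖a.2‖ < 2⁻¹ := by
      have h1 : a.2 = (2:ℂ)⁻¹ • p.2 := rfl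
      rw [h1, norm_smul]
      have : ‖(2:ℂ)⁻¹‖ = 2⁻¹ := by norm_num
      rw [this]
      calc 2⁻¹ * ‖p.2‖ < 2⁻¹ * 1 := by
            exact mul_lt_mul_of_pos_left hp2 (by norm_num)
        _ = 2⁻¹ := mul_one _
    have hanorm : ‖a‖ < 1 := by
      rw [Prod.norm_def, ha1]
      have := ha2.le
      rw [max_lt_iff]
      constructor <;> linarith
    set b : ℂ × E := (2:ℂ)⁻¹ • q with hbdef
    have hbL : b ∈ L := L.smul_mem _ hqL
    have hb2 : ‖b.2‖ = 2⁻¹ := by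
      have h1 : b.2 = (2:ℂ)⁻¹ • q.2 := rfl
      rw [h1, norm_smul, hq2]
      norm_num
    have hb1 : ‖b.1‖ < 2⁻¹ := by
      have h1 : b.1 = (2:ℂ)⁻¹ * q.1 := rfl
      rw [h1, norm_mul]
      have h2 : ‖(2:ℂ)⁻¹‖ = 2⁻¹ := by norm_num
      rw [h2]
      calc 2⁻¹ * ‖q.1‖ < 2⁻¹ * 1 := mul_lt_mul_of_pos_left hq1 (by norm_num)
        _ = 2⁻¹ := mul_one _
    have hbnorm : ‖b‖ < 1 := by
      rw [Prod.norm_def, hb2]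
      rw [max_lt_iff]
      have := hb1.le
      constructor <;> linarith
    -- first coordinate, by analytic continuation along a line from `a`
    have hc1 : ∀ x ∈ (L : Set (ℂ × E)), ‖x‖ < 1 → (α x).1 = x.1 := by
      intro x hxL hx
      set v : ℂ × E := x - a with hvdef
      set ω : ℂ → ℂ × E := fun z => a + z • v with hω
      have hωL : ∀ z : ℂ, ω z ∈ L := fun z =>
        L.add_mem haL (L.smul_mem _ (L.sub_mem hxL haL))
      set Ω : Set ℂ := {z : ℂ | ‖a + z • v‖ < 1} with hΩ
      have hΩo : IsOpen Ω := by
        have hcont : Continuous fun z : ℂ => ‖a + z • v‖ :=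
          (continuous_const.add (continuous_id.smul continuous_const)).norm
        exact isOpen_lt hcont continuous_const
      have hΩc : Convex ℝ Ω := line_convex a v
      have h0Ω : (0:ℂ) ∈ Ω := by
        simp only [hΩ, mem_setOf_eq, zero_smul, add_zero]
        exact hanorm
      have hline1 : a + (1:ℂ) • v = x := by rw [one_smul, hvdef]; abel
      have h1Ω : (1:ℂ) ∈ Ω := by
        simp only [hΩ, mem_setOf_eq, hline1]
        exact hx
      set g : ℂ → ℂ := fun z => (α (ω z)).1 - (ω z).1 with hg
      have hωdiff : Differentiable ℂ ω :=
        (differentiable_const _).add (differentiable_id.smul_const v)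
      have hωmaps : ∀ z ∈ Ω, ω z ∈ ball (0 : ℂ × E) 1 := by
        intro z hz
        rw [mem_ball_zero_iff]
        exact hz
      have hgd : DifferentiableOn ℂ g Ω := by
        apply DifferentiableOn.sub
        · exact ((hαball.comp hωdiff.differentiableOn hωmaps).fst)
        · exact (hωdiff.differentiableOn.fst)
      have hgz : g =ᶠ[nhds (0:ℂ)] 0 := by
        have hWo : IsOpen {z : ℂ | ‖(ω z).2‖ < ‖(ω z).1‖} := by
          have hcont1 : Continuous fun z : ℂ => ‖(ω z).2‖ :=
            ((hωdiff.continuous).snd).norm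
          have hcont2 : Continuous fun z : ℂ => ‖(ω z).1‖ :=
            ((hωdiff.continuous).fst).norm
          exact isOpen_lt hcont1 hcont2
        have h0W : (0:ℂ) ∈ {z : ℂ | ‖(ω z).2‖ < ‖(ω z).1‖} := by
          simp only [mem_setOf_eq, hω, zero_smul, add_zero]
          rw [ha1]
          exact ha2
        refine Filter.eventuallyEq_of_mem ((hΩo.inter hWo).mem_nhds ⟨h0Ω, h0W⟩) ?_
        rintro z ⟨hz1, hz2⟩
        have := hR1 (ω z) (hωL z) hz1 hz2
        simp only [hg, Pi.zero_apply]
        rw [this, sub_self]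
      have han : AnalyticOnNhd ℂ g Ω := hgd.analyticOnNhd hΩo
      have heq := han.eqOn_zero_of_preconnected_of_eventuallyEq_zero
        hΩc.isPreconnected h0Ω hgz h1Ω
      have hω1 : ω 1 = x := hline1
      rw [hg] at heq
      simp only [hω1, Pi.zero_apply] at heq
      exact sub_eq_zero.1 heq
    -- second coordinate
    have hc2 : ∀ x ∈ (L : Set (ℂ × E)), ‖x‖ < 1 → (α x).2 = x.2 := by
      intro x hxL hx
      set v : ℂ × E := x - b with hvdef
      set ω : ℂ → ℂ × E := fun z => b + z • v with hω
      have hωL : ∀ z : ℂ, ω z ∈ L := fun z =>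
        L.add_mem hbL (L.smul_mem _ (L.sub_mem hxL hbL))
      set Ω : Set ℂ := {z : ℂ | ‖b + z • v‖ < 1} with hΩ
      have hΩo : IsOpen Ω := by
        have hcont : Continuous fun z : ℂ => ‖b + z • v‖ :=
          (continuous_const.add (continuous_id.smul continuous_const)).norm
        exact isOpen_lt hcont continuous_const
      have hΩc : Convex ℝ Ω := line_convex b v
      have h0Ω : (0:ℂ) ∈ Ω := by
        simp only [hΩ, mem_setOf_eq, zero_smul, add_zero]
        exact hbnorm
      have hline1 : b + (1:ℂ) • v = x := by rw [one_smul, hvdef]; abel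
      have h1Ω : (1:ℂ) ∈ Ω := by
        simp only [hΩ, mem_setOf_eq, hline1]
        exact hx
      set g : ℂ → E := fun z => (α (ω z)).2 - (ω z).2 with hg
      have hωdiff : Differentiable ℂ ω :=
        (differentiable_const _).add (differentiable_id.smul_const v)
      have hωmaps : ∀ z ∈ Ω, ω z ∈ ball (0 : ℂ × E) 1 := by
        intro z hz
        rw [mem_ball_zero_iff]
        exact hz
      have hgd : DifferentiableOn ℂ g Ω := by
        apply DifferentiableOn.sub
        · exact ((hαball.comp hωdiff.differentiableOn hωmaps).snd)
        · exact (hωdiff.differentiableOn.snd)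
      have hgz : g =ᶠ[nhds (0:ℂ)] 0 := by
        have hWo : IsOpen {z : ℂ | ‖(ω z).1‖ < ‖(ω z).2‖} := by
          have hcont1 : Continuous fun z : ℂ => ‖(ω z).1‖ :=
            ((hωdiff.continuous).fst).norm
          have hcont2 : Continuous fun z : ℂ => ‖(ω z).2‖ :=
            ((hωdiff.continuous).snd).norm
          exact isOpen_lt hcont1 hcont2
        have h0W : (0:ℂ) ∈ {z : ℂ | ‖(ω z).1‖ < ‖(ω z).2‖} := by
          simp only [mem_setOf_eq, hω, zero_smul, add_zero]
          rw [hb2]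
          exact hb1
        refine Filter.eventuallyEq_of_mem ((hΩo.inter hWo).mem_nhds ⟨h0Ω, h0W⟩) ?_
        rintro z ⟨hz1, hz2⟩
        have := hR2 (ω z) (hωL z) hz1 hz2
        simp only [hg, Pi.zero_apply]
        rw [this, sub_self]
      have han : AnalyticOnNhd ℂ g Ω := hgd.analyticOnNhd hΩo
      have heq := han.eqOn_zero_of_preconnected_of_eventuallyEq_zero
        hΩc.isPreconnected h0Ω hgz h1Ω
      have hω1 : ω 1 = x := hline1
      rw [hg] at heq
      simp only [hω1, Pi.zero_apply] at heq
      exact sub_eq_zero.1 heq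
    intro x hxL hx
    exact Prod.ext (hc1 x hxL hx) (hc2 x hxL hx)
  -- dimension at least 2
  have hdim : 2 ≤ Module.finrank ℂ L := by
    have hq0 : q ≠ 0 := by
      intro h
      rw [h] at hq2
      simpa using hq2
    have hli : LinearIndependent ℂ ![p, q] := by
      rw [linearIndependent_fin2]
      constructor
      · simpa using hq0
      · intro s hs
        simp only [Matrix.cons_val_one, Matrix.head_cons, Matrix.cons_val_zero] at hs
        -- s • q = p
        have h1 : ‖s‖ * ‖q.1‖ = 1 := by
          have : (s • q).1 = s * q.1 := rfl
          rw [← hp1, ← hs, this, norm_mul]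
        have h2 : ‖s‖ = ‖p.2‖ := by
          have : (s • q).2 = s • q.2 := rfl
          rw [← hs, this, norm_smul, hq2, mul_one]
        have hs0 : 0 < ‖s‖ := by
          rcases (norm_nonneg s).lt_or_eq with h | h
          · exact h
          · rw [← h] at h1; simp at h1
        nlinarith [hq1, hp2]
    have h1 : Module.finrank ℂ (Submodule.span ℂ (Set.range ![p, q])) = 2 := by
      rw [finrank_span_eq_card hli]
      simp
    have h2 : Submodule.span ℂ (Set.range ![p, q]) ≤ L := by
      rw [Submodule.span_le]
      rintro y ⟨i, rfl⟩
      fin_cases i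
      · exact hpL
      · exact hqL
    calc 2 = Module.finrank ℂ (Submodule.span ℂ (Set.range ![p, q])) := h1.symm
      _ ≤ Module.finrank ℂ L := Submodule.finrank_mono h2
  -- Step B/C : the image is L ∩ G
  have himg : ∀ x ∈ ball (0 : ℂ × E) 1, α x ∈ L := by
    set Θ : (ℂ × E) → (ℂ × E) := fun x => α x - P (α x) with hΘ
    have hΘdiff : DifferentiableOn ℂ Θ (ball (0:ℂ×E) 1) :=
      hαball.sub (P.differentiable.comp_differentiableOn hαball)
    have hΘ0 : Θ 0 = 0 := by simp [hΘ, h0]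
    have hΘD : HasFDerivAt Θ (0 : (ℂ×E) →L[ℂ] (ℂ×E)) 0 := by
      have h1 : HasFDerivAt (fun y : ℂ×E => P y) P (α 0) := P.hasFDerivAt
      have h2 : HasFDerivAt (fun x => P (α x)) (P.comp P) 0 := h1.comp 0 hPα
      have h3 : HasFDerivAt Θ (P - P.comp P) 0 := hPα.sub h2
      have h4 : P - P.comp P = 0 := ContinuousLinearMap.ext fun v => by
        simp [ContinuousLinearMap.sub_apply, ContinuousLinearMap.comp_apply, hPP v]
      rwa [h4] at h3
    set M₀ : ℝ := 1 + ‖P‖ with hM₀def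
    have hM₀pos : 0 < M₀ := by positivity
    have hΘb : ∀ x ∈ ball (0:ℂ×E) 1, ‖Θ x‖ ≤ M₀ := by
      intro x hx
      have h1 : ‖α x‖ < 1 := hmapsball x hx
      have h2 : ‖P (α x)‖ ≤ ‖P‖ * ‖α x‖ := P.le_opNorm (α x)
      have h3 : ‖P‖ * ‖α x‖ ≤ ‖P‖ * 1 := mul_le_mul_of_nonneg_left h1.le (norm_nonneg P)
      calc ‖Θ x‖ ≤ ‖α x‖ + ‖P (α x)‖ := norm_sub_le _ _
        _ ≤ 1 + ‖P‖ := by rw [mul_one] at h3; linarith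
    have hquad : ∀ x ∈ ball (0:ℂ×E) 1, ‖Θ x‖ ≤ M₀ * (‖x‖ * ‖x‖) := by
      intro x hx
      rcases eq_or_ne x 0 with rfl | hx0
      · simp [hΘ0]
      · have hu : 0 < ‖x‖ := norm_pos_iff.2 hx0
        set c : ℂ := ((‖x‖ : ℝ) : ℂ) with hc
        have hcnorm : ‖c‖ = ‖x‖ := by
          rw [hc, Complex.norm_real, Real.norm_eq_abs, abs_of_pos hu]
        have hc0 : c ≠ 0 := by simp [hc, hu.ne']
        set v : ℂ×E := c⁻¹ • x with hv
        have hvnorm : ‖v‖ = 1 := by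
          rw [hv, norm_smul, norm_inv, hcnorm, inv_mul_cancel₀ hu.ne']
        have hd := slice_diff hΘdiff hvnorm.le
        have hb' : ∀ z ∈ ball (0:ℂ) 1, ‖Θ (z • v)‖ ≤ M₀ :=
          fun z hz => hΘb _ (smul_mem_unit_ball hvnorm.le hz)
        have hf0 : Θ ((0:ℂ) • v) = 0 := by rw [zero_smul, hΘ0]
        have hder : deriv (fun z : ℂ => Θ (z • v)) 0 = 0 := by
          have hh := slice_deriv hΘD v
          rw [hh.deriv]
          simp
        have hcball : c ∈ ball (0:ℂ) 1 := by
          rw [mem_ball_zero_iff, hcnorm]; exact mem_ball_zero_iff.1 hx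
        have key := schwarz_quadratic hd hb' (by simpa using hf0) hder hcball
        calc ‖Θ x‖ = ‖Θ (c • v)‖ := by rw [hv, smul_inv_smul₀ hc0]
          _ ≤ M₀ * (‖c‖ * ‖c‖) := key
          _ = M₀ * (‖x‖ * ‖x‖) := by rw [hcnorm]
    set ρ : ℝ := min 4⁻¹ (18 * M₀)⁻¹ with hρdef
    have hρpos : 0 < ρ := lt_min (by norm_num) (by positivity)
    have hρ14 : ρ ≤ 4⁻¹ := min_le_left _ _
    have hρM : 9 * M₀ * ρ ≤ 2⁻¹ := by
      have h1 : ρ ≤ (18*M₀)⁻¹ := min_le_right _ _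
      calc 9*M₀*ρ ≤ 9*M₀*(18*M₀)⁻¹ :=
            mul_le_mul_of_nonneg_left h1 (by positivity)
        _ = 2⁻¹ := by field_simp; ring
    have hρ1 : ρ < 1 := lt_of_le_of_lt hρ14 (by norm_num)
    have hfd : ∀ y ∈ ball (0:ℂ×E) ρ, ‖fderiv ℂ Θ y‖ ≤ 2⁻¹ := by
      intro y hy
      rw [mem_ball_zero_iff] at hy
      have hyb : y ∈ ball (0:ℂ×E) 1 := mem_ball_zero_iff.2 (lt_trans hy hρ1)
      have hydiff : DifferentiableAt ℂ Θ y :=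
        hΘdiff.differentiableAt (isOpen_ball.mem_nhds hyb)
      apply ContinuousLinearMap.opNorm_le_bound _ (by norm_num)
      intro w
      rcases eq_or_ne w 0 with rfl | hw0
      · simp
      have hwn : 0 < ‖w‖ := norm_pos_iff.2 hw0
      set cw : ℂ := ((‖w‖:ℝ):ℂ) with hcw
      have hcwnorm : ‖cw‖ = ‖w‖ := by
        rw [hcw, Complex.norm_real, Real.norm_eq_abs, abs_of_pos hwn]
      have hcw0 : cw ≠ 0 := by simp [hcw, hwn.ne']
      set u : ℂ×E := cw⁻¹ • w with hu
      have hun : ‖u‖ = 1 := by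
        rw [hu, norm_smul, norm_inv, hcwnorm, inv_mul_cancel₀ hwn.ne']
      set gsl : ℂ → ℂ×E := fun z => Θ (y + z • u) with hgsl
      have hptball : ∀ z ∈ ball (0:ℂ) ρ, y + z • u ∈ ball (0:ℂ×E) 1 := by
        intro z hz
        rw [mem_ball_zero_iff] at hz ⊢
        have h1 : ‖y + z • u‖ ≤ ‖y‖ + ‖z‖ * ‖u‖ := by
          calc ‖y + z • u‖ ≤ ‖y‖ + ‖z • u‖ := norm_add_le _ _
            _ = ‖y‖ + ‖z‖ * ‖u‖ := by rw [norm_smul]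
        rw [hun, mul_one] at h1
        have h2 : (4:ℝ)⁻¹ < 1 := by norm_num
        linarith [hρ14]
      have hpt2ρ : ∀ z ∈ ball (0:ℂ) ρ, ‖y + z • u‖ ≤ 2 * ρ := by
        intro z hz
        rw [mem_ball_zero_iff] at hz
        have h1 : ‖y + z • u‖ ≤ ‖y‖ + ‖z‖ * ‖u‖ := by
          calc ‖y + z • u‖ ≤ ‖y‖ + ‖z • u‖ := norm_add_le _ _
            _ = ‖y‖ + ‖z‖ * ‖u‖ := by rw [norm_smul]
        rw [hun, mul_one] at h1
        linarith
      have hgsld : DifferentiableOn ℂ gsl (ball (0:ℂ) ρ) := by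
        apply hΘdiff.comp
          ((differentiable_const y).add (differentiable_id.smul_const u)).differentiableOn
        intro z hz
        exact hptball z hz
      have hmapsto : MapsTo gsl (ball (0:ℂ) ρ) (ball (gsl 0) (9*M₀*(ρ*ρ))) := by
        intro z hz
        rw [mem_ball, dist_eq_norm]
        have hz0 : (0:ℂ) ∈ ball (0:ℂ) ρ := mem_ball_self hρpos
        have h1 : ‖gsl z‖ ≤ M₀ * (‖y + z • u‖ * ‖y + z • u‖) := hquad _ (hptball z hz)
        have h2 : ‖gsl 0‖ ≤ M₀ * (‖y + (0:ℂ) • u‖ * ‖y + (0:ℂ) • u‖) :=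
          hquad _ (hptball 0 hz0)
        have h3 : ‖y + z • u‖ ≤ 2 * ρ := hpt2ρ z hz
        have h4 : ‖y + (0:ℂ) • u‖ ≤ ρ := by
          rw [zero_smul, add_zero]; exact hy.le
        have h5 : ‖gsl z‖ ≤ M₀ * (4 * (ρ * ρ)) := by
          have := mul_self_le_mul_self (norm_nonneg _) h3
          calc ‖gsl z‖ ≤ M₀ * (‖y + z • u‖ * ‖y + z • u‖) := h1
            _ ≤ M₀ * (4 * (ρ * ρ)) := by nlinarith
        have h6 : ‖gsl 0‖ ≤ M₀ * (ρ * ρ) := by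
          have := mul_self_le_mul_self (norm_nonneg _) h4
          calc ‖gsl 0‖ ≤ M₀ * (‖y + (0:ℂ) • u‖ * ‖y + (0:ℂ) • u‖) := h2
            _ ≤ M₀ * (ρ * ρ) := by nlinarith
        have h7 : 0 < M₀ * (ρ * ρ) := by positivity
        calc ‖gsl z - gsl 0‖ ≤ ‖gsl z‖ + ‖gsl 0‖ := norm_sub_le _ _
          _ ≤ M₀ * (4 * (ρ*ρ)) + M₀ * (ρ*ρ) := by linarith
          _ < 9*M₀*(ρ*ρ) := by nlinarith
      have hkey := norm_deriv_le_div_of_mapsTo_ball hgsld (hmapsto.mono_right ball_subset_closedBall) hρpos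
      have hderiv_eq : deriv gsl 0 = fderiv ℂ Θ y u := by
        have hl : HasDerivAt (fun z : ℂ => y + z • u) u 0 := by
          simpa using ((hasDerivAt_id (0:ℂ)).smul_const u).const_add y
        have hθat : HasFDerivAt Θ (fderiv ℂ Θ y) (y + (0:ℂ) • u) := by
          simpa using hydiff.hasFDerivAt
        exact (hθat.comp_hasDerivAt 0 hl).deriv
      have h8 : ‖fderiv ℂ Θ y u‖ ≤ 9*M₀*ρ := by
        rw [← hderiv_eq]
        calc ‖deriv gsl 0‖ ≤ 9*M₀*(ρ*ρ)/ρ := hkey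
          _ = 9*M₀*ρ := by field_simp
      have hw_eq : w = cw • u := (smul_inv_smul₀ hcw0 w).symm
      calc ‖fderiv ℂ Θ y w‖ = ‖fderiv ℂ Θ y (cw • u)‖ := by rw [← hw_eq]
        _ = ‖cw‖ * ‖fderiv ℂ Θ y u‖ := by rw [map_smul, norm_smul]
        _ ≤ ‖w‖ * (9*M₀*ρ) := by
            rw [hcwnorm]
            exact mul_le_mul_of_nonneg_left h8 (norm_nonneg w)
        _ ≤ 2⁻¹ * ‖w‖ := by
            rw [mul_comm]
            exact mul_le_mul_of_nonneg_right hρM (norm_nonneg w)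
    have hlip : ∀ y1 ∈ ball (0:ℂ×E) ρ, ∀ y2 ∈ ball (0:ℂ×E) ρ,
        ‖Θ y1 - Θ y2‖ ≤ 2⁻¹ * ‖y1 - y2‖ := by
      intro y1 hy1 y2 hy2
      exact (convex_ball (0:ℂ×E) ρ).norm_image_sub_le_of_norm_fderiv_le
        (fun y hy => hΘdiff.differentiableAt (isOpen_ball.mem_nhds
          (mem_ball_zero_iff.2 (lt_trans (mem_ball_zero_iff.1 hy) hρ1))))
        (fun y hy => hfd y hy) hy2 hy1
    set ρ2 : ℝ := ρ / (1 + ‖P‖) with hρ2def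
    have hρ2pos : 0 < ρ2 := by positivity
    have hρ2ρ : ρ2 ≤ ρ := by
      rw [hρ2def]
      apply div_le_self hρpos.le
      linarith [norm_nonneg P]
    have hfixL : ∀ y : ℂ×E, ‖y‖ < ρ2 → α y = y → y ∈ (L : Set (ℂ×E)) := by
      intro y hy hαy
      have hyρ : ‖y‖ < ρ := lt_of_lt_of_le hy hρ2ρ
      have hPy : ‖P y‖ < ρ := by
        calc ‖P y‖ ≤ ‖P‖ * ‖y‖ := P.le_opNorm y
          _ ≤ (1 + ‖P‖) * ‖y‖ :=
              mul_le_mul_of_nonneg_right (by linarith) (norm_nonneg y)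
          _ < (1 + ‖P‖) * ρ2 := by
              apply mul_lt_mul_of_pos_left hy
              positivity
          _ = ρ := by
              have hP1 : (1 + ‖P‖) ≠ 0 := by positivity
              rw [hρ2def, mul_comm, div_mul_cancel₀ _ hP1]
      have hPyL : P y ∈ L := hmemL y
      have hαPy : α (P y) = P y := hA _ hPyL (lt_trans hPy hρ1)
      have hΘy : Θ y = y - P y := by
        show α y - P (α y) = y - P y
        rw [hαy]
      have hΘPy : Θ (P y) = 0 := by
        show α (P y) - P (α (P y)) = 0
        rw [hαPy, hPP y, sub_self]
      have h3 : ‖y - P y‖ ≤ 2⁻¹ * ‖y - P y‖ := by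
        have hl := hlip y (mem_ball_zero_iff.2 hyρ) (P y) (mem_ball_zero_iff.2 hPy)
        rw [hΘy, hΘPy, sub_zero] at hl
        exact hl
      have h4 : ‖y - P y‖ = 0 := by linarith [norm_nonneg (y - P y)]
      have h5 : y = P y := by
        have := norm_eq_zero.1 h4
        rwa [sub_eq_zero] at this
      rw [h5]
      exact hPyL
    have hcont : ContinuousAt α 0 := hdiff0.continuousAt
    obtain ⟨δ, hδpos, hδ⟩ := Metric.continuousAt_iff.1 hcont ρ2 hρ2pos
    set δ' : ℝ := min δ 1 with hδ'def
    have hδ'pos : 0 < δ' := lt_min hδpos one_pos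
    have hnear : ∀ y : ℂ×E, ‖y‖ < δ' → Θ y = 0 := by
      intro y hyδ
      have hy1 : y ∈ ball (0:ℂ×E) 1 :=
        mem_ball_zero_iff.2 (lt_of_lt_of_le hyδ (min_le_right _ _))
      have hαα : α (α y) = α y := hretr y (by rwa [hGball])
      have hαsmall : ‖α y‖ < ρ2 := by
        have hdy : dist y 0 < δ := by
          rw [dist_zero_right]
          exact lt_of_lt_of_le hyδ (min_le_left _ _)
        have := hδ hdy
        rwa [h0, dist_zero_right] at this
      have hαyL : α y ∈ L := hfixL (α y) hαsmall hαα
      show α y - P (α y) = 0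
      rw [hPL _ hαyL, sub_self]
    intro x hx
    rcases eq_or_ne x 0 with rfl | hx0
    · rw [h0]; exact L.zero_mem
    have hu : 0 < ‖x‖ := norm_pos_iff.2 hx0
    have hx1 : ‖x‖ < 1 := mem_ball_zero_iff.1 hx
    set g : ℂ → ℂ×E := fun z => Θ (z • x) with hg
    set Ω : Set ℂ := ball (0:ℂ) ‖x‖⁻¹ with hΩ
    have h1Ω : (1:ℂ) ∈ Ω := by
      rw [hΩ, mem_ball_zero_iff, norm_one]
      exact (one_lt_inv₀ hu).2 hx1
    have h0Ω : (0:ℂ) ∈ Ω := by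
      rw [hΩ]
      apply mem_ball_self
      positivity
    have hgd : DifferentiableOn ℂ g Ω := by
      apply hΘdiff.comp (differentiable_id.smul_const x).differentiableOn
      intro z hz
      rw [hΩ, mem_ball_zero_iff] at hz
      rw [mem_ball_zero_iff, norm_smul]
      calc ‖z‖*‖x‖ < ‖x‖⁻¹*‖x‖ := mul_lt_mul_of_pos_right hz hu
        _ = 1 := inv_mul_cancel₀ hu.ne'
    have hgz : g =ᶠ[nhds (0:ℂ)] 0 := by
      refine Filter.eventuallyEq_of_mem
        (Metric.ball_mem_nhds (0:ℂ) (show (0:ℝ) < δ'/‖x‖ by positivity)) ?_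
      intro z hz
      rw [mem_ball_zero_iff] at hz
      have hzx : ‖z • x‖ < δ' := by
        rw [norm_smul]
        calc ‖z‖*‖x‖ < (δ'/‖x‖)*‖x‖ := mul_lt_mul_of_pos_right hz hu
          _ = δ' := div_mul_cancel₀ _ hu.ne'
      exact hnear _ hzx
    have han : AnalyticOnNhd ℂ g Ω := hgd.analyticOnNhd isOpen_ball
    have heq := han.eqOn_zero_of_preconnected_of_eventuallyEq_zero
      (convex_ball _ _).isPreconnected h0Ω hgz h1Ω
    have hfin : Θ x = 0 := by
      have h9 : Θ ((1:ℂ) • x) = 0 := heq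
      rwa [one_smul] at h9
    have hPαx : α x = P (α x) := by
      have h10 : α x - P (α x) = 0 := hfin
      rwa [sub_eq_zero] at h10
    rw [hPαx]
    exact hmemL _
  refine ⟨hdim, ?_, ?_⟩
  · rintro x ⟨hxL, hxG⟩
    exact hA x hxL (by rwa [hGball, mem_ball_zero_iff] at hxG)
  · apply Set.Subset.antisymm
    · rintro y ⟨x, hx, rfl⟩
      exact ⟨himg x (by rwa [hGball] at hx), hmaps hx⟩
    · rintro y ⟨hyL, hyG⟩
      exact ⟨y, hyG, hA y hyL (by rwa [hGball, mem_ball_zero_iff] at hyG)⟩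
end
end

section
/- Let n ≥ 1, G = Δ × 𝔹ⁿ, and let α : G → G be a holomorphic map with α(0) = 0. Suppose w₀ ∈ ℂ with |w₀| = 1 and z⁰ ∈ ℂⁿ with ‖z⁰‖ = 1 are such that the derivative satisfies Dα(0)(w₀, z⁰) = (w₀, z⁰). Then α(w₀t, z⁰₁t, …, z⁰ₙt) = (w₀t, z⁰₁t, …, z⁰ₙt) for every t ∈ Δ; that is, α is the identity on the analytic disc t ↦ (w₀t, z⁰t). -/
open Metric Set

noncomputable section

/-- If `f` is holomorphic on the unit disc and `‖f t‖ ^ 2 ≤ 1 - ‖t‖ ^ 2`, then `f ≡ 0`. -/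
lemma vanish_of_sq_le {F : Type*} [NormedAddCommGroup F] [NormedSpace ℂ F]
    (f : ℂ → F) (hf : DifferentiableOn ℂ f (ball (0:ℂ) 1))
    (hb : ∀ t ∈ ball (0:ℂ) 1, ‖f t‖ ^ 2 ≤ 1 - ‖t‖ ^ 2) :
    ∀ t ∈ ball (0:ℂ) 1, f t = 0 := by
  intro t ht
  rw [mem_ball_zero_iff] at ht
  have key : ∀ r : ℝ, ‖t‖ < r → r < 1 → ‖f t‖ ^ 2 ≤ 1 - r ^ 2 := by
    intro r hr hr1
    have hr0 : 0 < r := lt_of_le_of_lt (norm_nonneg t) hr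
    have hsub : closedBall (0:ℂ) r ⊆ ball (0:ℂ) 1 := closedBall_subset_ball hr1
    have hd : DiffContOnCl ℂ f (ball (0:ℂ) r) := by
      refine DifferentiableOn.diffContOnCl ?_
      rw [closure_ball (0:ℂ) hr0.ne']
      exact hf.mono hsub
    have hC : ∀ z ∈ frontier (ball (0:ℂ) r), ‖f z‖ ≤ Real.sqrt (1 - r ^ 2) := by
      intro z hz
      rw [frontier_ball (0:ℂ) hr0.ne', mem_sphere_zero_iff_norm] at hz
      have hz1 : z ∈ ball (0:ℂ) 1 := by rw [mem_ball_zero_iff, hz]; exact hr1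
      have := hb z hz1
      rw [hz] at this
      calc ‖f z‖ = Real.sqrt (‖f z‖ ^ 2) := by rw [Real.sqrt_sq (norm_nonneg _)]
        _ ≤ Real.sqrt (1 - r ^ 2) := Real.sqrt_le_sqrt this
    have hle : ‖f t‖ ≤ Real.sqrt (1 - r ^ 2) := by
      refine Complex.norm_le_of_forall_mem_frontier_norm_le isBounded_ball hd hC ?_
      have : t ∈ ball (0:ℂ) r := by rwa [mem_ball_zero_iff]
      exact subset_closure this
    have h1r : (0:ℝ) ≤ 1 - r ^ 2 := by nlinarith
    calc ‖f t‖ ^ 2 ≤ Real.sqrt (1 - r ^ 2) ^ 2 :=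
          pow_le_pow_left₀ (norm_nonneg _) hle 2
      _ = 1 - r ^ 2 := Real.sq_sqrt h1r
  have h2 : ‖f t‖ ^ 2 ≤ 0 := by
    by_contra h
    push_neg at h
    set ε := ‖f t‖ ^ 2 with hε
    have hε1 : ε ≤ 1 - ‖t‖ ^ 2 := hb t (by rwa [mem_ball_zero_iff])
    have hts : ‖t‖ ≤ Real.sqrt (1 - ε) := by
      rw [← Real.sqrt_sq (norm_nonneg t)]
      exact Real.sqrt_le_sqrt (by nlinarith)
    set r := (Real.sqrt (1 - ε) + 1) / 2 with hrdef
    have hs0 : 0 ≤ Real.sqrt (1 - ε) := Real.sqrt_nonneg _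
    have hs1 : Real.sqrt (1 - ε) < 1 := by
      nlinarith [Real.sq_sqrt (show (0:ℝ) ≤ 1 - ε by nlinarith), Real.sqrt_nonneg (1 - ε)]
    have hr1 : r < 1 := by rw [hrdef]; linarith
    have hrt : ‖t‖ < r := by rw [hrdef]; linarith
    have hrs : Real.sqrt (1 - ε) < r := by rw [hrdef]; linarith
    have := key r hrt hr1
    have hsq : 1 - ε < r ^ 2 := by
      have : Real.sqrt (1 - ε) ^ 2 < r ^ 2 := by
        apply pow_lt_pow_left₀ hrs hs0
        norm_num
      rwa [Real.sq_sqrt (by nlinarith)] at this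
    linarith
  have : ‖f t‖ = 0 := by nlinarith [sq_nonneg ‖f t‖, norm_nonneg (f t)]
  exact norm_eq_zero.mp this

set_option maxHeartbeats 1000000 in
theorem stmt_5 (n : ℕ) (hn : 1 ≤ n)
    (α : ℂ × EuclideanSpace ℂ (Fin n) → ℂ × EuclideanSpace ℂ (Fin n))
    (hα : DifferentiableOn ℂ α (diskBall n))
    (hmaps : MapsTo α (diskBall n) (diskBall n))
    (h0 : α 0 = 0)
    (w0 : ℂ) (hw0 : ‖w0‖ = 1)
    (z0 : EuclideanSpace ℂ (Fin n)) (hz0 : ‖z0‖ = 1)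
    (hfix : fderiv ℂ α 0 (w0, z0) = (w0, z0)) :
    ∀ t ∈ ball (0 : ℂ) 1, α (w0 * t, t • z0) = (w0 * t, t • z0) := by
  classical
  have hopen : IsOpen (diskBall n) := isOpen_ball.prod isOpen_ball
  have h0mem : (0 : ℂ × EuclideanSpace ℂ (Fin n)) ∈ diskBall n := by
    constructor <;> simp
  -- the analytic disc
  set φ : ℂ → ℂ × EuclideanSpace ℂ (Fin n) := fun t => (w0 * t, t • z0) with hφdef
  have hφ0 : φ 0 = 0 := by simp [hφdef]
  have hφmaps : MapsTo φ (ball (0:ℂ) 1) (diskBall n) := by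
    intro t ht
    rw [mem_ball_zero_iff] at ht
    constructor
    · rw [mem_ball_zero_iff, norm_mul, hw0, one_mul]; exact ht
    · rw [mem_ball_zero_iff, norm_smul, hz0, mul_one]; exact ht
  have hφd : ∀ t : ℂ, HasDerivAt φ (w0, z0) t := by
    intro t
    have h1 : HasDerivAt (fun t : ℂ => w0 * t) w0 t := by
      simpa using (hasDerivAt_id t).const_mul w0
    have h2 : HasDerivAt (fun t : ℂ => t • z0) z0 t := by
      simpa using (hasDerivAt_id t).smul_const z0
    exact h1.prodMk h2
  have hφdiff : Differentiable ℂ φ := fun t => (hφd t).differentiableAt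
  set β : ℂ → ℂ × EuclideanSpace ℂ (Fin n) := fun t => α (φ t) with hβdef
  have hβdiff : DifferentiableOn ℂ β (ball (0:ℂ) 1) := by
    have := hα.comp hφdiff.differentiableOn hφmaps
    exact this
  have hβ0 : β 0 = 0 := by rw [hβdef]; simp only [hφ0]; exact h0
  have hβmem : ∀ t ∈ ball (0:ℂ) 1, β t ∈ diskBall n := fun t ht => hmaps (hφmaps ht)
  have hβd0 : HasDerivAt β (w0, z0) 0 := by
    have hαd : DifferentiableAt ℂ α 0 := hα.differentiableAt (hopen.mem_nhds h0mem)
    have hF : HasFDerivAt α (fderiv ℂ α 0) (φ 0) := by rw [hφ0]; exact hαd.hasFDerivAt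
    have := hF.comp_hasDerivAt 0 (hφd 0)
    rw [hfix] at this
    exact this
  -- component bounds
  have hb1 : ∀ t ∈ ball (0:ℂ) 1, ‖(β t).1‖ < 1 := by
    intro t ht; exact mem_ball_zero_iff.mp (hβmem t ht).1
  have hb2 : ∀ t ∈ ball (0:ℂ) 1, ‖(β t).2‖ < 1 := by
    intro t ht; exact mem_ball_zero_iff.mp (hβmem t ht).2
  have hconj : (starRingEnd ℂ) w0 * w0 = 1 := by
    rw [RCLike.conj_mul, hw0]; norm_num
  have hww : w0 * (starRingEnd ℂ) w0 = 1 := by rw [mul_comm]; exact hconj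
  have hzz : (inner ℂ z0 z0 : ℂ) = 1 := by
    rw [inner_self_eq_norm_sq_to_K, hz0]; norm_num
  -- the scalar functions
  set A : ℂ → ℂ := fun t => (starRingEnd ℂ) w0 * (β t).1 with hAdef
  set C : ℂ → ℂ := fun t => (inner ℂ z0 (β t).2 : ℂ) with hCdef
  have hA_le : ∀ t ∈ ball (0:ℂ) 1, ‖A t‖ < 1 := by
    intro t ht
    rw [hAdef]
    simp only [norm_mul, RCLike.norm_conj, hw0, one_mul]
    exact hb1 t ht
  have hC_le : ∀ t ∈ ball (0:ℂ) 1, ‖C t‖ < 1 := by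
    intro t ht
    calc ‖C t‖ ≤ ‖z0‖ * ‖(β t).2‖ := norm_inner_le_norm z0 _
      _ = ‖(β t).2‖ := by rw [hz0, one_mul]
      _ < 1 := hb2 t ht
  have hAdiff : DifferentiableOn ℂ A (ball (0:ℂ) 1) :=
    (differentiable_fst.comp_differentiableOn hβdiff).const_mul _
  have hCdiff : DifferentiableOn ℂ C (ball (0:ℂ) 1) :=
    (innerSL ℂ z0).differentiable.comp_differentiableOn
      (differentiable_snd.comp_differentiableOn hβdiff)
  have hA0 : A 0 = 0 := by rw [hAdef]; simp [hβ0]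
  have hC0 : C 0 = 0 := by rw [hCdef]; simp [hβ0]
  have hAd : HasDerivAt A 1 0 := by
    have h1 : HasDerivAt (fun t => (β t).1) w0 0 :=
      (ContinuousLinearMap.fst ℂ ℂ (EuclideanSpace ℂ (Fin n))).hasFDerivAt.comp_hasDerivAt 0 hβd0
    have := h1.const_mul ((starRingEnd ℂ) w0)
    rwa [hconj] at this
  have hCd : HasDerivAt C 1 0 := by
    have h2 : HasDerivAt (fun t => (β t).2) z0 0 :=
      (ContinuousLinearMap.snd ℂ ℂ (EuclideanSpace ℂ (Fin n))).hasFDerivAt.comp_hasDerivAt 0 hβd0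
    have := (innerSL ℂ z0).hasFDerivAt.comp_hasDerivAt 0 h2
    simp only [innerSL_apply_apply] at this
    rwa [hzz] at this
  -- the Schwarz function
  set g : ℂ → ℂ := fun t => (A t + C t) / 2 with hgdef
  have hg0 : g 0 = 0 := by rw [hgdef]; simp [hA0, hC0]
  have hgdiff : DifferentiableOn ℂ g (ball (0:ℂ) 1) := (hAdiff.add hCdiff).div_const 2
  have hgmaps : MapsTo g (ball (0:ℂ) 1) (ball (g 0) 1) := by
    intro t ht
    rw [hg0, mem_ball_zero_iff, hgdef]
    have h1 := hA_le t ht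
    have h2 := hC_le t ht
    calc ‖(A t + C t) / 2‖ = ‖A t + C t‖ / 2 := by
          rw [norm_div]; norm_num
      _ ≤ (‖A t‖ + ‖C t‖) / 2 := by
          have := norm_add_le (A t) (C t); linarith
      _ < 1 := by linarith
  have hgd : HasDerivAt g 1 0 := by
    have := (hAd.add hCd).div_const 2
    norm_num at this
    exact this
  have hdslope : ‖dslope g 0 0‖ = 1 / 1 := by
    rw [dslope_same, hgd.deriv]
    norm_num
  have heq := Complex.affine_of_mapsTo_ball_of_exists_norm_dslope_eq_div hgdiff (hgmaps.mono_right ball_subset_closedBall)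
    (mem_ball_self one_pos) hdslope
  have hgid : ∀ t ∈ ball (0:ℂ) 1, A t + C t = 2 * t := by
    intro t ht
    have := heq ht
    simp only [hg0, dslope_same, hgd.deriv, zero_add, sub_zero, smul_eq_mul, mul_one] at this
    rw [hgdef] at this
    simp only at this
    linear_combination 2 * this
  -- A(t) = t and C(t) = t
  have haux : ∀ t ∈ ball (0:ℂ) 1, A t - t = 0 := by
    apply vanish_of_sq_le
    · exact hAdiff.sub differentiableOn_id
    · intro t ht
      have hpar := parallelogram_law_with_norm ℂ t (A t - t)
      have e1 : t + (A t - t) = A t := by ring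
      have e2 : t - (A t - t) = C t := by
        have := hgid t ht; linear_combination -this
      rw [e1, e2] at hpar
      have h1 := hA_le t ht
      have h2 := hC_le t ht
      nlinarith [norm_nonneg (A t), norm_nonneg (C t), norm_nonneg t, norm_nonneg (A t - t)]
  have hAt : ∀ t ∈ ball (0:ℂ) 1, A t = t := by
    intro t ht; have := haux t ht; linear_combination this
  have hCt : ∀ t ∈ ball (0:ℂ) 1, C t = t := by
    intro t ht; have := hgid t ht; have h2 := hAt t ht; linear_combination this - h2
  -- second component
  have hr : ∀ t ∈ ball (0:ℂ) 1, (β t).2 - t • z0 = 0 := by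
    apply vanish_of_sq_le
    · exact (differentiable_snd.comp_differentiableOn hβdiff).sub
        (hφdiff.snd.differentiableOn)
    · intro t ht
      have hio : (inner ℂ z0 ((β t).2 - t • z0) : ℂ) = 0 := by
        rw [inner_sub_right, inner_smul_right, hzz]
        have := hCt t ht
        rw [hCdef] at this
        simp only at this
        rw [this]; ring
      have hdecomp : (β t).2 = t • z0 + ((β t).2 - t • z0) := by abel
      have hperp : (inner ℂ (t • z0) ((β t).2 - t • z0) : ℂ) = 0 := by
        rw [inner_smul_left, hio, mul_zero]
      have hnorm : ‖(β t).2‖ ^ 2 = ‖t • z0‖ ^ 2 + ‖(β t).2 - t • z0‖ ^ 2 := by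
        rw [hdecomp]
        rw [@norm_add_sq ℂ _ _ _ _ (t • z0) ((β t).2 - t • z0), hperp]
        simp
      have hts : ‖t • z0‖ = ‖t‖ := by rw [norm_smul, hz0, mul_one]
      have h2 := hb2 t ht
      rw [hts] at hnorm
      nlinarith [norm_nonneg ((β t).2)]
  -- finish
  intro t ht
  have h1 : (β t).1 = w0 * t := by
    have := hAt t ht
    rw [hAdef] at this
    simp only at this
    calc (β t).1 = (w0 * (starRingEnd ℂ) w0) * (β t).1 := by rw [hww, one_mul]
      _ = w0 * ((starRingEnd ℂ) w0 * (β t).1) := by ring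
      _ = w0 * t := by rw [this]
  have h2 : (β t).2 = t • z0 := by
    have := hr t ht
    linear_combination (norm := module) this
  have : β t = (w0 * t, t • z0) := Prod.ext h1 h2
  rw [hβdef, hφdef] at this
  exact this
end
end

section
/- Let n ≥ 1, G = Δ × 𝔹ⁿ, and let α = (α₀, α₁, …, αₙ) : G → G be a holomorphic map with α(0) = 0. Suppose w₀ ∈ ℂ with |w₀| ≤ 1 and z⁰ ∈ ℂⁿ with ‖z⁰‖ = 1 are such that the last n components of Dα(0)(w₀, z⁰) equal z⁰. Then (α₁, …, αₙ)(w₀t, z⁰₁t, …, z⁰ₙt) = (z⁰₁t, …, z⁰ₙt) for every t ∈ Δ. -/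
open Metric Set

noncomputable section

theorem stmt_6 (n : ℕ) (hn : 1 ≤ n)
    (α : ℂ × EuclideanSpace ℂ (Fin n) → ℂ × EuclideanSpace ℂ (Fin n))
    (hα : DifferentiableOn ℂ α (diskBall n))
    (hmaps : MapsTo α (diskBall n) (diskBall n))
    (h0 : α 0 = 0)
    (w0 : ℂ) (hw0 : ‖w0‖ ≤ 1)
    (z0 : EuclideanSpace ℂ (Fin n)) (hz0 : ‖z0‖ = 1)
    (hfix : (fderiv ℂ α 0 (w0, z0)).2 = z0) :
    ∀ t ∈ ball (0 : ℂ) 1, (α (w0 * t, t • z0)).2 = t • z0 := by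
  -- the disc γ : Δ → G
  set γ : ℂ → ℂ × EuclideanSpace ℂ (Fin n) := fun t => (w0 * t, t • z0) with hγ
  have hγ0 : γ 0 = 0 := by simp [hγ]
  have hγmaps : MapsTo γ (ball (0 : ℂ) 1) (diskBall n) := by
    intro t ht
    rw [mem_ball_zero_iff] at ht
    constructor
    · rw [mem_ball_zero_iff, norm_mul]
      calc ‖w0‖ * ‖t‖ ≤ 1 * ‖t‖ := by
            exact mul_le_mul_of_nonneg_right hw0 (norm_nonneg _)
        _ = ‖t‖ := one_mul _
        _ < 1 := ht
    · rw [mem_ball_zero_iff, norm_smul, hz0, mul_one]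
      exact ht
  have hγdiff : Differentiable ℂ γ := by
    apply Differentiable.prodMk
    · exact (differentiable_id.const_mul w0)
    · exact differentiable_id.smul_const z0
  have hγderiv : HasDerivAt γ (w0, z0) 0 := by
    apply HasDerivAt.prodMk
    · simpa using (hasDerivAt_id (0 : ℂ)).const_mul w0
    · simpa using (hasDerivAt_id (0 : ℂ)).smul_const z0
  -- the map F : Δ → 𝔹ⁿ
  set F : ℂ → EuclideanSpace ℂ (Fin n) := fun t => (α (γ t)).2 with hF
  have hopen : IsOpen (diskBall n) := isOpen_ball.prod isOpen_ball
  have h0mem : (0 : ℂ × EuclideanSpace ℂ (Fin n)) ∈ diskBall n := by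
    constructor <;> simpa using one_pos
  have hαat : DifferentiableAt ℂ α 0 := hα.differentiableAt (hopen.mem_nhds h0mem)
  have hFdiff : DifferentiableOn ℂ F (ball (0 : ℂ) 1) := by
    intro t ht
    have h1 : DifferentiableAt ℂ α (γ t) :=
      hα.differentiableAt (hopen.mem_nhds (hγmaps ht))
    exact ((differentiable_snd.differentiableAt.comp _ h1).comp t
      (hγdiff t)).differentiableWithinAt
  have hF0 : F 0 = 0 := by simp [hF, hγ0, h0]
  have hFmaps : MapsTo F (ball (0 : ℂ) 1) (ball (F 0) 1) := by
    intro t ht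
    rw [hF0, mem_ball_zero_iff]
    exact mem_ball_zero_iff.mp (hmaps (hγmaps ht)).2
  -- derivative of F at 0 is z0
  have hFderiv : HasDerivAt F z0 0 := by
    have hcomp : HasDerivAt (fun t => α (γ t)) (fderiv ℂ α 0 (w0, z0)) 0 := by
      have hα0 : HasFDerivAt α (fderiv ℂ α 0) (γ 0) := hγ0 ▸ hαat.hasFDerivAt
      exact hα0.comp_hasDerivAt 0 hγderiv
    have := (ContinuousLinearMap.snd ℂ ℂ (EuclideanSpace ℂ (Fin n))).hasFDerivAt.comp_hasDerivAt
      0 hcomp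
    have h2 : HasDerivAt (Prod.snd ∘ fun t => α (γ t)) z0 0 := by simpa [hfix] using this
    exact h2
  have hds : dslope F 0 0 = z0 := by
    rw [dslope_same, hFderiv.deriv]
  -- Schwarz lemma equality case
  have key := Complex.affine_of_mapsTo_ball_of_exists_norm_dslope_eq_div
    (R₁ := 1) (R₂ := 1) hFdiff (hFmaps.mono_right ball_subset_closedBall) (mem_ball_self one_pos)
    (by rw [hds, hz0]; norm_num)
  intro t ht
  have := key ht
  simp only [hds, hF0, sub_zero, zero_add] at this
  exact this
end
end
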